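/- arXiv:1706.07707 — 8 statements merged into one kernel-verified Lean document; each statement's English description precedes it below -/
import Mathlib

section
/- For every agent i ∈ {1,…,n} and every k ≥ 0, the D-DPS iterates satisfy ‖x_i^k − z̄^k‖ ≤ Γ Σ_{r=1}^{k−1} γ^{k−r} g_{r−1} + g_{k−1}, where sums over empty index ranges are zero and g_{−1} = 0. -/
open Finset Filter
open scoped RealInnerProductSpace

theorem ddps_consensus_bound
    {n p : ℕ} (hn : 1 ≤ n) (hp : 1 ≤ p)
    (f : Fin n → EuclideanSpace ℝ (Fin p) → ℝ)
    (hconv : ∀ i, ConvexOn ℝ Set.univ (f i))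
    (B : ℝ) (hB : 0 < B)
    (hsubB : ∀ (i : Fin n) (u s : EuclideanSpace ℝ (Fin p)),
      (∀ v, f i u + ⟪s, v - u⟫ ≤ f i v) → ‖s‖ ≤ B)
    (X : Set (EuclideanSpace ℝ (Fin p)))
    (hXne : X.Nonempty) (hXcl : IsClosed X) (hXcv : Convex ℝ X)
    (hX0 : (0 : EuclideanSpace ℝ (Fin p)) ∈ X)
    (P : EuclideanSpace ℝ (Fin p) → EuclideanSpace ℝ (Fin p))
    (hPmem : ∀ v, P v ∈ X)
    (hPproj : ∀ v w, w ∈ X → ‖P v - v‖ ≤ ‖w - v‖)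
    (A Bh : Matrix (Fin n) (Fin n) ℝ)
    (hAnn : ∀ i j, 0 ≤ A i j) (hArow : ∀ i, ∑ j, A i j = 1)
    (hBnn : ∀ i j, 0 ≤ Bh i j) (hBcol : ∀ j, ∑ i, Bh i j = 1)
    (ε : ℝ) (hε : 0 < ε)
    (α : ℕ → ℝ) (hαnn : ∀ k, 0 ≤ α k) (hαdec : ∀ k, α (k + 1) ≤ α k)
    (x y d : ℕ → Fin n → EuclideanSpace ℝ (Fin p))
    (hx0 : ∀ i, x 0 i = 0) (hy0 : ∀ i, y 0 i = 0)
    (hd : ∀ k i v, f i (x k i) + ⟪d k i, v - x k i⟫ ≤ f i v)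
    (hxupd : ∀ k i, x (k + 1) i = P (∑ j, A i j • x k j + ε • y k i - α k • d k i))
    (hyupd : ∀ k i, y (k + 1) i =
      x k i - ∑ j, A i j • x k j + (∑ j, Bh i j • y k j) - ε • y k i)
    (gv : ℕ → Fin n → EuclideanSpace ℝ (Fin p))
    (hgv : ∀ k i, gv k i = x (k + 1) i - ∑ j, A i j • x k j - ε • y k i)
    (g : ℕ → ℝ) (hg : ∀ k, g k = ∑ i, ‖gv k i‖)
    (zbar : ℕ → EuclideanSpace ℝ (Fin p))
    (hzbar : ∀ k, zbar k = (n : ℝ)⁻¹ • (∑ i, x k i + ∑ i, y k i))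
    (Γ γ : ℝ) (hΓ : 0 < Γ) (hγ0 : 0 < γ) (hγ1 : γ < 1)
    (hM : ∀ (k : ℕ) (i : Fin n ⊕ Fin n),
      ∑ j, |((Matrix.fromBlocks A (ε • (1 : Matrix (Fin n) (Fin n) ℝ))
          ((1 : Matrix (Fin n) (Fin n) ℝ) - A) (Bh - ε • (1 : Matrix (Fin n) (Fin n) ℝ))) ^ k
        - Matrix.fromBlocks (Matrix.of fun _ _ => (n : ℝ)⁻¹)
            (Matrix.of fun _ _ => (n : ℝ)⁻¹) 0 0 :
          Matrix (Fin n ⊕ Fin n) (Fin n ⊕ Fin n) ℝ) i j| ≤ Γ * γ ^ k)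
    :
    ∀ (i : Fin n) (k : ℕ),
      ‖x k i - zbar k‖ ≤
        Γ * (∑ r ∈ Finset.Icc 1 (k - 1), γ ^ (k - r) * g (r - 1)) +
          (if k = 0 then 0 else g (k - 1)) := by
  set M : Matrix (Fin n ⊕ Fin n) (Fin n ⊕ Fin n) ℝ :=
    Matrix.fromBlocks A (ε • (1 : Matrix (Fin n) (Fin n) ℝ))
      ((1 : Matrix (Fin n) (Fin n) ℝ) - A) (Bh - ε • (1 : Matrix (Fin n) (Fin n) ℝ)) with hMdef
  set w : ℕ → (Fin n ⊕ Fin n) → EuclideanSpace ℝ (Fin p) :=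
    fun k => Sum.elim (x k) (y k) with hw
  have hstep : ∀ k j', w (k+1) j' = (∑ l, M j' l • w k l) + Sum.elim (gv k) (fun _ => 0) j' := by
    intro k j'
    rw [Fintype.sum_sum_type]
    cases j' with
    | inl i =>
      simp only [hw, Sum.elim_inl, Sum.elim_inr, hMdef, Matrix.fromBlocks_apply₁₁,
        Matrix.fromBlocks_apply₁₂, Matrix.smul_apply, Matrix.one_apply, smul_ite, smul_zero,
        mul_ite, mul_one, mul_zero, ite_smul, zero_smul]
      simp only [smul_eq_mul, mul_one, Finset.sum_ite_eq, Finset.mem_univ, if_true]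
      simp [hgv k i]
      try abel
    | inr i =>
      simp only [hw, Sum.elim_inl, Sum.elim_inr, hMdef, Matrix.fromBlocks_apply₂₁,
        Matrix.fromBlocks_apply₂₂, Matrix.sub_apply, Matrix.smul_apply, Matrix.one_apply,
        smul_ite, smul_zero, mul_ite, mul_one, mul_zero, ite_smul, zero_smul, sub_smul]
      simp only [smul_eq_mul, mul_one, one_smul, Finset.sum_ite_eq, Finset.mem_univ, if_true]
      simp [hyupd k i]
      try abel
  have hMcol : ∀ j, ∑ j', M j' j = 1 := by
    intro j
    rw [Fintype.sum_sum_type]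
    cases j with
    | inl j =>
      simp only [hMdef, Matrix.fromBlocks_apply₁₁, Matrix.fromBlocks_apply₂₁,
        Matrix.sub_apply, Matrix.one_apply]
      rw [Finset.sum_sub_distrib]
      simp [Finset.sum_ite_eq']
    | inr j =>
      simp only [hMdef, Matrix.fromBlocks_apply₁₂, Matrix.fromBlocks_apply₂₂,
        Matrix.sub_apply, Matrix.smul_apply, Matrix.one_apply, smul_eq_mul, mul_ite,
        mul_one, mul_zero]
      rw [Finset.sum_sub_distrib]
      simp [Finset.sum_ite_eq', hBcol j]
  have hpowcol : ∀ (m : ℕ) j, ∑ j', (M ^ m) j' j = 1 := by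
    intro m
    induction m with
    | zero => intro j; simp [Matrix.one_apply, Finset.sum_ite_eq']
    | succ m ih =>
      intro j
      have : (M ^ (m+1)) = (M ^ m) * M := pow_succ M m
      simp only [this, Matrix.mul_apply]
      rw [Finset.sum_comm]
      calc ∑ l, ∑ j', (M ^ m) j' l * M l j = ∑ l, (∑ j', (M ^ m) j' l) * M l j := by
            exact Finset.sum_congr rfl fun l _ => (Finset.sum_mul _ _ _).symm
        _ = ∑ l, M l j := by simp [ih]
        _ = 1 := hMcol j
  have hrep : ∀ k j', w k j' =
      ∑ r ∈ Finset.range k, ∑ j, ((M ^ (k - 1 - r)) j' (Sum.inl j)) • gv r j := by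
    intro k
    induction k with
    | zero => intro j'; cases j' <;> simp [hw, hx0, hy0]
    | succ k ih =>
      intro j'
      rw [hstep k j']
      have e1 : ∀ l, M j' l • w k l =
          ∑ r ∈ Finset.range k, ∑ j, (M j' l * (M ^ (k - 1 - r)) l (Sum.inl j)) • gv r j := by
        intro l
        rw [ih l, Finset.smul_sum]
        refine Finset.sum_congr rfl fun r hr => ?_
        rw [Finset.smul_sum]
        refine Finset.sum_congr rfl fun j hj => ?_
        rw [smul_smul]
      calc (∑ l, M j' l • w k l) + Sum.elim (gv k) (fun _ => 0) j'
          = (∑ r ∈ Finset.range k, ∑ j,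
              ((M ^ (k + 1 - 1 - r)) j' (Sum.inl j)) • gv r j)
            + ∑ j, ((M ^ (k + 1 - 1 - k)) j' (Sum.inl j)) • gv k j := by
            congr 1
            · rw [Finset.sum_congr rfl (fun l _ => e1 l), Finset.sum_comm]
              refine Finset.sum_congr rfl fun r hr => ?_
              rw [Finset.sum_comm]
              refine Finset.sum_congr rfl fun j hj => ?_
              rw [← Finset.sum_smul]
              congr 1
              have hrk : r < k := Finset.mem_range.mp hr
              have : k + 1 - 1 - r = (k - 1 - r) + 1 := by omega
              rw [this, pow_succ']
              rw [Matrix.mul_apply]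
            · have : k + 1 - 1 - k = 0 := by omega
              rw [this]
              cases j' with
              | inl i => simp [Matrix.one_apply, Finset.sum_ite_eq']
              | inr i => simp [Matrix.one_apply]
        _ = ∑ r ∈ Finset.range (k+1), ∑ j, ((M ^ (k + 1 - 1 - r)) j' (Sum.inl j)) • gv r j := by
            rw [Finset.sum_range_succ]

  have hgnn : ∀ r, 0 ≤ g r := by
    intro r; rw [hg]; exact Finset.sum_nonneg fun i _ => norm_nonneg _
  have hzrep : ∀ k, zbar k = ∑ r ∈ Finset.range k, (n:ℝ)⁻¹ • ∑ j, gv r j := by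
    intro k
    have hsum : ∑ i, x k i + ∑ i, y k i = ∑ j', w k j' := by
      rw [Fintype.sum_sum_type]; simp [hw]
    rw [hzbar, hsum, Finset.sum_congr rfl (fun j' (_ : j' ∈ Finset.univ) => hrep k j'),
      Finset.sum_comm, Finset.smul_sum]
    refine Finset.sum_congr rfl fun r hr => ?_
    congr 1
    rw [Finset.sum_comm]
    refine Finset.sum_congr rfl fun j hj => ?_
    rw [← Finset.sum_smul, hpowcol, one_smul]
  have hdiff : ∀ k i, x k i - zbar k =
      ∑ r ∈ Finset.range k, ∑ j,
        (((M ^ (k - 1 - r)) (Sum.inl i) (Sum.inl j)) - (n:ℝ)⁻¹) • gv r j := by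
    intro k i
    have hx : x k i = w k (Sum.inl i) := rfl
    rw [hx, hrep k (Sum.inl i), hzrep, ← Finset.sum_sub_distrib]
    refine Finset.sum_congr rfl fun r hr => ?_
    rw [Finset.smul_sum, ← Finset.sum_sub_distrib]
    refine Finset.sum_congr rfl fun j hj => ?_
    rw [sub_smul]
  have hcoef : ∀ (m : ℕ) (i j : Fin n),
      |(M ^ m) (Sum.inl i) (Sum.inl j) - (n:ℝ)⁻¹| ≤ Γ * γ ^ m := by
    intro m i j
    have h := hM m (Sum.inl i)
    set N : Matrix (Fin n ⊕ Fin n) (Fin n ⊕ Fin n) ℝ :=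
      M ^ m - Matrix.fromBlocks (Matrix.of fun _ _ => (n:ℝ)⁻¹)
        (Matrix.of fun _ _ => (n:ℝ)⁻¹) 0 0 with hN
    refine le_trans ?_ h
    have h2 : |N (Sum.inl i) (Sum.inl j)| ≤ ∑ j', |N (Sum.inl i) j'| :=
      Finset.single_le_sum (f := fun j' => |N (Sum.inl i) j'|)
        (fun j' _ => abs_nonneg _) (Finset.mem_univ (Sum.inl j))
    simpa [hN, Matrix.sub_apply, Matrix.fromBlocks_apply₁₁] using h2
  have hninv0 : (0:ℝ) ≤ (n:ℝ)⁻¹ := by positivity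
  have hninv1 : (n:ℝ)⁻¹ ≤ 1 := by
    rw [inv_le_one_iff₀]
    right
    exact_mod_cast hn
  have hcoef0 : ∀ (i j : Fin n), |(M ^ 0) (Sum.inl i) (Sum.inl j) - (n:ℝ)⁻¹| ≤ 1 := by
    intro i j
    rw [pow_zero]
    rcases eq_or_ne i j with h | h
    · subst h
      rw [Matrix.one_apply_eq, abs_of_nonneg (by linarith)]
      linarith
    · rw [Matrix.one_apply_ne (by simpa using h), zero_sub, abs_neg,
        abs_of_nonneg hninv0]
      exact hninv1
  have hterm : ∀ (r : ℕ) (c : Fin n → ℝ) (K : ℝ), (∀ j, |c j| ≤ K) →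
      ‖∑ j, c j • gv r j‖ ≤ K * g r := by
    intro r c K hc
    calc ‖∑ j, c j • gv r j‖ ≤ ∑ j, ‖c j • gv r j‖ := norm_sum_le _ _
      _ ≤ ∑ j, K * ‖gv r j‖ := by
          refine Finset.sum_le_sum fun j _ => ?_
          rw [norm_smul, Real.norm_eq_abs]
          exact mul_le_mul_of_nonneg_right (hc j) (norm_nonneg _)
      _ = K * g r := by rw [hg, Finset.mul_sum]
  intro i k
  rcases Nat.eq_zero_or_pos k with hk | hk
  · subst hk
    rw [if_pos rfl]
    have hz0 : zbar 0 = 0 := by rw [hzrep]; simp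
    have hIcc : Finset.Icc 1 (0 - 1) = (∅ : Finset ℕ) := by decide
    rw [hz0, hx0, sub_zero, norm_zero, hIcc]
    simp
  · obtain ⟨m, rfl⟩ : ∃ m, k = m + 1 := ⟨k - 1, by omega⟩
    rw [if_neg (Nat.succ_ne_zero m)]
    calc ‖x (m+1) i - zbar (m+1)‖
        ≤ (∑ r ∈ Finset.range m, (Γ * γ ^ (m - r)) * g r) + 1 * g m := by
          rw [hdiff (m+1) i, Finset.sum_range_succ]
          refine (norm_add_le _ _).trans (add_le_add ?_ ?_)
          · refine (norm_sum_le _ _).trans (Finset.sum_le_sum fun r hr => ?_)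
            have hexp : m + 1 - 1 - r = m - r := by omega
            rw [hexp]
            exact hterm r _ _ (fun j => hcoef (m - r) i j)
          · have hexp : m + 1 - 1 - m = 0 := by omega
            rw [hexp]
            exact hterm m _ 1 (fun j => hcoef0 i j)
      _ = Γ * (∑ r ∈ Finset.Icc 1 (m + 1 - 1), γ ^ (m + 1 - r) * g (r - 1)) + g m := by
          rw [one_mul]
          congr 1
          rw [Finset.mul_sum, ← Finset.Ico_add_one_right_eq_Icc, Finset.sum_Ico_eq_sum_range]
          have hrange : m + 1 - 1 + 1 - 1 = m := by omega
          rw [hrange]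
          refine Finset.sum_congr rfl fun r hr => ?_
          have h1 : m + 1 - (1 + r) = m - r := by omega
          have h2 : 1 + r - 1 = r := by omega
          rw [h1, h2, mul_assoc]
end

section
/- For every agent i ∈ {1,…,n} and every k ≥ 0, the D-DPS auxiliary variable satisfies ‖y_i^k‖ ≤ Γ Σ_{r=1}^{k−1} γ^{k−r} g_{r−1}, where sums over empty index ranges are zero and g_{−1} = 0. -/
open Finset Filter
open scoped RealInnerProductSpace

theorem ddps_aux_bound
    {n p : ℕ} (hn : 1 ≤ n) (hp : 1 ≤ p)
    (f : Fin n → EuclideanSpace ℝ (Fin p) → ℝ)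
    (hconv : ∀ i, ConvexOn ℝ Set.univ (f i))
    (B : ℝ) (hB : 0 < B)
    (hsubB : ∀ (i : Fin n) (u s : EuclideanSpace ℝ (Fin p)),
      (∀ v, f i u + ⟪s, v - u⟫ ≤ f i v) → ‖s‖ ≤ B)
    (X : Set (EuclideanSpace ℝ (Fin p)))
    (hXne : X.Nonempty) (hXcl : IsClosed X) (hXcv : Convex ℝ X)
    (hX0 : (0 : EuclideanSpace ℝ (Fin p)) ∈ X)
    (P : EuclideanSpace ℝ (Fin p) → EuclideanSpace ℝ (Fin p))
    (hPmem : ∀ v, P v ∈ X)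
    (hPproj : ∀ v w, w ∈ X → ‖P v - v‖ ≤ ‖w - v‖)
    (A Bh : Matrix (Fin n) (Fin n) ℝ)
    (hAnn : ∀ i j, 0 ≤ A i j) (hArow : ∀ i, ∑ j, A i j = 1)
    (hBnn : ∀ i j, 0 ≤ Bh i j) (hBcol : ∀ j, ∑ i, Bh i j = 1)
    (ε : ℝ) (hε : 0 < ε)
    (α : ℕ → ℝ) (hαnn : ∀ k, 0 ≤ α k) (hαdec : ∀ k, α (k + 1) ≤ α k)
    (x y d : ℕ → Fin n → EuclideanSpace ℝ (Fin p))
    (hx0 : ∀ i, x 0 i = 0) (hy0 : ∀ i, y 0 i = 0)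
    (hd : ∀ k i v, f i (x k i) + ⟪d k i, v - x k i⟫ ≤ f i v)
    (hxupd : ∀ k i, x (k + 1) i = P (∑ j, A i j • x k j + ε • y k i - α k • d k i))
    (hyupd : ∀ k i, y (k + 1) i =
      x k i - ∑ j, A i j • x k j + (∑ j, Bh i j • y k j) - ε • y k i)
    (gv : ℕ → Fin n → EuclideanSpace ℝ (Fin p))
    (hgv : ∀ k i, gv k i = x (k + 1) i - ∑ j, A i j • x k j - ε • y k i)
    (g : ℕ → ℝ) (hg : ∀ k, g k = ∑ i, ‖gv k i‖)
    (zbar : ℕ → EuclideanSpace ℝ (Fin p))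
    (hzbar : ∀ k, zbar k = (n : ℝ)⁻¹ • (∑ i, x k i + ∑ i, y k i))
    (Γ γ : ℝ) (hΓ : 0 < Γ) (hγ0 : 0 < γ) (hγ1 : γ < 1)
    (hM : ∀ (k : ℕ) (i : Fin n ⊕ Fin n),
      ∑ j, |((Matrix.fromBlocks A (ε • (1 : Matrix (Fin n) (Fin n) ℝ))
          ((1 : Matrix (Fin n) (Fin n) ℝ) - A) (Bh - ε • (1 : Matrix (Fin n) (Fin n) ℝ))) ^ k
        - Matrix.fromBlocks (Matrix.of fun _ _ => (n : ℝ)⁻¹)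
            (Matrix.of fun _ _ => (n : ℝ)⁻¹) 0 0 :
          Matrix (Fin n ⊕ Fin n) (Fin n ⊕ Fin n) ℝ) i j| ≤ Γ * γ ^ k)
    :
    ∀ (i : Fin n) (k : ℕ),
      ‖y k i‖ ≤ Γ * ∑ r ∈ Finset.Icc 1 (k - 1), γ ^ (k - r) * g (r - 1) := by
  classical
  set M : Matrix (Fin n ⊕ Fin n) (Fin n ⊕ Fin n) ℝ :=
    Matrix.fromBlocks A (ε • 1) (1 - A) (Bh - ε • 1) with hMdef
  set W : ℕ → (Fin n ⊕ Fin n) → EuclideanSpace ℝ (Fin p) :=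
    fun k => Sum.elim (x k) (y k) with hW
  set Ev : ℕ → (Fin n ⊕ Fin n) → EuclideanSpace ℝ (Fin p) :=
    fun k => Sum.elim (gv k) 0 with hEv
  have hId : ∀ (v : Fin n → EuclideanSpace ℝ (Fin p)) (i : Fin n),
      ∑ j, ((1 : Matrix (Fin n) (Fin n) ℝ) i j) • v j = v i := by
    intro v i
    rw [Finset.sum_eq_single i (fun j _ hj => by simp [Matrix.one_apply, Ne.symm hj])
      (by simp)]
    simp [Matrix.one_apply]
  have hsc : ∀ (c : ℝ) (v : Fin n → EuclideanSpace ℝ (Fin p)) (i : Fin n),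
      ∑ j, ((c • (1 : Matrix (Fin n) (Fin n) ℝ)) i j) • v j = c • v i := by
    intro c v i
    simp_rw [Matrix.smul_apply, smul_assoc]
    rw [← Finset.smul_sum, hId]
  have hstep : ∀ k s, W (k + 1) s = (∑ t, M s t • W k t) + Ev k s := by
    intro k s
    cases s with
    | inl i =>
      simp only [hW, hEv, Sum.elim_inl, Sum.elim_inr, Pi.zero_apply, Fintype.sum_sum_type,
        hMdef, Matrix.fromBlocks_apply₁₁, Matrix.fromBlocks_apply₁₂]
      rw [hsc, hgv k i]
      abel
    | inr i =>
      simp only [hW, hEv, Sum.elim_inl, Sum.elim_inr, Pi.zero_apply, Fintype.sum_sum_type,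
        hMdef, Matrix.fromBlocks_apply₂₁, Matrix.fromBlocks_apply₂₂, Matrix.sub_apply]
      simp_rw [sub_smul, Finset.sum_sub_distrib]
      rw [hId, hsc, hyupd k i]
      abel
  have hclosed : ∀ k s, W k s = ∑ r ∈ Finset.range k, ∑ t, ((M ^ (k - 1 - r)) s t) • Ev r t := by
    intro k
    induction k with
    | zero => intro s; cases s <;> simp [hW, hx0, hy0]
    | succ k ih =>
      intro s
      rw [hstep k s]
      have key : ∑ t, M s t • W k t
          = ∑ r ∈ Finset.range k, ∑ u, ((M ^ (k - r)) s u) • Ev r u := by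
        calc ∑ t, M s t • W k t
            = ∑ t, ∑ r ∈ Finset.range k, ∑ u, (M s t * (M ^ (k - 1 - r)) t u) • Ev r u := by
              simp_rw [ih, Finset.smul_sum, smul_smul]
          _ = ∑ r ∈ Finset.range k, ∑ u, ∑ t, (M s t * (M ^ (k - 1 - r)) t u) • Ev r u := by
              rw [Finset.sum_comm]
              exact Finset.sum_congr rfl fun r _ => Finset.sum_comm
          _ = ∑ r ∈ Finset.range k, ∑ u, (∑ t, M s t * (M ^ (k - 1 - r)) t u) • Ev r u := by
              simp_rw [Finset.sum_smul]
          _ = ∑ r ∈ Finset.range k, ∑ u, ((M ^ (k - r)) s u) • Ev r u := by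
              refine Finset.sum_congr rfl fun r hr => Finset.sum_congr rfl fun u _ => ?_
              congr 1
              rw [← Matrix.mul_apply]
              congr 1
              have hkr : k - r = (k - 1 - r) + 1 := by
                have := Finset.mem_range.mp hr; omega
              rw [hkr, pow_succ']
      rw [key, Finset.sum_range_succ]
      simp only [Nat.add_sub_cancel]
      congr 1
      rw [Nat.sub_self, pow_zero]
      symm
      rw [Finset.sum_eq_single s (fun u _ hu => by simp [Matrix.one_apply, Ne.symm hu])
        (by simp)]
      simp [Matrix.one_apply]
  have hentry : ∀ (m : ℕ) (i j : Fin n), |(M ^ m) (Sum.inr i) (Sum.inl j)| ≤ Γ * γ ^ m := by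
    intro m i j
    have h := hM m (Sum.inr i)
    set N : Matrix (Fin n ⊕ Fin n) (Fin n ⊕ Fin n) ℝ :=
      Matrix.fromBlocks (Matrix.of fun _ _ => (n : ℝ)⁻¹)
        (Matrix.of fun _ _ => (n : ℝ)⁻¹) 0 0 with hN
    have h2 : |(M ^ m - N) (Sum.inr i) (Sum.inl j)| ≤ Γ * γ ^ m :=
      le_trans (Finset.single_le_sum (f := fun t => |(M ^ m - N) (Sum.inr i) t|)
        (fun t _ => abs_nonneg _) (Finset.mem_univ (Sum.inl j))) h
    simpa [hN, Matrix.sub_apply, Matrix.fromBlocks_apply₂₁] using h2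
  intro i k
  cases k with
  | zero => simp [hy0]
  | succ m =>
    have hyW : y (m + 1) i = W (m + 1) (Sum.inr i) := rfl
    have hy1 : ‖y (m + 1) i‖
        ≤ ∑ r ∈ Finset.range (m + 1), ∑ j, |(M ^ (m - r)) (Sum.inr i) (Sum.inl j)| * ‖gv r j‖ := by
      rw [hyW, hclosed]
      refine le_trans (norm_sum_le _ _) (Finset.sum_le_sum fun r hr => ?_)
      refine le_trans (norm_sum_le _ _) ?_
      rw [Fintype.sum_sum_type]
      have hz : ∑ j : Fin n, ‖(M ^ (m + 1 - 1 - r)) (Sum.inr i) (Sum.inr j) • Ev r (Sum.inr j)‖ = 0 := by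
        simp [hEv]
      rw [hz, add_zero]
      have hmr : m + 1 - 1 - r = m - r := by omega
      refine le_of_eq (Finset.sum_congr rfl fun j _ => ?_)
      rw [hmr, norm_smul, Real.norm_eq_abs]
      rfl
    have hy2 : ∑ r ∈ Finset.range (m + 1), ∑ j, |(M ^ (m - r)) (Sum.inr i) (Sum.inl j)| * ‖gv r j‖
        ≤ Γ * ∑ r ∈ Finset.range m, γ ^ (m - r) * g r := by
      rw [Finset.sum_range_succ]
      have hlast : ∑ j, |(M ^ (m - m)) (Sum.inr i) (Sum.inl j)| * ‖gv m j‖ = 0 := by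
        simp [Nat.sub_self, Matrix.one_apply]
      rw [hlast, add_zero, Finset.mul_sum]
      refine Finset.sum_le_sum fun r hr => ?_
      calc ∑ j, |(M ^ (m - r)) (Sum.inr i) (Sum.inl j)| * ‖gv r j‖
          ≤ ∑ j, (Γ * γ ^ (m - r)) * ‖gv r j‖ :=
            Finset.sum_le_sum fun j _ =>
              mul_le_mul_of_nonneg_right (hentry _ i j) (norm_nonneg _)
        _ = Γ * (γ ^ (m - r) * g r) := by
            rw [← Finset.mul_sum, hg, mul_assoc]
    have hre : ∑ r ∈ Finset.Icc 1 (m + 1 - 1), γ ^ (m + 1 - r) * g (r - 1)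
        = ∑ r ∈ Finset.range m, γ ^ (m - r) * g r := by
      have hm1 : m + 1 - 1 = m := rfl
      rw [hm1, ← Finset.Ico_add_one_right_eq_Icc, Finset.sum_Ico_eq_sum_range]
      refine Finset.sum_congr (by congr 1) fun r hr => ?_
      have e1 : m + 1 - (1 + r) = m - r := by omega
      have e2 : 1 + r - 1 = r := by omega
      rw [e1, e2]
    rw [hre]
    exact le_trans hy1 hy2
end

section
/- For every k ≥ 0, the aggregate perturbation of D-DPS satisfies the recursive bound g_k ≤ n B α_k + 2 n ε Γ Σ_{r=1}^{k−1} γ^{k−r} g_{r−1}, where sums over empty index ranges are zero and g_{−1} = 0. -/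
open Finset Filter
open scoped RealInnerProductSpace

set_option maxHeartbeats 1000000 in
theorem ddps_aggregate_perturbation_bound
    {n p : ℕ} (hn : 1 ≤ n) (hp : 1 ≤ p)
    (f : Fin n → EuclideanSpace ℝ (Fin p) → ℝ)
    (hconv : ∀ i, ConvexOn ℝ Set.univ (f i))
    (B : ℝ) (hB : 0 < B)
    (hsubB : ∀ (i : Fin n) (u s : EuclideanSpace ℝ (Fin p)),
      (∀ v, f i u + ⟪s, v - u⟫ ≤ f i v) → ‖s‖ ≤ B)
    (X : Set (EuclideanSpace ℝ (Fin p)))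
    (hXne : X.Nonempty) (hXcl : IsClosed X) (hXcv : Convex ℝ X)
    (hX0 : (0 : EuclideanSpace ℝ (Fin p)) ∈ X)
    (P : EuclideanSpace ℝ (Fin p) → EuclideanSpace ℝ (Fin p))
    (hPmem : ∀ v, P v ∈ X)
    (hPproj : ∀ v w, w ∈ X → ‖P v - v‖ ≤ ‖w - v‖)
    (A Bh : Matrix (Fin n) (Fin n) ℝ)
    (hAnn : ∀ i j, 0 ≤ A i j) (hArow : ∀ i, ∑ j, A i j = 1)
    (hBnn : ∀ i j, 0 ≤ Bh i j) (hBcol : ∀ j, ∑ i, Bh i j = 1)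
    (ε : ℝ) (hε : 0 < ε)
    (α : ℕ → ℝ) (hαnn : ∀ k, 0 ≤ α k) (hαdec : ∀ k, α (k + 1) ≤ α k)
    (x y d : ℕ → Fin n → EuclideanSpace ℝ (Fin p))
    (hx0 : ∀ i, x 0 i = 0) (hy0 : ∀ i, y 0 i = 0)
    (hd : ∀ k i v, f i (x k i) + ⟪d k i, v - x k i⟫ ≤ f i v)
    (hxupd : ∀ k i, x (k + 1) i = P (∑ j, A i j • x k j + ε • y k i - α k • d k i))
    (hyupd : ∀ k i, y (k + 1) i =
      x k i - ∑ j, A i j • x k j + (∑ j, Bh i j • y k j) - ε • y k i)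
    (gv : ℕ → Fin n → EuclideanSpace ℝ (Fin p))
    (hgv : ∀ k i, gv k i = x (k + 1) i - ∑ j, A i j • x k j - ε • y k i)
    (g : ℕ → ℝ) (hg : ∀ k, g k = ∑ i, ‖gv k i‖)
    (zbar : ℕ → EuclideanSpace ℝ (Fin p))
    (hzbar : ∀ k, zbar k = (n : ℝ)⁻¹ • (∑ i, x k i + ∑ i, y k i))
    (Γ γ : ℝ) (hΓ : 0 < Γ) (hγ0 : 0 < γ) (hγ1 : γ < 1)
    (hM : ∀ (k : ℕ) (i : Fin n ⊕ Fin n),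
      ∑ j, |((Matrix.fromBlocks A (ε • (1 : Matrix (Fin n) (Fin n) ℝ))
          ((1 : Matrix (Fin n) (Fin n) ℝ) - A) (Bh - ε • (1 : Matrix (Fin n) (Fin n) ℝ))) ^ k
        - Matrix.fromBlocks (Matrix.of fun _ _ => (n : ℝ)⁻¹)
            (Matrix.of fun _ _ => (n : ℝ)⁻¹) 0 0 :
          Matrix (Fin n ⊕ Fin n) (Fin n ⊕ Fin n) ℝ) i j| ≤ Γ * γ ^ k)
    :
    ∀ k : ℕ,
      g k ≤ n * B * α k +
        2 * n * ε * Γ * ∑ r ∈ Finset.Icc 1 (k - 1), γ ^ (k - r) * g (r - 1) := by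
  set M : Matrix (Fin n ⊕ Fin n) (Fin n ⊕ Fin n) ℝ :=
    Matrix.fromBlocks A (ε • (1 : Matrix (Fin n) (Fin n) ℝ))
      ((1 : Matrix (Fin n) (Fin n) ℝ) - A) (Bh - ε • (1 : Matrix (Fin n) (Fin n) ℝ)) with hMdef
  -- P fixes points of X
  have hPfix : ∀ w ∈ X, P w = w := by
    intro w hw
    have h := hPproj w w hw
    simp only [sub_self, norm_zero] at h
    exact sub_eq_zero.mp (norm_eq_zero.mp (le_antisymm h (norm_nonneg _)))
  haveI : Nonempty X := hXne.to_subtype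
  -- variational characterization of the projection
  have hchar : ∀ v : EuclideanSpace ℝ (Fin p), ∀ w ∈ X, ⟪v - P v, w - P v⟫ ≤ 0 := by
    intro v
    have heq : ‖v - P v‖ = ⨅ w : X, ‖v - (w : EuclideanSpace ℝ (Fin p))‖ := by
      refine le_antisymm (le_ciInf fun w => ?_) ?_
      · rw [norm_sub_rev]
        calc ‖P v - v‖ ≤ ‖(w : EuclideanSpace ℝ (Fin p)) - v‖ := hPproj v w w.2
          _ = ‖v - (w : EuclideanSpace ℝ (Fin p))‖ := norm_sub_rev _ _
      · have hb : BddBelow (Set.range fun w : X => ‖v - (w : EuclideanSpace ℝ (Fin p))‖) :=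
          ⟨0, by rintro _ ⟨w, rfl⟩; exact norm_nonneg _⟩
        have h := ciInf_le hb (⟨P v, hPmem v⟩ : X)
        simpa using h
    exact (norm_eq_iInf_iff_real_inner_le_zero hXcv (hPmem v)).mp heq
  -- nonexpansiveness of the projection
  have hPne : ∀ u v : EuclideanSpace ℝ (Fin p), ‖P u - P v‖ ≤ ‖u - v‖ := by
    intro u v
    set a := P u
    set b := P v
    have h1 : ⟪u - a, b - a⟫ ≤ 0 := hchar u b (hPmem v)
    have h2 : ⟪v - b, a - b⟫ ≤ 0 := hchar v a (hPmem u)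
    have key : ‖a - b‖ ^ 2 ≤ ⟪u - v, a - b⟫ := by
      have e1 : a - b = (a - u) + ((u - v) + (v - b)) := by abel
      have expand : ⟪a - b, a - b⟫ =
          ⟪a - u, a - b⟫ + (⟪u - v, a - b⟫ + ⟪v - b, a - b⟫) := by
        conv_lhs => rw [show (⟪a - b, a - b⟫ : ℝ) = ⟪(a - u) + ((u - v) + (v - b)), a - b⟫ from by rw [← e1]]
        rw [inner_add_left, inner_add_left]
      have h1' : ⟪a - u, a - b⟫ ≤ 0 := by
        calc ⟪a - u, a - b⟫ = ⟪-(u - a), -(b - a)⟫ := by rw [neg_sub, neg_sub]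
          _ = ⟪u - a, b - a⟫ := inner_neg_neg _ _
          _ ≤ 0 := h1
      calc ‖a - b‖ ^ 2 = ⟪a - b, a - b⟫ := (real_inner_self_eq_norm_sq _).symm
        _ = ⟪a - u, a - b⟫ + (⟪u - v, a - b⟫ + ⟪v - b, a - b⟫) := expand
        _ ≤ ⟪u - v, a - b⟫ := by linarith
    have hle : ‖a - b‖ ^ 2 ≤ ‖u - v‖ * ‖a - b‖ :=
      key.trans (real_inner_le_norm _ _)
    rcases eq_or_lt_of_le (norm_nonneg (a - b)) with h0 | h0
    · rw [← h0]; exact norm_nonneg _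
    · nlinarith
  -- subgradient norm bound
  have hdB : ∀ k i, ‖d k i‖ ≤ B := fun k i => hsubB i (x k i) (d k i) (hd k i)
  -- iterates stay in X
  have hxX : ∀ k i, x k i ∈ X := by
    intro k i
    cases k with
    | zero => rw [hx0]; exact hX0
    | succ k => rw [hxupd]; exact hPmem _
  -- per-agent bound
  have hper : ∀ k i, ‖gv k i‖ ≤ B * α k + 2 * ε * ‖y k i‖ := by
    intro k i
    set w : EuclideanSpace ℝ (Fin p) := ∑ j, A i j • x k j with hw
    have hwX : w ∈ X :=
      hXcv.sum_mem (fun j _ => hAnn i j) (hArow i) (fun j _ => hxX k j)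
    set u : EuclideanSpace ℝ (Fin p) := w + ε • y k i - α k • d k i with hu
    have hx1 : x (k + 1) i = P u := hxupd k i
    have hgveq : gv k i = (P u - P w) - ε • y k i := by
      rw [hgv k i, hx1, hPfix w hwX]
    have h1 : ‖P u - P w‖ ≤ ‖u - w‖ := hPne u w
    have h2 : ‖u - w‖ ≤ ε * ‖y k i‖ + α k * B := by
      have : u - w = ε • y k i - α k • d k i := by rw [hu]; abel
      rw [this]
      calc ‖ε • y k i - α k • d k i‖ ≤ ‖ε • y k i‖ + ‖α k • d k i‖ := norm_sub_le _ _
        _ = |ε| * ‖y k i‖ + |α k| * ‖d k i‖ := by rw [norm_smul, norm_smul]; rfl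
        _ ≤ ε * ‖y k i‖ + α k * B := by
            rw [abs_of_pos hε, abs_of_nonneg (hαnn k)]
            have := hdB k i
            have := hαnn k
            nlinarith [norm_nonneg (y k i)]
    calc ‖gv k i‖ ≤ ‖P u - P w‖ + ‖ε • y k i‖ := by
          rw [hgveq]; exact norm_sub_le _ _
      _ ≤ (ε * ‖y k i‖ + α k * B) + ε * ‖y k i‖ := by
          have : ‖ε • y k i‖ = ε * ‖y k i‖ := by
            rw [norm_smul, Real.norm_eq_abs, abs_of_pos hε]
          rw [this]; linarith [h1.trans h2]
      _ = B * α k + 2 * ε * ‖y k i‖ := by ring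
  -- stacked dynamics
  set Z : ℕ → (Fin n ⊕ Fin n) → EuclideanSpace ℝ (Fin p) := fun k => Sum.elim (x k) (y k) with hZdef
  set G : ℕ → (Fin n ⊕ Fin n) → EuclideanSpace ℝ (Fin p) := fun k => Sum.elim (gv k) 0 with hGdef
  have hone : ∀ (v : Fin n → EuclideanSpace ℝ (Fin p)) (i : Fin n),
      ∑ j, ((1 : Matrix (Fin n) (Fin n) ℝ) i j) • v j = v i := by
    intro v i
    rw [Finset.sum_eq_single i]
    · simp [Matrix.one_apply_eq]
    · intro j _ hj
      rw [Matrix.one_apply_ne (Ne.symm hj), zero_smul]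
    · simp
  have hstep : ∀ k i, Z (k + 1) i = (∑ j, M i j • Z k j) + G k i := by
    intro k i
    rw [Fintype.sum_sum_type]
    cases i with
    | inl i =>
      simp only [hZdef, hGdef, Sum.elim_inl, Sum.elim_inr, hMdef, Matrix.fromBlocks_apply₁₁,
        Matrix.fromBlocks_apply₁₂]
      have h2 : ∑ j, ((ε • (1 : Matrix (Fin n) (Fin n) ℝ)) i j) • y k j = ε • y k i := by
        simp only [Matrix.smul_apply, smul_eq_mul, mul_smul]
        rw [← Finset.smul_sum, hone]
      rw [h2, hgv k i]
      abel
    | inr i =>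
      simp only [hZdef, hGdef, Sum.elim_inr, Sum.elim_inl, hMdef, Matrix.fromBlocks_apply₂₁,
        Matrix.fromBlocks_apply₂₂]
      have h1 : ∑ j, (((1 : Matrix (Fin n) (Fin n) ℝ) - A) i j) • x k j
          = x k i - ∑ j, A i j • x k j := by
        simp only [Matrix.sub_apply, sub_smul, Finset.sum_sub_distrib]
        rw [hone]
      have h2 : ∑ j, ((Bh - ε • (1 : Matrix (Fin n) (Fin n) ℝ)) i j) • y k j
          = (∑ j, Bh i j • y k j) - ε • y k i := by
        simp only [Matrix.sub_apply, sub_smul, Finset.sum_sub_distrib]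
        congr 1
        simp only [Matrix.smul_apply, smul_eq_mul, mul_smul]
        rw [← Finset.smul_sum, hone]
      rw [h1, h2, hyupd k i, Pi.zero_apply, add_zero]
      abel
  -- closed form
  have hZ : ∀ k i, Z k i = ∑ r ∈ Finset.range k, ∑ j, ((M ^ (k - 1 - r)) i j) • G r j := by
    intro k
    induction k with
    | zero =>
      intro i
      simp only [Finset.range_zero, Finset.sum_empty]
      cases i with
      | inl i => simp [hZdef, hx0]
      | inr i => simp [hZdef, hy0]
    | succ k ih =>
      intro i
      rw [hstep k i]
      have hmain : ∑ j, M i j • Z k j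
          = ∑ r ∈ Finset.range k, ∑ j', ((M ^ (k - r)) i j') • G r j' := by
        calc ∑ j, M i j • Z k j
            = ∑ j, ∑ r ∈ Finset.range k, ∑ j', (M i j * (M ^ (k - 1 - r)) j j') • G r j' := by
              refine Finset.sum_congr rfl fun j _ => ?_
              rw [ih j, Finset.smul_sum]
              refine Finset.sum_congr rfl fun r _ => ?_
              rw [Finset.smul_sum]
              refine Finset.sum_congr rfl fun j' _ => ?_
              rw [smul_smul]
          _ = ∑ r ∈ Finset.range k, ∑ j, ∑ j', (M i j * (M ^ (k - 1 - r)) j j') • G r j' :=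
              Finset.sum_comm
          _ = ∑ r ∈ Finset.range k, ∑ j', ((M ^ (k - r)) i j') • G r j' := by
              refine Finset.sum_congr rfl fun r hr => ?_
              rw [Finset.sum_comm]
              refine Finset.sum_congr rfl fun j' _ => ?_
              rw [← Finset.sum_smul]
              congr 1
              have hkr : k - r = (k - 1 - r) + 1 := by
                have := Finset.mem_range.mp hr; omega
              rw [hkr, pow_succ', Matrix.mul_apply]
      rw [hmain]
      simp only [show ∀ r, k + 1 - 1 - r = k - r from fun r => by omega]
      rw [Finset.sum_range_succ, Nat.sub_self, pow_zero]
      congr 1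
      rw [Finset.sum_eq_single i]
      · simp [Matrix.one_apply_eq]
      · intro j _ hj
        rw [Matrix.one_apply_ne (Ne.symm hj), zero_smul]
      · simp
  -- g is nonnegative
  have hgnn : ∀ r, 0 ≤ g r := by
    intro r; rw [hg]; exact Finset.sum_nonneg fun i _ => norm_nonneg _
  -- entry bound for the bottom-left block of powers of M
  have hentry : ∀ (s : ℕ) (i j : Fin n), |(M ^ s) (Sum.inr i) (Sum.inl j)| ≤ Γ * γ ^ s := by
    intro s i j
    have h := hM s (Sum.inr i)
    have hLz : (Matrix.fromBlocks (Matrix.of fun _ _ => (n : ℝ)⁻¹)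
        (Matrix.of fun _ _ => (n : ℝ)⁻¹) 0 0 :
        Matrix (Fin n ⊕ Fin n) (Fin n ⊕ Fin n) ℝ) (Sum.inr i) (Sum.inl j) = 0 := by
      simp [Matrix.fromBlocks_apply₂₁]
    have hsingle := Finset.single_le_sum
      (f := fun j' => |((M ^ s - Matrix.fromBlocks (Matrix.of fun _ _ => (n : ℝ)⁻¹)
        (Matrix.of fun _ _ => (n : ℝ)⁻¹) 0 0 : Matrix (Fin n ⊕ Fin n) (Fin n ⊕ Fin n) ℝ))
        (Sum.inr i) j'|)
      (fun j' _ => abs_nonneg _) (Finset.mem_univ (Sum.inl j))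
    simp only [Matrix.sub_apply, hLz, sub_zero] at hsingle
    exact hsingle.trans h
  -- bound on the norms of y
  have hyb : ∀ k i, ‖y k i‖ ≤ ∑ r ∈ Finset.range (k - 1), Γ * γ ^ (k - 1 - r) * g r := by
    intro k i
    cases k with
    | zero => rw [hy0]; simp
    | succ m =>
      have hyZ : y (m + 1) i = ∑ r ∈ Finset.range (m + 1),
          ∑ j : Fin n, ((M ^ (m + 1 - 1 - r)) (Sum.inr i) (Sum.inl j)) • gv r j := by
        have h := hZ (m + 1) (Sum.inr i)
        simp only [hZdef, Sum.elim_inr] at h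
        rw [h]
        refine Finset.sum_congr rfl fun r _ => ?_
        rw [Fintype.sum_sum_type]
        simp [hGdef]
      have hlast : ∑ j : Fin n, ((M ^ (m + 1 - 1 - m)) (Sum.inr i) (Sum.inl j)) • gv m j = 0 := by
        simp only [show m + 1 - 1 - m = 0 from by omega, pow_zero]
        refine Finset.sum_eq_zero fun j _ => ?_
        rw [Matrix.one_apply_ne (by simp), zero_smul]
      rw [hyZ, Finset.sum_range_succ, hlast, add_zero]
      simp only [Nat.add_sub_cancel]
      calc ‖∑ r ∈ Finset.range m,
              ∑ j : Fin n, ((M ^ (m - r)) (Sum.inr i) (Sum.inl j)) • gv r j‖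
          ≤ ∑ r ∈ Finset.range m,
              ‖∑ j : Fin n, ((M ^ (m - r)) (Sum.inr i) (Sum.inl j)) • gv r j‖ :=
            norm_sum_le _ _
        _ ≤ ∑ r ∈ Finset.range m, Γ * γ ^ (m - r) * g r := by
            refine Finset.sum_le_sum fun r _ => ?_
            calc ‖∑ j : Fin n, ((M ^ (m - r)) (Sum.inr i) (Sum.inl j)) • gv r j‖
                ≤ ∑ j : Fin n, ‖((M ^ (m - r)) (Sum.inr i) (Sum.inl j)) • gv r j‖ :=
                  norm_sum_le _ _
              _ = ∑ j : Fin n, |(M ^ (m - r)) (Sum.inr i) (Sum.inl j)| * ‖gv r j‖ := by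
                  refine Finset.sum_congr rfl fun j _ => ?_
                  rw [norm_smul, Real.norm_eq_abs]
              _ ≤ ∑ j : Fin n, (Γ * γ ^ (m - r)) * ‖gv r j‖ :=
                  Finset.sum_le_sum fun j _ =>
                    mul_le_mul_of_nonneg_right (hentry (m - r) i j) (norm_nonneg _)
              _ = Γ * γ ^ (m - r) * g r := by rw [← Finset.mul_sum, hg]
  -- now the main estimate
  intro k
  have hsumy : ∑ i, ‖y k i‖ ≤ (n : ℝ) * ∑ r ∈ Finset.range (k - 1), Γ * γ ^ (k - 1 - r) * g r := by
    calc ∑ i, ‖y k i‖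
        ≤ ∑ _i : Fin n, ∑ r ∈ Finset.range (k - 1), Γ * γ ^ (k - 1 - r) * g r :=
          Finset.sum_le_sum fun i _ => hyb k i
      _ = (n : ℝ) * ∑ r ∈ Finset.range (k - 1), Γ * γ ^ (k - 1 - r) * g r := by
          rw [Finset.sum_const, Finset.card_univ, Fintype.card_fin, nsmul_eq_mul]
  have hgk : g k ≤ (n : ℝ) * B * α k + 2 * ε * ∑ i, ‖y k i‖ := by
    rw [hg]
    calc ∑ i, ‖gv k i‖
        ≤ ∑ i : Fin n, (B * α k + 2 * ε * ‖y k i‖) := Finset.sum_le_sum fun i _ => hper k i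
      _ = ∑ _i : Fin n, B * α k + ∑ i : Fin n, 2 * ε * ‖y k i‖ := Finset.sum_add_distrib
      _ = (n : ℝ) * B * α k + 2 * ε * ∑ i, ‖y k i‖ := by
          rw [Finset.sum_const, Finset.card_univ, Fintype.card_fin, nsmul_eq_mul,
            ← Finset.mul_sum]
          ring
  have hre : ∑ r ∈ Finset.Icc 1 (k - 1), γ ^ (k - r) * g (r - 1)
      = ∑ r ∈ Finset.range (k - 1), γ ^ (k - 1 - r) * g r := by
    cases k with
    | zero => simp
    | succ m =>
      rw [show (m + 1 : ℕ) - 1 = m from rfl, ← Finset.Ico_add_one_right_eq_Icc,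
        Finset.sum_Ico_eq_sum_range]
      refine Finset.sum_congr (by norm_num) fun i _ => ?_
      rw [show m + 1 - (1 + i) = m - i from by omega, show 1 + i - 1 = i from by omega]
  have hΓsum : ∑ r ∈ Finset.range (k - 1), Γ * γ ^ (k - 1 - r) * g r
      = Γ * ∑ r ∈ Finset.range (k - 1), γ ^ (k - 1 - r) * g r := by
    rw [Finset.mul_sum]; exact Finset.sum_congr rfl fun r _ => by ring
  rw [hre]
  set S := ∑ r ∈ Finset.range (k - 1), γ ^ (k - 1 - r) * g r with hS
  have h1 : 2 * ε * (∑ i, ‖y k i‖) ≤ 2 * ε * ((n : ℝ) * (Γ * S)) := by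
    apply mul_le_mul_of_nonneg_left _ (by linarith)
    calc ∑ i, ‖y k i‖ ≤ (n : ℝ) * ∑ r ∈ Finset.range (k - 1), Γ * γ ^ (k - 1 - r) * g r :=
        hsumy
      _ = (n : ℝ) * (Γ * S) := by rw [hΓsum]
  have h2 : 2 * ε * ((n : ℝ) * (Γ * S)) = 2 * (n : ℝ) * ε * Γ * S := by ring
  linarith [hgk]
end

section
/- Suppose in addition that ε < (1−γ)/(2nΓγ). Then there exists a constant D > 0 such that for every K ≥ 0, Σ_{k=0}^K α_k g_k ≤ D Σ_{k=0}^K α_k². -/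
open Finset Filter
open scoped RealInnerProductSpace

set_option maxHeartbeats 1000000 in
theorem ddps_weighted_perturbation_sum
    {n p : ℕ} (hn : 1 ≤ n) (hp : 1 ≤ p)
    (f : Fin n → EuclideanSpace ℝ (Fin p) → ℝ)
    (hconv : ∀ i, ConvexOn ℝ Set.univ (f i))
    (B : ℝ) (hB : 0 < B)
    (hsubB : ∀ (i : Fin n) (u s : EuclideanSpace ℝ (Fin p)),
      (∀ v, f i u + ⟪s, v - u⟫ ≤ f i v) → ‖s‖ ≤ B)
    (X : Set (EuclideanSpace ℝ (Fin p)))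
    (hXne : X.Nonempty) (hXcl : IsClosed X) (hXcv : Convex ℝ X)
    (hX0 : (0 : EuclideanSpace ℝ (Fin p)) ∈ X)
    (P : EuclideanSpace ℝ (Fin p) → EuclideanSpace ℝ (Fin p))
    (hPmem : ∀ v, P v ∈ X)
    (hPproj : ∀ v w, w ∈ X → ‖P v - v‖ ≤ ‖w - v‖)
    (A Bh : Matrix (Fin n) (Fin n) ℝ)
    (hAnn : ∀ i j, 0 ≤ A i j) (hArow : ∀ i, ∑ j, A i j = 1)
    (hBnn : ∀ i j, 0 ≤ Bh i j) (hBcol : ∀ j, ∑ i, Bh i j = 1)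
    (ε : ℝ) (hε : 0 < ε)
    (α : ℕ → ℝ) (hαnn : ∀ k, 0 ≤ α k) (hαdec : ∀ k, α (k + 1) ≤ α k)
    (x y d : ℕ → Fin n → EuclideanSpace ℝ (Fin p))
    (hx0 : ∀ i, x 0 i = 0) (hy0 : ∀ i, y 0 i = 0)
    (hd : ∀ k i v, f i (x k i) + ⟪d k i, v - x k i⟫ ≤ f i v)
    (hxupd : ∀ k i, x (k + 1) i = P (∑ j, A i j • x k j + ε • y k i - α k • d k i))
    (hyupd : ∀ k i, y (k + 1) i =
      x k i - ∑ j, A i j • x k j + (∑ j, Bh i j • y k j) - ε • y k i)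
    (gv : ℕ → Fin n → EuclideanSpace ℝ (Fin p))
    (hgv : ∀ k i, gv k i = x (k + 1) i - ∑ j, A i j • x k j - ε • y k i)
    (g : ℕ → ℝ) (hg : ∀ k, g k = ∑ i, ‖gv k i‖)
    (zbar : ℕ → EuclideanSpace ℝ (Fin p))
    (hzbar : ∀ k, zbar k = (n : ℝ)⁻¹ • (∑ i, x k i + ∑ i, y k i))
    (Γ γ : ℝ) (hΓ : 0 < Γ) (hγ0 : 0 < γ) (hγ1 : γ < 1)
    (hM : ∀ (k : ℕ) (i : Fin n ⊕ Fin n),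
      ∑ j, |((Matrix.fromBlocks A (ε • (1 : Matrix (Fin n) (Fin n) ℝ))
          ((1 : Matrix (Fin n) (Fin n) ℝ) - A) (Bh - ε • (1 : Matrix (Fin n) (Fin n) ℝ))) ^ k
        - Matrix.fromBlocks (Matrix.of fun _ _ => (n : ℝ)⁻¹)
            (Matrix.of fun _ _ => (n : ℝ)⁻¹) 0 0 :
          Matrix (Fin n ⊕ Fin n) (Fin n ⊕ Fin n) ℝ) i j| ≤ Γ * γ ^ k)
    (hεsmall : ε < (1 - γ) / (2 * n * Γ * γ))
    :
    ∃ D > 0, ∀ K : ℕ,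
      ∑ k ∈ Finset.range (K + 1), α k * g k ≤ D * ∑ k ∈ Finset.range (K + 1), (α k) ^ 2 := by
  have hdB : ∀ k i, ‖d k i‖ ≤ B := fun k i => hsubB i (x k i) (d k i) (hd k i)
  have hxX : ∀ k i, x k i ∈ X := by
    intro k
    induction k with
    | zero => intro i; rw [hx0]; exact hX0
    | succ k ih => intro i; rw [hxupd]; exact hPmem _
  have hwX : ∀ k i, (∑ j, A i j • x k j) ∈ X := fun k i =>
    hXcv.sum_mem (fun j _ => hAnn i j) (hArow i) (fun j _ => hxX k j)
  have hgnn : ∀ k, 0 ≤ g k := fun k => by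
    rw [hg]; exact Finset.sum_nonneg fun i _ => norm_nonneg _
  -- step 1 : perturbation bound
  have hgvb : ∀ k i, ‖gv k i‖ ≤ ε * ‖y k i‖ + 2 * B * α k := by
    intro k i
    set u := ∑ j, A i j • x k j + ε • y k i - α k • d k i with hu
    have h1 : gv k i = (P u - u) - (α k • d k i) := by
      rw [hgv, hxupd, hu]; abel
    have h2 : ‖P u - u‖ ≤ ‖α k • d k i - ε • y k i‖ := by
      have h := hPproj u (∑ j, A i j • x k j) (hwX k i)
      have he : (∑ j, A i j • x k j) - u = α k • d k i - ε • y k i := by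
        rw [hu]; abel
      rwa [he] at h
    have hαd : ‖α k • d k i‖ ≤ B * α k := by
      rw [norm_smul, Real.norm_eq_abs, abs_of_nonneg (hαnn k)]
      calc α k * ‖d k i‖ ≤ α k * B := mul_le_mul_of_nonneg_left (hdB k i) (hαnn k)
        _ = B * α k := mul_comm _ _
    calc ‖gv k i‖ ≤ ‖P u - u‖ + ‖α k • d k i‖ := by rw [h1]; exact norm_sub_le _ _
      _ ≤ ‖α k • d k i - ε • y k i‖ + ‖α k • d k i‖ := by linarith
      _ ≤ (‖α k • d k i‖ + ‖ε • y k i‖) + ‖α k • d k i‖ := by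
          have := norm_sub_le (α k • d k i) (ε • y k i); linarith
      _ ≤ (B * α k + ε * ‖y k i‖) + B * α k := by
          have : ‖ε • y k i‖ = ε * ‖y k i‖ := by
            rw [norm_smul, Real.norm_eq_abs, abs_of_pos hε]
          linarith
      _ = ε * ‖y k i‖ + 2 * B * α k := by ring
  -- step 2 : stacked linear system
  set M : Matrix (Fin n ⊕ Fin n) (Fin n ⊕ Fin n) ℝ :=
    Matrix.fromBlocks A (ε • 1) (1 - A) (Bh - ε • 1) with hMdef
  set z : ℕ → (Fin n ⊕ Fin n) → EuclideanSpace ℝ (Fin p) :=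
    fun k => Sum.elim (x k) (y k) with hzdef
  set G : ℕ → (Fin n ⊕ Fin n) → EuclideanSpace ℝ (Fin p) :=
    fun k => Sum.elim (gv k) 0 with hGdef
  have hstep : ∀ k j, z (k + 1) j = (∑ j', M j j' • z k j') + G k j := by
    intro k j
    rw [Fintype.sum_sum_type]
    cases j with
    | inl i =>
      have hx' : x (k + 1) i = ((∑ j, A i j • x k j) + ε • y k i) + gv k i := by
        rw [hgv]; abel
      simp only [hzdef, hGdef, hMdef, Sum.elim_inl, Sum.elim_inr,
        Matrix.fromBlocks_apply₁₁, Matrix.fromBlocks_apply₁₂,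
        Matrix.smul_apply, Matrix.one_apply, smul_eq_mul, mul_ite, mul_one, mul_zero,
        ite_smul, zero_smul, Finset.sum_ite_eq, Finset.mem_univ, if_true]
      exact hx'
    | inr i =>
      have hy' : y (k + 1) i =
          ((x k i - ∑ j, A i j • x k j) + ((∑ j, Bh i j • y k j) - ε • y k i)) + 0 := by
        rw [hyupd]; abel
      simp only [hzdef, hGdef, hMdef, Sum.elim_inl, Sum.elim_inr,
        Matrix.fromBlocks_apply₂₁, Matrix.fromBlocks_apply₂₂,
        Matrix.sub_apply, Matrix.smul_apply, Matrix.one_apply, smul_eq_mul,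
        mul_ite, mul_one, mul_zero, sub_smul, ite_smul, zero_smul, one_smul, Pi.zero_apply,
        Finset.sum_sub_distrib, Finset.sum_ite_eq, Finset.mem_univ, if_true]
      exact hy'
  have hsol : ∀ (K : ℕ) (j : Fin n ⊕ Fin n),
      z K j = ∑ s ∈ Finset.range K, ∑ j', ((M ^ (K - 1 - s)) j j') • G s j' := by
    intro K
    induction K with
    | zero =>
      intro j
      cases j with
      | inl i => simp [hzdef, hx0]
      | inr i => simp [hzdef, hy0]
    | succ K ih =>
      intro j
      rw [hstep K j, Finset.sum_range_succ]
      have hexp : ∀ s : ℕ, K + 1 - 1 - s = K - s := fun s => by omega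
      congr 1
      · calc ∑ j', M j j' • z K j'
            = ∑ j', ∑ s ∈ Finset.range K, ∑ j'',
                (M j j' * (M ^ (K - 1 - s)) j' j'') • G s j'' := by
              refine Finset.sum_congr rfl fun j' _ => ?_
              rw [ih j', Finset.smul_sum]
              refine Finset.sum_congr rfl fun s _ => ?_
              rw [Finset.smul_sum]
              refine Finset.sum_congr rfl fun j'' _ => ?_
              rw [smul_smul]
          _ = ∑ s ∈ Finset.range K, ∑ j'',
                (∑ j', M j j' * (M ^ (K - 1 - s)) j' j'') • G s j'' := by
              rw [Finset.sum_comm]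
              refine Finset.sum_congr rfl fun s _ => ?_
              rw [Finset.sum_comm]
              refine Finset.sum_congr rfl fun j'' _ => ?_
              rw [Finset.sum_smul]
          _ = ∑ s ∈ Finset.range K, ∑ j'', ((M ^ (K + 1 - 1 - s)) j j'') • G s j'' := by
              refine Finset.sum_congr rfl fun s hs => ?_
              refine Finset.sum_congr rfl fun j'' _ => ?_
              have hs' : s < K := Finset.mem_range.mp hs
              have : K + 1 - 1 - s = (K - 1 - s) + 1 := by omega
              rw [this, pow_succ', Matrix.mul_apply]
      · have h0 : K + 1 - 1 - K = 0 := by omega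
        rw [h0, pow_zero]
        simp [Matrix.one_apply, ite_smul]
  -- step 3 : geometric decay of y
  set W : Matrix (Fin n ⊕ Fin n) (Fin n ⊕ Fin n) ℝ :=
    Matrix.fromBlocks (Matrix.of fun _ _ => (n : ℝ)⁻¹)
      (Matrix.of fun _ _ => (n : ℝ)⁻¹) 0 0 with hWdef
  have hMentry : ∀ (m : ℕ) (i j : Fin n), |(M ^ m) (Sum.inr i) (Sum.inl j)| ≤ Γ * γ ^ m := by
    intro m i j
    have h := hM m (Sum.inr i)
    have h0 : W (Sum.inr i) (Sum.inl j) = 0 := by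
      rw [hWdef]; simp [Matrix.fromBlocks_apply₂₁]
    calc |(M ^ m) (Sum.inr i) (Sum.inl j)|
        = |(M ^ m - W) (Sum.inr i) (Sum.inl j)| := by
          rw [Matrix.sub_apply, h0, sub_zero]
      _ ≤ ∑ j', |(M ^ m - W) (Sum.inr i) j'| :=
          Finset.single_le_sum (f := fun j' => |(M ^ m - W) (Sum.inr i) j'|)
            (fun _ _ => abs_nonneg _) (Finset.mem_univ _)
      _ ≤ Γ * γ ^ m := h
  have hyb : ∀ (K : ℕ) (i : Fin n),
      ‖y K i‖ ≤ ∑ s ∈ Finset.range (K - 1), Γ * γ ^ (K - 1 - s) * g s := by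
    intro K i
    cases K with
    | zero => simp [hy0]
    | succ K =>
      have hy' : y (K + 1) i = z (K + 1) (Sum.inr i) := rfl
      rw [hy', hsol]
      simp only [Nat.add_sub_cancel]
      rw [Finset.sum_range_succ]
      have hlast : ∑ j', ((M ^ (K - K)) (Sum.inr i) j') • G K j' = 0 := by
        apply Finset.sum_eq_zero
        intro j' _
        cases j' with
        | inl j =>
          rw [Nat.sub_self, pow_zero, Matrix.one_apply_ne (by simp), zero_smul]
        | inr j => simp [hGdef]
      rw [hlast, add_zero]
      refine (norm_sum_le _ _).trans ?_
      apply Finset.sum_le_sum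
      intro s hs
      refine (norm_sum_le _ _).trans ?_
      rw [Fintype.sum_sum_type]
      have h2 : ∑ j, ‖((M ^ (K - s)) (Sum.inr i) (Sum.inr j)) • G s (Sum.inr j)‖ = 0 := by
        apply Finset.sum_eq_zero
        intro j _
        simp [hGdef]
      rw [h2, add_zero]
      rw [hg, Finset.mul_sum]
      apply Finset.sum_le_sum
      intro j _
      have hGs : G s (Sum.inl j) = gv s j := rfl
      rw [hGs, norm_smul, Real.norm_eq_abs]
      exact mul_le_mul_of_nonneg_right (hMentry _ _ _) (norm_nonneg _)
  -- step 4 : recursion for g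
  have hgb : ∀ K, g K ≤ 2 * n * B * α K
      + ε * n * ∑ s ∈ Finset.range (K - 1), Γ * γ ^ (K - 1 - s) * g s := by
    intro K
    rw [hg]
    calc ∑ i, ‖gv K i‖ ≤ ∑ i : Fin n, (ε * ‖y K i‖ + 2 * B * α K) :=
          Finset.sum_le_sum fun i _ => hgvb K i
      _ ≤ ∑ i : Fin n, (ε * (∑ s ∈ Finset.range (K - 1), Γ * γ ^ (K - 1 - s) * g s)
            + 2 * B * α K) := by
          apply Finset.sum_le_sum
          intro i _
          have := hyb K i
          nlinarith [hε.le]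
      _ = n * (ε * (∑ s ∈ Finset.range (K - 1), Γ * γ ^ (K - 1 - s) * g s) + 2 * B * α K) := by
          rw [Finset.sum_const, Finset.card_univ, Fintype.card_fin, nsmul_eq_mul]
      _ = 2 * n * B * α K
          + ε * n * ∑ s ∈ Finset.range (K - 1), Γ * γ ^ (K - 1 - s) * g s := by ring
  -- step 5 : weighted summation
  have hαmono : ∀ a b : ℕ, a ≤ b → α b ≤ α a := fun a b h =>
    antitone_nat_of_succ_le hαdec h
  have h1γ : 0 < 1 - γ := by linarith
  have hgeo : ∀ N : ℕ, ∑ i ∈ Finset.range N, γ ^ i ≤ 1 / (1 - γ) := by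
    intro N
    have h := geom_sum_mul γ N
    have hγN : 0 ≤ γ ^ N := pow_nonneg hγ0.le N
    rw [le_div_iff₀ h1γ]
    nlinarith [h]
  have hnpos : (0 : ℝ) < n := by exact_mod_cast hn
  have hD : (0 : ℝ) < 4 * n * B := by nlinarith
  refine ⟨4 * n * B, hD, ?_⟩
  intro K
  set S := ∑ k ∈ Finset.range (K + 1), α k * g k with hS
  set T := ∑ k ∈ Finset.range (K + 1), (α k) ^ 2 with hT
  have hSnn : 0 ≤ S := Finset.sum_nonneg fun k _ => mul_nonneg (hαnn k) (hgnn k)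
  have hfil : ∀ s : ℕ,
      ∑ k ∈ Finset.range (K + 1), (if s + 2 ≤ k then γ ^ (k - 1 - s) else 0)
      ≤ γ * (1 / (1 - γ)) := by
    intro s
    rw [← Finset.sum_filter]
    have hf : Finset.filter (fun k => s + 2 ≤ k) (Finset.range (K + 1))
        = Finset.Ico (s + 2) (K + 1) := by
      ext k
      simp only [Finset.mem_filter, Finset.mem_range, Finset.mem_Ico]
      omega
    rw [hf, Finset.sum_Ico_eq_sum_range]
    have hc : ∀ i ∈ Finset.range (K + 1 - (s + 2)), γ ^ (s + 2 + i - 1 - s) = γ * γ ^ i := by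
      intro i _
      rw [show s + 2 + i - 1 - s = i + 1 by omega, pow_succ']
    rw [Finset.sum_congr rfl hc, ← Finset.mul_sum]
    exact mul_le_mul_of_nonneg_left (hgeo _) hγ0.le
  have hQ : ∑ k ∈ Finset.range (K + 1),
        α k * (∑ s ∈ Finset.range (k - 1), Γ * γ ^ (k - 1 - s) * g s)
      ≤ Γ * (γ * (1 / (1 - γ))) * S := by
    have hrw : ∀ k ∈ Finset.range (K + 1),
        α k * (∑ s ∈ Finset.range (k - 1), Γ * γ ^ (k - 1 - s) * g s)
        = ∑ s ∈ Finset.range (K + 1),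
            (if s + 2 ≤ k then α k * (Γ * γ ^ (k - 1 - s) * g s) else 0) := by
      intro k hk
      have hk' : k < K + 1 := Finset.mem_range.mp hk
      rw [← Finset.sum_filter]
      have hf : Finset.filter (fun s => s + 2 ≤ k) (Finset.range (K + 1))
          = Finset.range (k - 1) := by
        ext s
        simp only [Finset.mem_filter, Finset.mem_range]
        omega
      rw [hf, Finset.mul_sum]
    rw [Finset.sum_congr rfl hrw, Finset.sum_comm]
    calc ∑ s ∈ Finset.range (K + 1), ∑ k ∈ Finset.range (K + 1),
            (if s + 2 ≤ k then α k * (Γ * γ ^ (k - 1 - s) * g s) else 0)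
        ≤ ∑ s ∈ Finset.range (K + 1), (Γ * α s * g s)
            * ∑ k ∈ Finset.range (K + 1), (if s + 2 ≤ k then γ ^ (k - 1 - s) else 0) := by
          apply Finset.sum_le_sum
          intro s _
          rw [Finset.mul_sum]
          apply Finset.sum_le_sum
          intro k _
          by_cases h : s + 2 ≤ k
          · simp only [h, if_true]
            have hαk : α k ≤ α s := hαmono s k (by omega)
            have hC : 0 ≤ Γ * γ ^ (k - 1 - s) * g s :=
              mul_nonneg (mul_nonneg hΓ.le (pow_nonneg hγ0.le _)) (hgnn s)
            calc α k * (Γ * γ ^ (k - 1 - s) * g s)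
                ≤ α s * (Γ * γ ^ (k - 1 - s) * g s) :=
                  mul_le_mul_of_nonneg_right hαk hC
              _ = Γ * α s * g s * γ ^ (k - 1 - s) := by ring
          · simp [h]
        _ ≤ ∑ s ∈ Finset.range (K + 1), (Γ * α s * g s) * (γ * (1 / (1 - γ))) := by
          apply Finset.sum_le_sum
          intro s _
          apply mul_le_mul_of_nonneg_left (hfil s)
          exact mul_nonneg (mul_nonneg hΓ.le (hαnn s)) (hgnn s)
        _ = Γ * (γ * (1 / (1 - γ))) * S := by
          rw [hS, Finset.mul_sum]
          apply Finset.sum_congr rfl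
          intro s _
          ring
  have hSb : S ≤ 2 * n * B * T + ε * n * (Γ * (γ * (1 / (1 - γ))) * S) := by
    have hεn : (0 : ℝ) ≤ ε * n := mul_nonneg hε.le hnpos.le
    have h1 : ∀ k ∈ Finset.range (K + 1), α k * g k ≤
        2 * ↑n * B * α k ^ 2
        + ε * ↑n * (α k * ∑ s ∈ Finset.range (k - 1), Γ * γ ^ (k - 1 - s) * g s) := by
      intro k _
      have h := mul_le_mul_of_nonneg_left (hgb k) (hαnn k)
      calc α k * g k
          ≤ α k * (2 * ↑n * B * α k
              + ε * ↑n * ∑ s ∈ Finset.range (k - 1), Γ * γ ^ (k - 1 - s) * g s) := h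
        _ = 2 * ↑n * B * α k ^ 2
            + ε * ↑n * (α k * ∑ s ∈ Finset.range (k - 1), Γ * γ ^ (k - 1 - s) * g s) := by
            ring
    have h2 : S ≤ ∑ k ∈ Finset.range (K + 1),
        (2 * ↑n * B * α k ^ 2
          + ε * ↑n * (α k * ∑ s ∈ Finset.range (k - 1), Γ * γ ^ (k - 1 - s) * g s)) := by
      rw [hS]
      exact Finset.sum_le_sum h1
    rw [Finset.sum_add_distrib, ← Finset.mul_sum, ← Finset.mul_sum] at h2
    have h3 : ε * ↑n * (∑ k ∈ Finset.range (K + 1),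
          α k * ∑ s ∈ Finset.range (k - 1), Γ * γ ^ (k - 1 - s) * g s)
        ≤ ε * ↑n * (Γ * (γ * (1 / (1 - γ))) * S) := mul_le_mul_of_nonneg_left hQ hεn
    rw [hT]
    linarith [h2, h3]
  have hchalf : ε * n * (Γ * (γ * (1 / (1 - γ)))) ≤ 1 / 2 := by
    have h2nΓγ : 0 < 2 * (n : ℝ) * Γ * γ := by positivity
    have h := (lt_div_iff₀ h2nΓγ).mp hεsmall
    have he : ε * ↑n * (Γ * (γ * (1 / (1 - γ)))) = (ε * ↑n * Γ * γ) / (1 - γ) := by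
      ring
    rw [he, div_le_iff₀ h1γ]
    nlinarith [h]
  have : ε * n * (Γ * (γ * (1 / (1 - γ))) * S) ≤ (1 / 2) * S := by
    have := mul_le_mul_of_nonneg_right hchalf hSnn
    nlinarith
  have hTnn : 0 ≤ T := Finset.sum_nonneg fun k _ => sq_nonneg _
  calc S ≤ 2 * n * B * T + ε * n * (Γ * (γ * (1 / (1 - γ))) * S) := hSb
    _ ≤ 2 * n * B * T + (1 / 2) * S := by linarith
    _ ≤ 4 * n * B * T := by linarith
end

section
/- Suppose in addition that ε < (1−γ)/(2nΓγ). Then there exists a constant C > 0 such that for every K ≥ 0, Σ_{k=0}^K g_k² ≤ C Σ_{k=0}^K α_k². -/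
open Finset Filter
open scoped RealInnerProductSpace

section auxmv
variable {m : Type*} [Fintype m] {E : Type*} [AddCommMonoid E] [Module ℝ E]

noncomputable def mvE (M : Matrix m m ℝ) (v : m → E) : m → E := fun i => ∑ j, M i j • v j

lemma mvE_one [DecidableEq m] (v : m → E) : mvE (1 : Matrix m m ℝ) v = v := by
  funext i
  simp [mvE, Matrix.one_apply, ite_smul, Finset.sum_ite_eq]

lemma mvE_mul (M N : Matrix m m ℝ) (v : m → E) : mvE (M * N) v = mvE M (mvE N v) := by
  funext i
  simp only [mvE, Matrix.mul_apply, Finset.sum_smul, Finset.smul_sum, mul_smul]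
  exact Finset.sum_comm

lemma mvE_sum {ι : Type*} (t : Finset ι) (M : Matrix m m ℝ) (F : ι → m → E) :
    mvE M (fun j => ∑ s ∈ t, F s j) = fun i => ∑ s ∈ t, mvE M (F s) i := by
  funext i
  simp only [mvE, Finset.smul_sum]
  exact Finset.sum_comm

end auxmv

lemma geom_tail_le (γ : ℝ) (h0 : 0 ≤ γ) (h1 : γ < 1) (mm : ℕ) :
    ∑ t ∈ Finset.range mm, γ ^ (t + 1) ≤ γ / (1 - γ) := by
  have h2 : 0 < 1 - γ := by linarith
  have hgm := geom_sum_mul γ mm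
  have hgs : (∑ t ∈ Finset.range mm, γ ^ t) * (1 - γ) ≤ 1 := by
    nlinarith [pow_nonneg h0 mm]
  have hgs2 : (∑ t ∈ Finset.range mm, γ ^ t) ≤ 1 / (1 - γ) := by
    rw [le_div_iff₀ h2]; exact hgs
  calc ∑ t ∈ Finset.range mm, γ ^ (t + 1) = γ * ∑ t ∈ Finset.range mm, γ ^ t := by
        rw [Finset.mul_sum]; exact Finset.sum_congr rfl fun t _ => by ring
    _ ≤ γ * (1 / (1 - γ)) := mul_le_mul_of_nonneg_left hgs2 h0
    _ = γ / (1 - γ) := by ring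

lemma geom_reflect_le (γ : ℝ) (h0 : 0 ≤ γ) (h1 : γ < 1) (mm : ℕ) :
    ∑ s ∈ Finset.range mm, γ ^ (mm - s) ≤ γ / (1 - γ) := by
  have h : ∑ s ∈ Finset.range mm, γ ^ (mm - s)
      = ∑ s ∈ Finset.range mm, γ ^ (s + 1) := by
    rw [← Finset.sum_range_reflect (fun t => γ ^ (t + 1)) mm]
    refine Finset.sum_congr rfl fun s hs => ?_
    rw [Finset.mem_range] at hs
    congr 1
    omega
  rw [h]; exact geom_tail_le γ h0 h1 mm

lemma swap_bound (γ : ℝ) (h0 : 0 ≤ γ) (h1 : γ < 1) (h : ℕ → ℝ) (hh : ∀ s, 0 ≤ h s) (N : ℕ) :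
    ∑ k ∈ Finset.range N, ∑ s ∈ Finset.range (k - 1), γ ^ (k - 1 - s) * h s
      ≤ (γ / (1 - γ)) * ∑ s ∈ Finset.range N, h s := by
  have step1 : ∀ k ∈ Finset.range N,
      ∑ s ∈ Finset.range (k - 1), γ ^ (k - 1 - s) * h s
        = ∑ s ∈ Finset.range N, if s < k - 1 then γ ^ (k - 1 - s) * h s else 0 := by
    intro k hk
    rw [Finset.mem_range] at hk
    rw [Finset.sum_ite, Finset.sum_const_zero, add_zero]
    apply Finset.sum_congr
    · ext s; simp only [Finset.mem_filter, Finset.mem_range]; omega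
    · intros; rfl
  rw [Finset.sum_congr rfl step1, Finset.sum_comm]
  have step2 : ∀ s ∈ Finset.range N,
      (∑ k ∈ Finset.range N, if s < k - 1 then γ ^ (k - 1 - s) * h s else 0)
        ≤ (γ / (1 - γ)) * h s := by
    intro s hs
    have e1 : (∑ k ∈ Finset.range N, if s < k - 1 then γ ^ (k - 1 - s) * h s else 0)
        = (∑ k ∈ Finset.range N, if s < k - 1 then γ ^ (k - 1 - s) else 0) * h s := by
      rw [Finset.sum_mul]
      exact Finset.sum_congr rfl fun k _ => by split <;> simp
    rw [e1]
    have e2 : (∑ k ∈ Finset.range N, if s < k - 1 then γ ^ (k - 1 - s) else 0)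
        = ∑ k ∈ Finset.Ico (s + 2) N, γ ^ (k - 1 - s) := by
      rw [Finset.sum_ite, Finset.sum_const_zero, add_zero]
      apply Finset.sum_congr
      · ext k; simp only [Finset.mem_filter, Finset.mem_range, Finset.mem_Ico]; omega
      · intros; rfl
    have e3 : ∑ k ∈ Finset.Ico (s + 2) N, γ ^ (k - 1 - s) ≤ γ / (1 - γ) := by
      rw [Finset.sum_Ico_eq_sum_range]
      calc ∑ t ∈ Finset.range (N - (s + 2)), γ ^ (s + 2 + t - 1 - s)
          = ∑ t ∈ Finset.range (N - (s + 2)), γ ^ (t + 1) :=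
            Finset.sum_congr rfl fun t _ => by congr 1; omega
        _ ≤ γ / (1 - γ) := geom_tail_le γ h0 h1 _
    rw [e2]
    exact mul_le_mul_of_nonneg_right e3 (hh s)
  refine (Finset.sum_le_sum step2).trans ?_
  rw [Finset.mul_sum]

lemma proj_pert {E : Type*} [SeminormedAddCommGroup E] (P : E → E) (X : Set E)
    (hPproj : ∀ v w, w ∈ X → ‖P v - v‖ ≤ ‖w - v‖) (S z dd : E) (hS : S ∈ X) :
    ‖P (S + z - dd) - (S + z)‖ ≤ ‖z‖ + 2 * ‖dd‖ := by
  have h3 : ‖P (S + z - dd) - (S + z)‖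
      ≤ ‖P (S + z - dd) - (S + z - dd)‖ + ‖(S + z - dd) - (S + z)‖ := by
    have := norm_add_le (P (S + z - dd) - (S + z - dd)) ((S + z - dd) - (S + z))
    rw [sub_add_sub_cancel] at this
    exact this
  have h1 := hPproj (S + z - dd) S hS
  have h2 : S - (S + z - dd) = dd - z := by abel
  rw [h2] at h1
  have h4 : (S + z - dd) - (S + z) = -dd := by abel
  rw [h4, norm_neg] at h3
  have h5 : ‖dd - z‖ ≤ ‖dd‖ + ‖z‖ := norm_sub_le _ _
  linarith

lemma sq_rec_bound (gk aa cc SS qq SS2 : ℝ) (hgk : 0 ≤ gk) (h1 : gk ≤ aa + cc * SS)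
    (ha : 0 ≤ aa) (hc : 0 ≤ cc) (hS : 0 ≤ SS) (h2 : SS ^ 2 ≤ qq * SS2) :
    gk ^ 2 ≤ 2 * aa ^ 2 + 2 * cc ^ 2 * qq * SS2 := by
  have hmul : gk * gk ≤ (aa + cc * SS) * (aa + cc * SS) :=
    mul_le_mul h1 h1 hgk (add_nonneg ha (mul_nonneg hc hS))
  nlinarith [sq_nonneg (aa - cc * SS), mul_le_mul_of_nonneg_left h2 (sq_nonneg cc)]

set_option maxHeartbeats 1000000 in
theorem ddps_perturbation_square_sum
    {n p : ℕ} (hn : 1 ≤ n) (hp : 1 ≤ p)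
    (f : Fin n → EuclideanSpace ℝ (Fin p) → ℝ)
    (hconv : ∀ i, ConvexOn ℝ Set.univ (f i))
    (B : ℝ) (hB : 0 < B)
    (hsubB : ∀ (i : Fin n) (u s : EuclideanSpace ℝ (Fin p)),
      (∀ v, f i u + ⟪s, v - u⟫ ≤ f i v) → ‖s‖ ≤ B)
    (X : Set (EuclideanSpace ℝ (Fin p)))
    (hXne : X.Nonempty) (hXcl : IsClosed X) (hXcv : Convex ℝ X)
    (hX0 : (0 : EuclideanSpace ℝ (Fin p)) ∈ X)
    (P : EuclideanSpace ℝ (Fin p) → EuclideanSpace ℝ (Fin p))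
    (hPmem : ∀ v, P v ∈ X)
    (hPproj : ∀ v w, w ∈ X → ‖P v - v‖ ≤ ‖w - v‖)
    (A Bh : Matrix (Fin n) (Fin n) ℝ)
    (hAnn : ∀ i j, 0 ≤ A i j) (hArow : ∀ i, ∑ j, A i j = 1)
    (hBnn : ∀ i j, 0 ≤ Bh i j) (hBcol : ∀ j, ∑ i, Bh i j = 1)
    (ε : ℝ) (hε : 0 < ε)
    (α : ℕ → ℝ) (hαnn : ∀ k, 0 ≤ α k) (hαdec : ∀ k, α (k + 1) ≤ α k)
    (x y d : ℕ → Fin n → EuclideanSpace ℝ (Fin p))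
    (hx0 : ∀ i, x 0 i = 0) (hy0 : ∀ i, y 0 i = 0)
    (hd : ∀ k i v, f i (x k i) + ⟪d k i, v - x k i⟫ ≤ f i v)
    (hxupd : ∀ k i, x (k + 1) i = P (∑ j, A i j • x k j + ε • y k i - α k • d k i))
    (hyupd : ∀ k i, y (k + 1) i =
      x k i - ∑ j, A i j • x k j + (∑ j, Bh i j • y k j) - ε • y k i)
    (gv : ℕ → Fin n → EuclideanSpace ℝ (Fin p))
    (hgv : ∀ k i, gv k i = x (k + 1) i - ∑ j, A i j • x k j - ε • y k i)
    (g : ℕ → ℝ) (hg : ∀ k, g k = ∑ i, ‖gv k i‖)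
    (zbar : ℕ → EuclideanSpace ℝ (Fin p))
    (hzbar : ∀ k, zbar k = (n : ℝ)⁻¹ • (∑ i, x k i + ∑ i, y k i))
    (Γ γ : ℝ) (hΓ : 0 < Γ) (hγ0 : 0 < γ) (hγ1 : γ < 1)
    (hM : ∀ (k : ℕ) (i : Fin n ⊕ Fin n),
      ∑ j, |((Matrix.fromBlocks A (ε • (1 : Matrix (Fin n) (Fin n) ℝ))
          ((1 : Matrix (Fin n) (Fin n) ℝ) - A) (Bh - ε • (1 : Matrix (Fin n) (Fin n) ℝ))) ^ k
        - Matrix.fromBlocks (Matrix.of fun _ _ => (n : ℝ)⁻¹)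
            (Matrix.of fun _ _ => (n : ℝ)⁻¹) 0 0 :
          Matrix (Fin n ⊕ Fin n) (Fin n ⊕ Fin n) ℝ) i j| ≤ Γ * γ ^ k)
    (hεsmall : ε < (1 - γ) / (2 * n * Γ * γ))
    :
    ∃ C > 0, ∀ K : ℕ,
      ∑ k ∈ Finset.range (K + 1), (g k) ^ 2 ≤ C * ∑ k ∈ Finset.range (K + 1), (α k) ^ 2 := by
  classical
  have hn' : (1 : ℝ) ≤ (n : ℝ) := by exact_mod_cast hn
  have hnpos : (0 : ℝ) < (n : ℝ) := by linarith
  have hγsub : (0 : ℝ) < 1 - γ := by linarith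
  set M : Matrix (Fin n ⊕ Fin n) (Fin n ⊕ Fin n) ℝ :=
    Matrix.fromBlocks A (ε • (1 : Matrix (Fin n) (Fin n) ℝ))
      ((1 : Matrix (Fin n) (Fin n) ℝ) - A) (Bh - ε • (1 : Matrix (Fin n) (Fin n) ℝ)) with hMdef
  set L : Matrix (Fin n ⊕ Fin n) (Fin n ⊕ Fin n) ℝ :=
    Matrix.fromBlocks (Matrix.of fun _ _ => (n : ℝ)⁻¹)
      (Matrix.of fun _ _ => (n : ℝ)⁻¹) 0 0 with hLdef
  set e : ℕ → (Fin n ⊕ Fin n) → EuclideanSpace ℝ (Fin p) :=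
    fun k => Sum.elim (gv k) (fun _ => 0) with hedef
  set w : ℕ → (Fin n ⊕ Fin n) → EuclideanSpace ℝ (Fin p) :=
    fun k => Sum.elim (x k) (y k) with hwdef
  -- subgradient bound
  have hdB : ∀ k i, ‖d k i‖ ≤ B := fun k i => hsubB i (x k i) (d k i) (hd k i)
  -- membership
  have hxX : ∀ k i, x k i ∈ X := by
    intro k
    induction k with
    | zero => intro i; rw [hx0]; exact hX0
    | succ k ih => intro i; rw [hxupd]; exact hPmem _
  have hgnn : ∀ k, 0 ≤ g k := by
    intro k; rw [hg]; exact Finset.sum_nonneg fun i _ => norm_nonneg _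
  -- Claim D : per-step bound on gv
  have hgvb : ∀ k i, ‖gv k i‖ ≤ ε * ‖y k i‖ + 2 * B * α k := by
    intro k i
    have hwX : (∑ j, A i j • x k j) ∈ X :=
      hXcv.sum_mem (fun j _ => hAnn i j) (hArow i) (fun j _ => hxX k j)
    have h1 : gv k i = P (∑ j, A i j • x k j + ε • y k i - α k • d k i)
        - (∑ j, A i j • x k j + ε • y k i) := by
      rw [hgv k i, hxupd k i, sub_sub]
    have key := proj_pert P X hPproj (∑ j, A i j • x k j) (ε • y k i) (α k • d k i) hwX
    rw [h1]
    refine key.trans ?_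
    rw [norm_smul, norm_smul, Real.norm_eq_abs, Real.norm_eq_abs,
      abs_of_nonneg hε.le, abs_of_nonneg (hαnn k)]
    have hdb := hdB k i
    have hα := hαnn k
    nlinarith
  -- Claim A : one-step linear dynamics
  have stepA : ∀ k j, w (k + 1) j = mvE M (w k) j + e k j := by
    intro k j
    cases j with
    | inl i =>
      have hx1 : mvE M (w k) (Sum.inl i) = (∑ j, A i j • x k j) + ε • y k i := by
        simp only [mvE, hMdef, hwdef, Fintype.sum_sum_type, Sum.elim_inl, Sum.elim_inr,
          Matrix.fromBlocks_apply₁₁, Matrix.fromBlocks_apply₁₂, Matrix.smul_apply,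
          Matrix.one_apply, smul_eq_mul, mul_ite, mul_one, mul_zero, ite_smul, zero_smul,
          Finset.sum_ite_eq, Finset.mem_univ, if_true]
      rw [hx1]
      simp only [hwdef, hedef, Sum.elim_inl]
      rw [hgv k i]; abel
    | inr i =>
      have hx2 : mvE M (w k) (Sum.inr i)
          = (x k i - ∑ j, A i j • x k j) + ((∑ j, Bh i j • y k j) - ε • y k i) := by
        simp only [mvE, hMdef, hwdef, Fintype.sum_sum_type, Sum.elim_inl, Sum.elim_inr,
          Matrix.fromBlocks_apply₂₁, Matrix.fromBlocks_apply₂₂, Matrix.sub_apply,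
          Matrix.smul_apply, Matrix.one_apply, smul_eq_mul, mul_ite, mul_one, mul_zero,
          sub_smul, ite_smul, zero_smul, one_smul, Finset.sum_sub_distrib,
          Finset.sum_ite_eq, Finset.mem_univ, if_true]
      rw [hx2]
      simp only [hwdef, hedef, Sum.elim_inr]
      rw [hyupd k i]; abel
  -- Claim B : representation
  have hwrep : ∀ k j, w k j = ∑ s ∈ Finset.range k, mvE (M ^ (k - 1 - s)) (e s) j := by
    intro k
    induction k with
    | zero =>
      intro j
      rw [Finset.range_zero, Finset.sum_empty]
      cases j with
      | inl i => simp only [hwdef, Sum.elim_inl]; exact hx0 i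
      | inr i => simp only [hwdef, Sum.elim_inr]; exact hy0 i
    | succ k ih =>
      intro j
      rw [stepA k j]
      have hwk : w k = fun j' => ∑ s ∈ Finset.range k, mvE (M ^ (k - 1 - s)) (e s) j' :=
        funext ih
      have h1 : mvE M (w k) j = ∑ s ∈ Finset.range k, mvE (M ^ (k - s)) (e s) j := by
        rw [hwk, mvE_sum]
        refine Finset.sum_congr rfl fun s hs => ?_
        rw [Finset.mem_range] at hs
        rw [← mvE_mul, ← pow_succ']
        have : k - 1 - s + 1 = k - s := by omega
        rw [this]
      have hns : ∀ s : ℕ, k + 1 - 1 - s = k - s := fun s => by omega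
      simp only [hns]
      rw [Finset.sum_range_succ, Nat.sub_self, pow_zero, mvE_one]
      rw [h1]
  -- Claim C : entry bound and y bound
  have hMentry : ∀ (t : ℕ) (i i' : Fin n), |(M ^ t) (Sum.inr i) (Sum.inl i')| ≤ Γ * γ ^ t := by
    intro t i i'
    have h := hM t (Sum.inr i)
    have h1 : |(M ^ t - L) (Sum.inr i) (Sum.inl i')| ≤ ∑ j, |(M ^ t - L) (Sum.inr i) j| :=
      Finset.single_le_sum (f := fun j => |(M ^ t - L) (Sum.inr i) j|)
        (fun j _ => abs_nonneg _) (Finset.mem_univ _)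
    have h2 : (M ^ t - L) (Sum.inr i) (Sum.inl i') = (M ^ t) (Sum.inr i) (Sum.inl i') := by
      simp [hLdef, Matrix.sub_apply, Matrix.fromBlocks_apply₂₁]
    rw [h2] at h1
    exact h1.trans h
  have hYb : ∀ k i, ‖y k i‖ ≤ ∑ s ∈ Finset.range (k - 1), Γ * γ ^ (k - 1 - s) * g s := by
    intro k i
    cases k with
    | zero => simp [hy0]
    | succ m =>
      have hy1 : y (m + 1) i = ∑ s ∈ Finset.range (m + 1),
          mvE (M ^ (m + 1 - 1 - s)) (e s) (Sum.inr i) := by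
        have h := hwrep (m + 1) (Sum.inr i)
        rw [hwdef] at h
        simpa using h
      simp only [Nat.add_sub_cancel] at hy1 ⊢
      rw [Finset.sum_range_succ] at hy1
      have hlast : mvE (M ^ (m - m)) (e m) (Sum.inr i) = 0 := by
        rw [Nat.sub_self, pow_zero, mvE_one, hedef]
        simp
      rw [hlast, add_zero] at hy1
      rw [hy1]
      refine (norm_sum_le _ _).trans ?_
      refine Finset.sum_le_sum ?_
      intro s hs
      have hb : ‖mvE (M ^ (m - s)) (e s) (Sum.inr i)‖
          ≤ ∑ j, |(M ^ (m - s)) (Sum.inr i) j| * ‖e s j‖ := by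
        refine (norm_sum_le _ _).trans ?_
        refine Finset.sum_le_sum fun j _ => ?_
        rw [norm_smul, Real.norm_eq_abs]
      refine hb.trans ?_
      rw [Fintype.sum_sum_type]
      have h2 : ∑ i' : Fin n, |(M ^ (m - s)) (Sum.inr i) (Sum.inr i')| * ‖e s (Sum.inr i')‖
          = 0 := by
        simp [hedef]
      rw [h2, add_zero]
      have h3 : ∀ i' : Fin n, |(M ^ (m - s)) (Sum.inr i) (Sum.inl i')| * ‖e s (Sum.inl i')‖
          ≤ Γ * γ ^ (m - s) * ‖gv s i'‖ := by
        intro i'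
        have : ‖e s (Sum.inl i')‖ = ‖gv s i'‖ := by rw [hedef]; simp
        rw [this]
        exact mul_le_mul_of_nonneg_right (hMentry (m - s) i i') (norm_nonneg _)
      refine (Finset.sum_le_sum fun i' _ => h3 i').trans ?_
      rw [hg, Finset.mul_sum]
  -- recurrence for g
  have hgrec : ∀ k, g k ≤ 2 * n * B * α k
      + (ε * n * Γ) * ∑ s ∈ Finset.range (k - 1), γ ^ (k - 1 - s) * g s := by
    intro k
    have h1 : g k ≤ ∑ i : Fin n, (ε * ‖y k i‖ + 2 * B * α k) := by
      rw [hg]; exact Finset.sum_le_sum fun i _ => hgvb k i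
    have h2 : ∀ i : Fin n, ε * ‖y k i‖ + 2 * B * α k
        ≤ ε * (∑ s ∈ Finset.range (k - 1), Γ * γ ^ (k - 1 - s) * g s) + 2 * B * α k := by
      intro i
      have h := hYb k i
      have := mul_le_mul_of_nonneg_left h hε.le
      linarith
    have h3 : g k ≤ ∑ i : Fin n,
        (ε * (∑ s ∈ Finset.range (k - 1), Γ * γ ^ (k - 1 - s) * g s) + 2 * B * α k) :=
      h1.trans (Finset.sum_le_sum fun i _ => h2 i)
    have h4 : (∑ _i : Fin n,
        (ε * (∑ s ∈ Finset.range (k - 1), Γ * γ ^ (k - 1 - s) * g s) + 2 * B * α k))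
        = (n : ℝ) * (ε * (∑ s ∈ Finset.range (k - 1), Γ * γ ^ (k - 1 - s) * g s)
            + 2 * B * α k) := by
      rw [Finset.sum_const, Finset.card_univ, Fintype.card_fin, nsmul_eq_mul]
    have h5 : ε * (∑ s ∈ Finset.range (k - 1), Γ * γ ^ (k - 1 - s) * g s)
        = (ε * Γ) * ∑ s ∈ Finset.range (k - 1), γ ^ (k - 1 - s) * g s := by
      rw [Finset.mul_sum, Finset.mul_sum]
      exact Finset.sum_congr rfl fun s _ => by ring
    rw [h4, h5] at h3
    have h6 : (n : ℝ) * ((ε * Γ) * (∑ s ∈ Finset.range (k - 1), γ ^ (k - 1 - s) * g s)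
        + 2 * B * α k)
        = 2 * n * B * α k
          + (ε * n * Γ) * ∑ s ∈ Finset.range (k - 1), γ ^ (k - 1 - s) * g s := by ring
    linarith [h3, h6.le, h6.ge]
  have hSnn : ∀ k, 0 ≤ ∑ s ∈ Finset.range (k - 1), γ ^ (k - 1 - s) * g s :=
    fun k => Finset.sum_nonneg fun s _ => mul_nonneg (pow_nonneg hγ0.le _) (hgnn s)
  have hSq : ∀ k, (∑ s ∈ Finset.range (k - 1), γ ^ (k - 1 - s) * g s) ^ 2
      ≤ (γ / (1 - γ)) * ∑ s ∈ Finset.range (k - 1), γ ^ (k - 1 - s) * (g s) ^ 2 := by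
    intro k
    have hCS := Finset.sum_mul_sq_le_sq_mul_sq (Finset.range (k - 1))
      (fun s => Real.sqrt (γ ^ (k - 1 - s))) (fun s => Real.sqrt (γ ^ (k - 1 - s)) * g s)
    have e1 : ∑ s ∈ Finset.range (k - 1),
          Real.sqrt (γ ^ (k - 1 - s)) * (Real.sqrt (γ ^ (k - 1 - s)) * g s)
        = ∑ s ∈ Finset.range (k - 1), γ ^ (k - 1 - s) * g s :=
      Finset.sum_congr rfl fun s _ => by
        rw [← mul_assoc, Real.mul_self_sqrt (pow_nonneg hγ0.le _)]
    have e2 : ∑ s ∈ Finset.range (k - 1), (Real.sqrt (γ ^ (k - 1 - s))) ^ 2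
        = ∑ s ∈ Finset.range (k - 1), γ ^ (k - 1 - s) :=
      Finset.sum_congr rfl fun s _ => Real.sq_sqrt (pow_nonneg hγ0.le _)
    have e3 : ∑ s ∈ Finset.range (k - 1), (Real.sqrt (γ ^ (k - 1 - s)) * g s) ^ 2
        = ∑ s ∈ Finset.range (k - 1), γ ^ (k - 1 - s) * (g s) ^ 2 :=
      Finset.sum_congr rfl fun s _ => by
        rw [mul_pow, Real.sq_sqrt (pow_nonneg hγ0.le _)]
    rw [e1, e2, e3] at hCS
    refine hCS.trans ?_
    have h4 : ∑ s ∈ Finset.range (k - 1), γ ^ (k - 1 - s) ≤ γ / (1 - γ) :=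
      geom_reflect_le γ hγ0.le hγ1 (k - 1)
    have h5 : 0 ≤ ∑ s ∈ Finset.range (k - 1), γ ^ (k - 1 - s) * (g s) ^ 2 :=
      Finset.sum_nonneg fun s _ => mul_nonneg (pow_nonneg hγ0.le _) (sq_nonneg _)
    exact mul_le_mul_of_nonneg_right h4 h5
  -- constants
  set c : ℝ := ε * n * Γ with hcdef
  set q : ℝ := γ / (1 - γ) with hqdef
  have hcnn : 0 ≤ c := by rw [hcdef]; positivity
  have hqnn : 0 ≤ q := by rw [hqdef]; exact div_nonneg hγ0.le hγsub.le
  have hcγ : c * γ < (1 - γ) / 2 := by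
    have hdpos : (0 : ℝ) < 2 * n * Γ * γ := by positivity
    have h := (lt_div_iff₀ hdpos).mp hεsmall
    rw [hcdef]
    nlinarith
  have hcq : c * q < 1 / 2 := by
    rw [hqdef, ← mul_div_assoc, div_lt_iff₀ hγsub]
    linarith
  refine ⟨16 * (n : ℝ) ^ 2 * B ^ 2,
    mul_pos (mul_pos (by norm_num) (pow_pos hnpos 2)) (pow_pos hB 2), ?_⟩
  intro K
  set N := K + 1 with hNdef
  set T := ∑ k ∈ Finset.range N, (g k) ^ 2 with hTdef
  have hTnn : 0 ≤ T := Finset.sum_nonneg fun k _ => sq_nonneg _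
  have hT1 : T ≤ ∑ k ∈ Finset.range N, (2 * (2 * n * B * α k) ^ 2
      + 2 * c ^ 2 * q * ∑ s ∈ Finset.range (k - 1), γ ^ (k - 1 - s) * (g s) ^ 2) := by
    rw [hTdef]
    refine Finset.sum_le_sum fun k _ => ?_
    have h1 := hgrec k
    have h2 := hSq k
    have hS := hSnn k
    have ha : (0 : ℝ) ≤ 2 * n * B * α k :=
      mul_nonneg (by positivity) (hαnn k)
    exact sq_rec_bound (g k) (2 * n * B * α k) c
      (∑ s ∈ Finset.range (k - 1), γ ^ (k - 1 - s) * g s) q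
      (∑ s ∈ Finset.range (k - 1), γ ^ (k - 1 - s) * (g s) ^ 2)
      (hgnn k) h1 ha hcnn hS h2
  have hT2 : ∑ k ∈ Finset.range N, (2 * (2 * n * B * α k) ^ 2
      + 2 * c ^ 2 * q * ∑ s ∈ Finset.range (k - 1), γ ^ (k - 1 - s) * (g s) ^ 2)
      = 2 * ∑ k ∈ Finset.range N, (2 * n * B * α k) ^ 2
        + 2 * c ^ 2 * q * ∑ k ∈ Finset.range N,
            ∑ s ∈ Finset.range (k - 1), γ ^ (k - 1 - s) * (g s) ^ 2 := by
    rw [Finset.sum_add_distrib, Finset.mul_sum, Finset.mul_sum]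
  have hswap' : ∑ k ∈ Finset.range N,
        ∑ s ∈ Finset.range (k - 1), γ ^ (k - 1 - s) * (g s) ^ 2 ≤ q * T := by
    have h := swap_bound γ hγ0.le hγ1 (fun s => (g s) ^ 2) (fun s => sq_nonneg _) N
    rw [hqdef, hTdef]
    simpa using h
  have hT3 : 2 * c ^ 2 * q * ∑ k ∈ Finset.range N,
        ∑ s ∈ Finset.range (k - 1), γ ^ (k - 1 - s) * (g s) ^ 2
      ≤ 2 * c ^ 2 * q * (q * T) := by
    have hcoef : (0 : ℝ) ≤ 2 * c ^ 2 * q := by positivity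
    exact mul_le_mul_of_nonneg_left hswap' hcoef
  have hT4 : ∑ k ∈ Finset.range N, (2 * n * B * α k) ^ 2
      = 4 * n ^ 2 * B ^ 2 * ∑ k ∈ Finset.range N, (α k) ^ 2 := by
    rw [Finset.mul_sum]
    exact Finset.sum_congr rfl fun k _ => by ring
  have h2cq : 2 * c ^ 2 * q ^ 2 ≤ 1 / 2 := by nlinarith [mul_nonneg hcnn hqnn]
  have hT5 : 2 * c ^ 2 * q * (q * T) ≤ (1 / 2) * T := by
    have : 2 * c ^ 2 * q * (q * T) = (2 * c ^ 2 * q ^ 2) * T := by ring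
    rw [this]
    exact mul_le_mul_of_nonneg_right h2cq hTnn
  have hfin : T ≤ 2 * (4 * n ^ 2 * B ^ 2 * ∑ k ∈ Finset.range N, (α k) ^ 2) + (1 / 2) * T := by
    calc T ≤ _ := hT1
      _ = _ := hT2
      _ ≤ 2 * ∑ k ∈ Finset.range N, (2 * n * B * α k) ^ 2 + 2 * c ^ 2 * q * (q * T) := by
          linarith [hT3]
      _ ≤ 2 * (4 * n ^ 2 * B ^ 2 * ∑ k ∈ Finset.range N, (α k) ^ 2) + (1 / 2) * T := by
          rw [hT4]
          linarith [hT5]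
  linarith
end

section
/- Suppose in addition that ε < (1−γ)/(2nΓγ) and Σ_{k=0}^∞ α_k² < ∞. Then for every agent i ∈ {1,…,n}, lim_{k→∞} ‖x_i^k − z̄^k‖ = 0, i.e., the agents reach consensus with the accumulation state. -/
open Finset Filter

lemma ddps_geom {γ : ℝ} (hγ0 : 0 ≤ γ) (hγ1 : γ < 1) (m : ℕ) :
    ∑ s ∈ Finset.range m, γ ^ (m - 1 - s) ≤ (1 - γ)⁻¹ := by
  rw [Finset.sum_range_reflect (fun t => γ ^ t) m]
  exact (Summable.sum_le_tsum (Finset.range m) (fun i _ => pow_nonneg hγ0 i)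
    (summable_geometric_of_lt_one hγ0 hγ1)).trans_eq (tsum_geometric_of_lt_one hγ0 hγ1)

lemma ddps_wsum_le {γ : ℝ} (hγ0 : 0 ≤ γ) (hγ1 : γ < 1) {g : ℕ → ℝ} {H : ℝ}
    (hH : 0 ≤ H) {m : ℕ} (hgH : ∀ s < m, g s ≤ H) :
    ∑ s ∈ Finset.range m, γ ^ (m - 1 - s) * g s ≤ H * (1 - γ)⁻¹ := by
  calc ∑ s ∈ Finset.range m, γ ^ (m - 1 - s) * g s
      ≤ ∑ s ∈ Finset.range m, γ ^ (m - 1 - s) * H := by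
        refine Finset.sum_le_sum fun s hs => ?_
        exact mul_le_mul_of_nonneg_left (hgH s (Finset.mem_range.mp hs)) (pow_nonneg hγ0 _)
    _ = (∑ s ∈ Finset.range m, γ ^ (m - 1 - s)) * H := by rw [Finset.sum_mul]
    _ ≤ (1 - γ)⁻¹ * H := mul_le_mul_of_nonneg_right (ddps_geom hγ0 hγ1 m) hH
    _ = H * (1 - γ)⁻¹ := mul_comm _ _

lemma ddps_seq (γ c : ℝ) (hγ0 : 0 < γ) (hγ1 : γ < 1) (hc0 : 0 ≤ c) (hc : 2 * (c * γ) ≤ 1 - γ)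
    (g β : ℕ → ℝ) (hg0 : ∀ k, 0 ≤ g k) (hβ0 : ∀ k, 0 ≤ β k) (hβb : ∀ k, β k ≤ β 0)
    (hrec : ∀ k, g k ≤ c * ∑ s ∈ Finset.range (k - 1), γ ^ (k - 1 - s) * g s + β k)
    (hβ : Tendsto β atTop (nhds 0)) :
    Tendsto (fun k => ∑ s ∈ Finset.range k, γ ^ (k - 1 - s) * g s) atTop (nhds 0) := by
  have h1γ : 0 < 1 - γ := by linarith
  have hcγ : c * γ ≤ (1 - γ) / 2 := by linarith
  -- rewrite the recursion in terms of Sg (k-1)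
  have hrec' : ∀ k, g k ≤ c * γ * ∑ s ∈ Finset.range (k - 1), γ ^ (k - 1 - 1 - s) * g s + β k := by
    intro k
    have h2 : ∑ s ∈ Finset.range (k - 1), γ ^ (k - 1 - s) * g s
        = γ * ∑ s ∈ Finset.range (k - 1), γ ^ (k - 1 - 1 - s) * g s := by
      rw [Finset.mul_sum]
      refine Finset.sum_congr rfl fun s hs => ?_
      rw [Finset.mem_range] at hs
      have h3 : k - 1 - s = (k - 1 - 1 - s) + 1 := by omega
      rw [h3, pow_succ]; ring
    calc g k ≤ c * ∑ s ∈ Finset.range (k - 1), γ ^ (k - 1 - s) * g s + β k := hrec k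
      _ = c * γ * ∑ s ∈ Finset.range (k - 1), γ ^ (k - 1 - 1 - s) * g s + β k := by
          rw [h2]; ring_nf
  set K : ℝ := 2 * β 0 + 1 with hK
  have hK0 : 0 < K := by have := hβ0 0; simp only [hK]; linarith
  have hgK : ∀ k, g k ≤ K := by
    intro k
    induction k using Nat.strong_induction_on with
    | _ k ih =>
      have hS : ∑ s ∈ Finset.range (k - 1), γ ^ (k - 1 - 1 - s) * g s ≤ K * (1 - γ)⁻¹ :=
        ddps_wsum_le hγ0.le hγ1 hK0.le (fun s hs => ih s (by omega))
      have := hrec' k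
      have hβk := hβb k
      have hmul : c * γ * (∑ s ∈ Finset.range (k - 1), γ ^ (k - 1 - 1 - s) * g s)
          ≤ (1 - γ) / 2 * (K * (1 - γ)⁻¹) := by
        apply mul_le_mul hcγ hS
        · refine Finset.sum_nonneg fun s _ => mul_nonneg (pow_nonneg hγ0.le _) (hg0 s)
        · linarith
      have heq : (1 - γ) / 2 * (K * (1 - γ)⁻¹) = K / 2 := by
        field_simp
      have : g k ≤ K / 2 + β 0 := by rw [heq] at hmul; linarith
      simp only [hK] at this ⊢
      linarith [hβ0 0]
  -- main claim by induction on j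
  have main : ∀ (δ : ℝ), 0 < δ → ∀ j : ℕ, ∃ N : ℕ, ∀ k ≥ N,
      ∑ s ∈ Finset.range k, γ ^ (k - 1 - s) * g s ≤ (1/2) ^ j * (K * (1 - γ)⁻¹) + 4 * δ := by
    intro δ hδ j
    induction j with
    | zero =>
      exact ⟨0, fun k _ => by
        have := ddps_wsum_le hγ0.le hγ1 hK0.le (m := k) (fun s _ => hgK s)
        simp only [pow_zero, one_mul]
        linarith⟩
    | succ j ihj =>
      obtain ⟨N, hN⟩ := ihj
      -- β eventually small
      have hβev : ∃ N₁, ∀ k ≥ N₁, β k ≤ (1 - γ) * δ := by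
        have := (Metric.tendsto_atTop.mp hβ) ((1 - γ) * δ) (by positivity)
        obtain ⟨N₁, hN₁⟩ := this
        exact ⟨N₁, fun k hk => by
          have := hN₁ k hk
          rw [Real.dist_eq, sub_zero] at this
          exact (le_abs_self _).trans this.le⟩
      obtain ⟨N₁, hN₁⟩ := hβev
      set N₂ := max (N + 1) N₁ with hN₂def
      have hgsmall : ∀ k ≥ N₂, g k ≤ (1 - γ) * ((1/2)^(j+1) * (K * (1 - γ)⁻¹) + 3 * δ) := by
        intro k hk
        have hk1 : k - 1 ≥ N := by omega
        have h1 := hrec' k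
        have h2 := hN (k - 1) hk1
        have h3 := hN₁ k (le_trans (le_max_right _ _) hk)
        have hSnn : (0:ℝ) ≤ ∑ s ∈ Finset.range (k-1), γ ^ (k - 1 - 1 - s) * g s :=
          Finset.sum_nonneg fun s _ => mul_nonneg (pow_nonneg hγ0.le _) (hg0 s)
        have hmul : c * γ * (∑ s ∈ Finset.range (k - 1), γ ^ (k - 1 - 1 - s) * g s)
            ≤ (1 - γ) / 2 * ((1/2) ^ j * (K * (1 - γ)⁻¹) + 4 * δ) := by
          apply mul_le_mul hcγ h2 hSnn (by linarith)
        have : g k ≤ (1 - γ) / 2 * ((1/2) ^ j * (K * (1 - γ)⁻¹) + 4 * δ) + (1 - γ) * δ := by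
          linarith
        calc g k ≤ (1 - γ) / 2 * ((1/2) ^ j * (K * (1 - γ)⁻¹) + 4 * δ) + (1 - γ) * δ := this
          _ = (1 - γ) * ((1/2)^(j+1) * (K * (1 - γ)⁻¹) + 3 * δ) := by ring
      -- choose N₃ to kill the head
      have hpow : Tendsto (fun m : ℕ => K * N₂ * γ ^ m) atTop (nhds 0) := by
        have := tendsto_pow_atTop_nhds_zero_of_lt_one hγ0.le hγ1
        simpa using this.const_mul (K * N₂)
      obtain ⟨T, hT⟩ := (Metric.tendsto_atTop.mp hpow) δ hδ
      refine ⟨N₂ + T, fun k hk => ?_⟩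
      have hk2 : N₂ ≤ k := by omega
      -- split the sum
      have hsplit : ∑ s ∈ Finset.range k, γ ^ (k - 1 - s) * g s
          = ∑ s ∈ Finset.range N₂, γ ^ (k - 1 - s) * g s
            + ∑ s ∈ Finset.Ico N₂ k, γ ^ (k - 1 - s) * g s := by
        rw [Finset.range_eq_Ico, ← Finset.sum_Ico_consecutive _ (Nat.zero_le N₂) hk2,
          ← Finset.range_eq_Ico]
      have hhead : ∑ s ∈ Finset.range N₂, γ ^ (k - 1 - s) * g s ≤ δ := by
        have hterm : ∀ s ∈ Finset.range N₂, γ ^ (k - 1 - s) * g s ≤ γ ^ (k - N₂) * K := by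
          intro s hs
          rw [Finset.mem_range] at hs
          have hle : k - N₂ ≤ k - 1 - s := by omega
          have := pow_le_pow_of_le_one hγ0.le hγ1.le hle
          exact mul_le_mul this (hgK s) (hg0 s) (pow_nonneg hγ0.le _)
        calc ∑ s ∈ Finset.range N₂, γ ^ (k - 1 - s) * g s
            ≤ ∑ _s ∈ Finset.range N₂, γ ^ (k - N₂) * K := Finset.sum_le_sum hterm
          _ = N₂ * (γ ^ (k - N₂) * K) := by rw [Finset.sum_const, Finset.card_range, nsmul_eq_mul]
          _ = K * N₂ * γ ^ (k - N₂) := by ring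
          _ ≤ δ := by
              have := hT (k - N₂) (by omega)
              rw [Real.dist_eq, sub_zero] at this
              exact (le_abs_self _).trans this.le
      have htail : ∑ s ∈ Finset.Ico N₂ k, γ ^ (k - 1 - s) * g s
          ≤ (1/2)^(j+1) * (K * (1 - γ)⁻¹) + 3 * δ := by
        set H := (1 - γ) * ((1/2)^(j+1) * (K * (1 - γ)⁻¹) + 3 * δ) with hH
        have hH0 : 0 ≤ (1/2:ℝ)^(j+1) * (K * (1 - γ)⁻¹) + 3 * δ := by positivity
        calc ∑ s ∈ Finset.Ico N₂ k, γ ^ (k - 1 - s) * g s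
            ≤ ∑ s ∈ Finset.Ico N₂ k, γ ^ (k - 1 - s) * H := by
              refine Finset.sum_le_sum fun s hs => ?_
              rw [Finset.mem_Ico] at hs
              exact mul_le_mul_of_nonneg_left (hgsmall s hs.1) (pow_nonneg hγ0.le _)
          _ ≤ ∑ s ∈ Finset.range k, γ ^ (k - 1 - s) * H := by
              refine Finset.sum_le_sum_of_subset_of_nonneg ?_ ?_
              · rw [Finset.range_eq_Ico]; exact Finset.Ico_subset_Ico (Nat.zero_le _) le_rfl
              · intro s _ _
                exact mul_nonneg (pow_nonneg hγ0.le _) (by rw [hH]; positivity)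
          _ = (∑ s ∈ Finset.range k, γ ^ (k - 1 - s)) * H := by rw [Finset.sum_mul]
          _ ≤ (1 - γ)⁻¹ * H := mul_le_mul_of_nonneg_right (ddps_geom hγ0.le hγ1 k)
              (by rw [hH]; positivity)
          _ = (1/2)^(j+1) * (K * (1 - γ)⁻¹) + 3 * δ := by
              rw [hH]; field_simp
      rw [hsplit]
      have : ((1:ℝ)/2) ^ (j+1) * (K * (1-γ)⁻¹) + 3 * δ + δ = (1/2)^(j+1) * (K * (1-γ)⁻¹) + 4 * δ := by ring
      linarith
  -- conclude
  rw [Metric.tendsto_atTop]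
  intro e he
  have hD : (0:ℝ) < K * (1 - γ)⁻¹ := by positivity
  obtain ⟨j, hj⟩ := exists_pow_lt_of_lt_one (show (0:ℝ) < (e/2) / (K * (1-γ)⁻¹) by positivity)
    (by norm_num : (1:ℝ)/2 < 1)
  obtain ⟨N, hN⟩ := main (e/16) (by linarith) j
  refine ⟨N, fun k hk => ?_⟩
  have h1 := hN k hk
  have h2 : (1/2:ℝ)^j * (K * (1-γ)⁻¹) < e/2 := by
    have := mul_lt_mul_of_pos_right hj hD
    rwa [div_mul_cancel₀ _ (ne_of_gt hD)] at this
  have hSnn : (0:ℝ) ≤ ∑ s ∈ Finset.range k, γ ^ (k - 1 - s) * g s :=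
    Finset.sum_nonneg fun s _ => mul_nonneg (pow_nonneg hγ0.le _) (hg0 s)
  rw [Real.dist_eq, sub_zero, abs_of_nonneg hSnn]
  linarith

open scoped RealInnerProductSpace

theorem ddps_consensus
    {n p : ℕ} (hn : 1 ≤ n) (hp : 1 ≤ p)
    (f : Fin n → EuclideanSpace ℝ (Fin p) → ℝ)
    (hconv : ∀ i, ConvexOn ℝ Set.univ (f i))
    (B : ℝ) (hB : 0 < B)
    (hsubB : ∀ (i : Fin n) (u s : EuclideanSpace ℝ (Fin p)),
      (∀ v, f i u + ⟪s, v - u⟫ ≤ f i v) → ‖s‖ ≤ B)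
    (X : Set (EuclideanSpace ℝ (Fin p)))
    (hXne : X.Nonempty) (hXcl : IsClosed X) (hXcv : Convex ℝ X)
    (hX0 : (0 : EuclideanSpace ℝ (Fin p)) ∈ X)
    (P : EuclideanSpace ℝ (Fin p) → EuclideanSpace ℝ (Fin p))
    (hPmem : ∀ v, P v ∈ X)
    (hPproj : ∀ v w, w ∈ X → ‖P v - v‖ ≤ ‖w - v‖)
    (A Bh : Matrix (Fin n) (Fin n) ℝ)
    (hAnn : ∀ i j, 0 ≤ A i j) (hArow : ∀ i, ∑ j, A i j = 1)
    (hBnn : ∀ i j, 0 ≤ Bh i j) (hBcol : ∀ j, ∑ i, Bh i j = 1)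
    (ε : ℝ) (hε : 0 < ε)
    (α : ℕ → ℝ) (hαnn : ∀ k, 0 ≤ α k) (hαdec : ∀ k, α (k + 1) ≤ α k)
    (x y d : ℕ → Fin n → EuclideanSpace ℝ (Fin p))
    (hx0 : ∀ i, x 0 i = 0) (hy0 : ∀ i, y 0 i = 0)
    (hd : ∀ k i v, f i (x k i) + ⟪d k i, v - x k i⟫ ≤ f i v)
    (hxupd : ∀ k i, x (k + 1) i = P (∑ j, A i j • x k j + ε • y k i - α k • d k i))
    (hyupd : ∀ k i, y (k + 1) i =
      x k i - ∑ j, A i j • x k j + (∑ j, Bh i j • y k j) - ε • y k i)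
    (gv : ℕ → Fin n → EuclideanSpace ℝ (Fin p))
    (hgv : ∀ k i, gv k i = x (k + 1) i - ∑ j, A i j • x k j - ε • y k i)
    (g : ℕ → ℝ) (hg : ∀ k, g k = ∑ i, ‖gv k i‖)
    (zbar : ℕ → EuclideanSpace ℝ (Fin p))
    (hzbar : ∀ k, zbar k = (n : ℝ)⁻¹ • (∑ i, x k i + ∑ i, y k i))
    (Γ γ : ℝ) (hΓ : 0 < Γ) (hγ0 : 0 < γ) (hγ1 : γ < 1)
    (hM : ∀ (k : ℕ) (i : Fin n ⊕ Fin n),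
      ∑ j, |((Matrix.fromBlocks A (ε • (1 : Matrix (Fin n) (Fin n) ℝ))
          ((1 : Matrix (Fin n) (Fin n) ℝ) - A) (Bh - ε • (1 : Matrix (Fin n) (Fin n) ℝ))) ^ k
        - Matrix.fromBlocks (Matrix.of fun _ _ => (n : ℝ)⁻¹)
            (Matrix.of fun _ _ => (n : ℝ)⁻¹) 0 0 :
          Matrix (Fin n ⊕ Fin n) (Fin n ⊕ Fin n) ℝ) i j| ≤ Γ * γ ^ k)
    (hεsmall : ε < (1 - γ) / (2 * n * Γ * γ))
    (hα2 : Summable fun k => (α k) ^ 2)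
    :
    ∀ i : Fin n, Tendsto (fun k => ‖x k i - zbar k‖) atTop (nhds 0) := by
  intro i0
  set M : Matrix (Fin n ⊕ Fin n) (Fin n ⊕ Fin n) ℝ :=
    Matrix.fromBlocks A (ε • (1 : Matrix (Fin n) (Fin n) ℝ))
      ((1 : Matrix (Fin n) (Fin n) ℝ) - A) (Bh - ε • (1 : Matrix (Fin n) (Fin n) ℝ)) with hMdef
  set Minf : Matrix (Fin n ⊕ Fin n) (Fin n ⊕ Fin n) ℝ :=
    Matrix.fromBlocks (Matrix.of fun _ _ => (n : ℝ)⁻¹)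
      (Matrix.of fun _ _ => (n : ℝ)⁻¹) 0 0 with hMinfdef
  set V : ℕ → (Fin n ⊕ Fin n) → EuclideanSpace ℝ (Fin p) :=
    fun k => Sum.elim (x k) (y k) with hVdef
  set Ev : ℕ → (Fin n ⊕ Fin n) → EuclideanSpace ℝ (Fin p) :=
    fun k => Sum.elim (gv k) (fun _ => 0) with hEvdef
  have hgnn : ∀ s, 0 ≤ g s := fun s => by
    rw [hg]; exact Finset.sum_nonneg fun j _ => norm_nonneg _
  have hstep : ∀ k a, V (k+1) a = (∑ b, M a b • V k b) + Ev k a := by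
    intro k a
    rw [Fintype.sum_sum_type]
    cases a with
    | inl i =>
      have e1 : ∑ j, M (Sum.inl i) (Sum.inl j) • V k (Sum.inl j) = ∑ j, A i j • x k j := by
        simp [hMdef, hVdef]
      have e2 : ∑ j, M (Sum.inl i) (Sum.inr j) • V k (Sum.inr j) = ε • y k i := by
        simp [hMdef, hVdef, Matrix.smul_apply, Matrix.one_apply, mul_ite, ite_smul]
      rw [e1, e2, show V (k+1) (Sum.inl i) = x (k+1) i from rfl,
        show Ev k (Sum.inl i) = gv k i from rfl, hgv k i]
      abel
    | inr i =>
      have e1 : ∑ j, M (Sum.inr i) (Sum.inl j) • V k (Sum.inl j)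
          = x k i - ∑ j, A i j • x k j := by
        simp only [hMdef, Matrix.fromBlocks_apply₂₁, Matrix.sub_apply, Matrix.one_apply,
          sub_smul, ite_smul, one_smul, zero_smul]
        rw [Finset.sum_sub_distrib]
        simp [hVdef]
      have e2 : ∑ j, M (Sum.inr i) (Sum.inr j) • V k (Sum.inr j)
          = (∑ j, Bh i j • y k j) - ε • y k i := by
        simp only [hMdef, Matrix.fromBlocks_apply₂₂, Matrix.sub_apply, Matrix.smul_apply,
          Matrix.one_apply, sub_smul, mul_ite, mul_one, mul_zero, ite_smul, zero_smul, smul_smul]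
        rw [Finset.sum_sub_distrib]
        simp [hVdef, Finset.sum_ite_eq]
      rw [e1, e2, show V (k+1) (Sum.inr i) = y (k+1) i from rfl,
        show Ev k (Sum.inr i) = 0 from rfl, hyupd k i]
      abel
  have hswap : ∀ (Q : Matrix (Fin n ⊕ Fin n) (Fin n ⊕ Fin n) ℝ)
      (m : ℕ → Matrix (Fin n ⊕ Fin n) (Fin n ⊕ Fin n) ℝ) (k : ℕ) (a : Fin n ⊕ Fin n),
      ∑ b, Q a b • (∑ s ∈ Finset.range k, ∑ c, (m s) b c • Ev s c)
        = ∑ s ∈ Finset.range k, ∑ c, ((Q * m s) a c) • Ev s c := by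
    intro Q m k a
    calc ∑ b, Q a b • (∑ s ∈ Finset.range k, ∑ c, (m s) b c • Ev s c)
        = ∑ b, ∑ s ∈ Finset.range k, ∑ c, (Q a b * (m s) b c) • Ev s c := by
          simp_rw [Finset.smul_sum, smul_smul]
      _ = ∑ s ∈ Finset.range k, ∑ b, ∑ c, (Q a b * (m s) b c) • Ev s c := Finset.sum_comm
      _ = ∑ s ∈ Finset.range k, ∑ c, ∑ b, (Q a b * (m s) b c) • Ev s c :=
          Finset.sum_congr rfl fun s _ => Finset.sum_comm
      _ = ∑ s ∈ Finset.range k, ∑ c, (∑ b, Q a b * (m s) b c) • Ev s c := by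
          simp_rw [Finset.sum_smul]
      _ = ∑ s ∈ Finset.range k, ∑ c, ((Q * m s) a c) • Ev s c := by
          simp_rw [Matrix.mul_apply]
  have hunroll : ∀ k a, V k a = ∑ s ∈ Finset.range k, ∑ b, ((M ^ (k - 1 - s)) a b) • Ev s b := by
    intro k
    induction k with
    | zero => intro a; cases a <;> simp [hVdef, hx0, hy0]
    | succ k ih =>
      intro a
      rw [hstep k a]
      have h1 : ∑ b, M a b • V k b
          = ∑ s ∈ Finset.range k, ∑ c, ((M ^ (k - s)) a c) • Ev s c := by
        calc ∑ b, M a b • V k b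
            = ∑ b, M a b • (∑ s ∈ Finset.range k, ∑ c, ((M ^ (k-1-s)) b c) • Ev s c) :=
              Finset.sum_congr rfl fun b _ => by rw [ih b]
          _ = ∑ s ∈ Finset.range k, ∑ c, ((M * M ^ (k-1-s)) a c) • Ev s c := hswap M _ k a
          _ = ∑ s ∈ Finset.range k, ∑ c, ((M ^ (k-s)) a c) • Ev s c := by
              refine Finset.sum_congr rfl fun s hs => ?_
              rw [Finset.mem_range] at hs
              have he : k - s = (k - 1 - s) + 1 := by omega
              rw [he, pow_succ']
      rw [Finset.sum_range_succ]
      have h2 : ∀ s : ℕ, k + 1 - 1 - s = k - s := fun s => by omega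
      simp_rw [h2]
      rw [h1, Nat.sub_self, pow_zero]
      congr 1
      cases a <;> simp [Matrix.one_apply, ite_smul]
  have hMinfM : Minf * M = Minf := by
    ext a c
    rw [Matrix.mul_apply, Fintype.sum_sum_type]
    cases a with
    | inr i => cases c <;> simp [hMinfdef]
    | inl i =>
      rw [← Finset.sum_add_distrib]
      cases c with
      | inl j =>
        have hterm : ∀ l : Fin n, Minf (Sum.inl i) (Sum.inl l) * M (Sum.inl l) (Sum.inl j)
            + Minf (Sum.inl i) (Sum.inr l) * M (Sum.inr l) (Sum.inl j)
            = (n:ℝ)⁻¹ * (if l = j then (1:ℝ) else 0) := by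
          intro l
          simp only [hMinfdef, hMdef, Matrix.fromBlocks_apply₁₁, Matrix.fromBlocks_apply₁₂,
            Matrix.fromBlocks_apply₂₁, Matrix.of_apply, Matrix.sub_apply, Matrix.one_apply]
          ring
        rw [Finset.sum_congr rfl fun l _ => hterm l]
        simp [hMinfdef, mul_ite, Finset.sum_ite_eq']
      | inr j =>
        have hterm : ∀ l : Fin n, Minf (Sum.inl i) (Sum.inl l) * M (Sum.inl l) (Sum.inr j)
            + Minf (Sum.inl i) (Sum.inr l) * M (Sum.inr l) (Sum.inr j)
            = (n:ℝ)⁻¹ * Bh l j := by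
          intro l
          simp only [hMinfdef, hMdef, Matrix.fromBlocks_apply₁₁, Matrix.fromBlocks_apply₁₂,
            Matrix.fromBlocks_apply₂₂, Matrix.of_apply, Matrix.sub_apply, Matrix.smul_apply,
            Matrix.one_apply, smul_eq_mul]
          ring
        rw [Finset.sum_congr rfl fun l _ => hterm l, ← Finset.mul_sum, hBcol j, mul_one]
        simp [hMinfdef]
  have hMinfpow : ∀ m : ℕ, Minf * M ^ m = Minf := by
    intro m
    induction m with
    | zero => simp
    | succ m ih => rw [pow_succ, ← mul_assoc, ih, hMinfM]
  have hEnorm : ∀ s c, ‖Ev s c‖ ≤ g s := by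
    intro s c
    cases c with
    | inl j =>
      rw [hg]
      exact Finset.single_le_sum (fun j _ => norm_nonneg (gv s j)) (Finset.mem_univ j)
    | inr j => simpa [hEvdef] using hgnn s
  have hbnd : ∀ (s : ℕ) (w : (Fin n ⊕ Fin n) → ℝ) (R : ℝ), (∑ c, |w c|) ≤ R →
      ‖∑ c, w c • Ev s c‖ ≤ R * g s := by
    intro s w R hR
    calc ‖∑ c, w c • Ev s c‖ ≤ ∑ c, ‖w c • Ev s c‖ := norm_sum_le _ _
      _ = ∑ c, |w c| * ‖Ev s c‖ := by simp [norm_smul, Real.norm_eq_abs]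
      _ ≤ ∑ c, |w c| * g s := Finset.sum_le_sum fun c _ =>
          mul_le_mul_of_nonneg_left (hEnorm s c) (abs_nonneg _)
      _ = (∑ c, |w c|) * g s := by rw [Finset.sum_mul]
      _ ≤ R * g s := mul_le_mul_of_nonneg_right hR (hgnn s)
  have hxz : ∀ k, ‖x k i0 - zbar k‖ ≤ Γ * ∑ s ∈ Finset.range k, γ ^ (k - 1 - s) * g s := by
    intro k
    have hdiff : x k i0 - zbar k
        = ∑ s ∈ Finset.range k, ∑ c, (((M ^ (k-1-s)) - Minf) (Sum.inl i0) c) • Ev s c := by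
      have h1 : x k i0 = ∑ s ∈ Finset.range k, ∑ c, ((M ^ (k-1-s)) (Sum.inl i0) c) • Ev s c :=
        hunroll k (Sum.inl i0)
      have h3 : zbar k = ∑ b, Minf (Sum.inl i0) b • V k b := by
        rw [hzbar k, Fintype.sum_sum_type]
        simp only [hMinfdef, hVdef, Matrix.fromBlocks_apply₁₁, Matrix.fromBlocks_apply₁₂,
          Matrix.of_apply, Sum.elim_inl, Sum.elim_inr]
        rw [smul_add, Finset.smul_sum, Finset.smul_sum]
      have h2 : zbar k = ∑ s ∈ Finset.range k, ∑ c, (Minf (Sum.inl i0) c) • Ev s c := by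
        rw [h3]
        calc ∑ b, Minf (Sum.inl i0) b • V k b
            = ∑ b, Minf (Sum.inl i0) b • (∑ s ∈ Finset.range k, ∑ c, ((M ^ (k-1-s)) b c) • Ev s c) :=
              Finset.sum_congr rfl fun b _ => by rw [hunroll k b]
          _ = ∑ s ∈ Finset.range k, ∑ c, ((Minf * M ^ (k-1-s)) (Sum.inl i0) c) • Ev s c :=
              hswap Minf _ k (Sum.inl i0)
          _ = ∑ s ∈ Finset.range k, ∑ c, (Minf (Sum.inl i0) c) • Ev s c := by
              refine Finset.sum_congr rfl fun s _ => ?_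
              rw [hMinfpow]
      rw [h1, h2, ← Finset.sum_sub_distrib]
      refine Finset.sum_congr rfl fun s _ => ?_
      rw [← Finset.sum_sub_distrib]
      refine Finset.sum_congr rfl fun c _ => ?_
      rw [Matrix.sub_apply, sub_smul]
    rw [hdiff]
    calc ‖∑ s ∈ Finset.range k, ∑ c, (((M ^ (k-1-s)) - Minf) (Sum.inl i0) c) • Ev s c‖
        ≤ ∑ s ∈ Finset.range k, ‖∑ c, (((M ^ (k-1-s)) - Minf) (Sum.inl i0) c) • Ev s c‖ :=
          norm_sum_le _ _
      _ ≤ ∑ s ∈ Finset.range k, (Γ * γ^(k-1-s)) * g s :=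
          Finset.sum_le_sum fun s _ => hbnd s _ _ (hM (k-1-s) (Sum.inl i0))
      _ = Γ * ∑ s ∈ Finset.range k, γ^(k-1-s) * g s := by
          rw [Finset.mul_sum]
          exact Finset.sum_congr rfl fun s _ => by ring
  have hynorm : ∀ k i, ‖y k i‖ ≤ Γ * ∑ s ∈ Finset.range (k-1), γ ^ (k - 1 - s) * g s := by
    intro k i
    cases k with
    | zero => simp [hy0]
    | succ k =>
      have h1 : y (k+1) i = ∑ s ∈ Finset.range (k+1), ∑ c, ((M ^ (k+1-1-s)) (Sum.inr i) c) • Ev s c :=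
        hunroll (k+1) (Sum.inr i)
      rw [Finset.sum_range_succ] at h1
      have hlast : ∑ c, ((M ^ (k+1-1-k)) (Sum.inr i) c) • Ev k c = 0 := by
        have he : k+1-1-k = 0 := by omega
        rw [he, pow_zero]
        simp [Matrix.one_apply, ite_smul, hEvdef]
      rw [hlast, add_zero] at h1
      rw [h1]
      have hzero : ∀ (m : ℕ) (c : Fin n ⊕ Fin n), (M ^ m) (Sum.inr i) c = ((M ^ m) - Minf) (Sum.inr i) c := by
        intro m c
        rw [Matrix.sub_apply]
        have h0 : Minf (Sum.inr i) c = 0 := by cases c <;> simp [hMinfdef]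
        rw [h0, sub_zero]
      have hk1 : k + 1 - 1 = k := by omega
      rw [hk1]
      calc ‖∑ s ∈ Finset.range k, ∑ c, ((M ^ (k+1-1-s)) (Sum.inr i) c) • Ev s c‖
          ≤ ∑ s ∈ Finset.range k, ‖∑ c, ((M ^ (k+1-1-s)) (Sum.inr i) c) • Ev s c‖ :=
            norm_sum_le _ _
        _ ≤ ∑ s ∈ Finset.range k, (Γ * γ^(k+1-1-s)) * g s := by
            refine Finset.sum_le_sum fun s _ => ?_
            simp_rw [hzero]
            exact hbnd s _ _ (hM (k+1-1-s) (Sum.inr i))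
        _ = Γ * ∑ s ∈ Finset.range k, γ^(k+1-1-s) * g s := by
            rw [Finset.mul_sum]
            exact Finset.sum_congr rfl fun s _ => by ring
  have hgrec : ∀ k, g k ≤ (ε * n * Γ) * ∑ s ∈ Finset.range (k-1), γ ^ (k - 1 - s) * g s
      + (2 * B * n) * α k := by
    intro k
    have hdB : ∀ i, ‖d k i‖ ≤ B := fun i => hsubB i (x k i) (d k i) (hd k i)
    have hxX : ∀ (k' : ℕ) (i : Fin n), x k' i ∈ X := by
      intro k' i
      cases k' with
      | zero => rw [hx0]; exact hX0
      | succ m => rw [hxupd]; exact hPmem _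
    have hgvb : ∀ i, ‖gv k i‖ ≤ ε * ‖y k i‖ + 2 * B * α k := by
      intro i
      have hwX : ∑ j, A i j • x k j ∈ X :=
        hXcv.sum_mem (fun j _ => hAnn i j) (hArow i) (fun j _ => hxX k j)
      rw [hgv, hxupd]
      set u := ∑ j, A i j • x k j + ε • y k i - α k • d k i with hu
      have h1 : P u - (∑ j, A i j • x k j) - ε • y k i = (P u - u) - α k • d k i := by
        rw [hu]; abel
      have h2 : ‖P u - u‖ ≤ ‖(∑ j, A i j • x k j) - u‖ := hPproj u _ hwX
      have h3 : (∑ j, A i j • x k j) - u = α k • d k i - ε • y k i := by rw [hu]; abel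
      have h4 : ‖α k • d k i - ε • y k i‖ ≤ α k * B + ε * ‖y k i‖ := by
        calc ‖α k • d k i - ε • y k i‖ ≤ ‖α k • d k i‖ + ‖ε • y k i‖ := norm_sub_le _ _
          _ = |α k| * ‖d k i‖ + |ε| * ‖y k i‖ := by
              rw [norm_smul, norm_smul, Real.norm_eq_abs, Real.norm_eq_abs]
          _ ≤ α k * B + ε * ‖y k i‖ := by
              rw [abs_of_nonneg (hαnn k), abs_of_pos hε]
              have := mul_le_mul_of_nonneg_left (hdB i) (hαnn k)
              linarith
      have h6 : ‖α k • d k i‖ ≤ α k * B := by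
        rw [norm_smul, Real.norm_eq_abs, abs_of_nonneg (hαnn k)]
        exact mul_le_mul_of_nonneg_left (hdB i) (hαnn k)
      have h5 : ‖P u - (∑ j, A i j • x k j) - ε • y k i‖ ≤ ‖P u - u‖ + ‖α k • d k i‖ := by
        rw [h1]; exact norm_sub_le _ _
      linarith [h2.trans ((congrArg norm h3).le.trans h4)]
    calc g k = ∑ i, ‖gv k i‖ := hg k
      _ ≤ ∑ _i : Fin n, (ε * ‖y k _i‖ + 2 * B * α k) := Finset.sum_le_sum fun i _ => hgvb i
      _ = ε * (∑ i, ‖y k i‖) + n * (2 * B * α k) := by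
          rw [Finset.sum_add_distrib, ← Finset.mul_sum, Finset.sum_const, Finset.card_univ,
            Fintype.card_fin, nsmul_eq_mul]
      _ ≤ ε * ((n : ℝ) * (Γ * ∑ s ∈ Finset.range (k-1), γ^(k-1-s) * g s)) + n * (2*B*α k) := by
          have hsy : ∑ i, ‖y k i‖ ≤ (n : ℝ) * (Γ * ∑ s ∈ Finset.range (k-1), γ^(k-1-s) * g s) := by
            calc ∑ i, ‖y k i‖
                ≤ ∑ _i : Fin n, (Γ * ∑ s ∈ Finset.range (k-1), γ^(k-1-s) * g s) :=
                  Finset.sum_le_sum fun i _ => hynorm k i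
              _ = (n : ℝ) * (Γ * ∑ s ∈ Finset.range (k-1), γ^(k-1-s) * g s) := by
                  rw [Finset.sum_const, Finset.card_univ, Fintype.card_fin, nsmul_eq_mul]
          exact add_le_add (mul_le_mul_of_nonneg_left hsy hε.le) le_rfl
      _ = (ε * n * Γ) * ∑ s ∈ Finset.range (k-1), γ^(k-1-s) * g s + (2*B*n) * α k := by ring
  have hα0 : Tendsto α atTop (nhds 0) := by
    have h2 := hα2.tendsto_atTop_zero
    have h3 : Tendsto (fun k => Real.sqrt ((α k)^2)) atTop (nhds (Real.sqrt 0)) :=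
      (Real.continuous_sqrt.continuousAt).tendsto.comp h2
    simpa [Real.sqrt_sq (hαnn _)] using h3
  have hαb : ∀ k, α k ≤ α 0 := fun k => antitone_nat_of_succ_le hαdec (Nat.zero_le k)
  have hnpos : (0:ℝ) < n := by exact_mod_cast hn
  have hc : 2 * ((ε * n * Γ) * γ) ≤ 1 - γ := by
    have hden : (0:ℝ) < 2 * n * Γ * γ := by positivity
    have := (lt_div_iff₀ hden).mp hεsmall
    nlinarith
  have hS := ddps_seq γ (ε * n * Γ) hγ0 hγ1 (by positivity) hc g (fun k => 2 * B * n * α k)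
    hgnn (fun k => by have := hαnn k; positivity)
    (fun k => mul_le_mul_of_nonneg_left (hαb k) (by positivity))
    hgrec
    (by simpa using hα0.const_mul (2 * B * n))
  have hS' : Tendsto (fun k => Γ * ∑ s ∈ Finset.range k, γ ^ (k - 1 - s) * g s) atTop (nhds 0) := by
    simpa using hS.const_mul Γ
  exact squeeze_zero (fun k => norm_nonneg _) hxz hS'
end

section
/- Suppose in addition that ε < (1−γ)/(2nΓγ) and Σ_{k=0}^∞ α_k² < ∞. Then for every agent i ∈ {1,…,n}, lim_{k→∞} ‖y_i^k‖ = 0. -/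
open Finset Filter
open scoped RealInnerProductSpace

/-- If `u (k+1) ≤ ρ * u k + a k` with `0 ≤ ρ < 1`, `u, a ≥ 0`, `a` antitone tending to `0`,
then `u → 0`. -/
lemma ddps_rec_tendsto_zero (ρ : ℝ) (hρ0 : 0 ≤ ρ) (hρ1 : ρ < 1)
    (u a : ℕ → ℝ) (hu : ∀ k, 0 ≤ u k) (ha0 : ∀ k, 0 ≤ a k)
    (hadec : ∀ m k, m ≤ k → a k ≤ a m)
    (ha : Tendsto a atTop (nhds 0))
    (hrec : ∀ k, u (k + 1) ≤ ρ * u k + a k) :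
    Tendsto u atTop (nhds 0) := by
  have h1ρ : 0 < 1 - ρ := by linarith
  have key : ∀ m, ∀ k, m ≤ k → u k ≤ ρ ^ (k - m) * u m + a m / (1 - ρ) := by
    intro m k hmk
    induction k, hmk using Nat.le_induction with
    | base =>
      simp only [Nat.sub_self, pow_zero, one_mul]
      linarith [div_nonneg (ha0 m) h1ρ.le]
    | succ k hk ih =>
      have h1 : u (k + 1) ≤ ρ * u k + a k := hrec k
      have h2 : a k ≤ a m := hadec m k hk
      have h3 : ρ * u k ≤ ρ * (ρ ^ (k - m) * u m + a m / (1 - ρ)) :=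
        mul_le_mul_of_nonneg_left ih hρ0
      have hkm : k + 1 - m = (k - m) + 1 := by omega
      rw [hkm]
      have hρa : ρ * (a m / (1 - ρ)) + a m ≤ a m / (1 - ρ) := by
        have ht : a m = a m / (1 - ρ) * (1 - ρ) := by field_simp
        linarith [ht]
      calc u (k + 1) ≤ ρ * (ρ ^ (k - m) * u m + a m / (1 - ρ)) + a m := by linarith
        _ = ρ ^ (k - m + 1) * u m + (ρ * (a m / (1 - ρ)) + a m) := by ring
        _ ≤ ρ ^ (k - m + 1) * u m + a m / (1 - ρ) := by linarith
  rw [Metric.tendsto_atTop]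
  intro e he
  obtain ⟨m, hm⟩ := Metric.tendsto_atTop.mp ha (e / 2 * (1 - ρ)) (by positivity)
  have ham : a m / (1 - ρ) < e / 2 := by
    have := hm m le_rfl
    rw [Real.dist_eq, abs_of_nonneg (by linarith [ha0 m] : (0:ℝ) ≤ a m - 0)] at this
    rw [div_lt_iff₀ h1ρ]
    linarith
  have hpow : Tendsto (fun k => ρ ^ (k - m) * u m) atTop (nhds 0) := by
    have h0 : Tendsto (fun k : ℕ => ρ ^ k) atTop (nhds 0) :=
      tendsto_pow_atTop_nhds_zero_of_lt_one hρ0 hρ1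
    have h1 : Tendsto (fun k : ℕ => k - m) atTop atTop := tendsto_sub_atTop_nat m
    have := (h0.comp h1).mul_const (u m)
    simpa using this
  obtain ⟨K, hK⟩ := Metric.tendsto_atTop.mp hpow (e / 2) (by positivity)
  refine ⟨max m K, fun k hk => ?_⟩
  have hmk : m ≤ k := le_trans (le_max_left _ _) hk
  have hKk : K ≤ k := le_trans (le_max_right _ _) hk
  have hb := key m k hmk
  have hp := hK k hKk
  rw [Real.dist_eq, sub_zero] at hp ⊢
  have hpnn : 0 ≤ ρ ^ (k - m) * u m := mul_nonneg (pow_nonneg hρ0 _) (hu m)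
  rw [abs_of_nonneg hpnn] at hp
  rw [abs_of_nonneg (hu k)]
  linarith

/-- Unrolling of a linearly-driven recursion. -/
lemma ddps_unroll {N : Type*} [Fintype N] [DecidableEq N]
    {E : Type*} [AddCommGroup E] [Module ℝ E]
    (M : Matrix N N ℝ) (V G : ℕ → N → E)
    (hV0 : ∀ j, V 0 j = 0)
    (hstep : ∀ k j, V (k + 1) j = (∑ j', M j j' • V k j') + G k j) :
    ∀ k j, V k j = ∑ s ∈ Finset.range k, ∑ j', ((M ^ (k - 1 - s)) j j') • G s j' := by
  intro k
  induction k with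
  | zero => intro j; simp [hV0]
  | succ k ih =>
    intro j
    rw [hstep k j, Finset.sum_range_succ]
    have hlast : ∑ j', ((M ^ (k + 1 - 1 - k)) j j') • G k j' = G k j := by
      simp [Matrix.one_apply, ite_smul, Finset.sum_ite_eq]
    rw [hlast]
    congr 1
    calc ∑ j', M j j' • V k j'
        = ∑ j', M j j' • ∑ s ∈ Finset.range k, ∑ j'', ((M ^ (k - 1 - s)) j' j'') • G s j'' := by
          simp_rw [ih]
      _ = ∑ j', ∑ s ∈ Finset.range k, ∑ j'', (M j j' * (M ^ (k - 1 - s)) j' j'') • G s j'' := by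
          simp_rw [Finset.smul_sum, smul_smul]
      _ = ∑ s ∈ Finset.range k, ∑ j', ∑ j'', (M j j' * (M ^ (k - 1 - s)) j' j'') • G s j'' :=
          Finset.sum_comm
      _ = ∑ s ∈ Finset.range k, ∑ j'', ∑ j', (M j j' * (M ^ (k - 1 - s)) j' j'') • G s j'' :=
          Finset.sum_congr rfl fun s _ => Finset.sum_comm
      _ = ∑ s ∈ Finset.range k, ∑ j'', ((M ^ (k + 1 - 1 - s)) j j'') • G s j'' := by
          refine Finset.sum_congr rfl fun s hs => Finset.sum_congr rfl fun j'' _ => ?_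
          rw [← Finset.sum_smul]
          congr 1
          have hks : k + 1 - 1 - s = (k - 1 - s) + 1 := by
            have := Finset.mem_range.mp hs; omega
          rw [hks, pow_succ', Matrix.mul_apply]

set_option maxHeartbeats 1600000 in
theorem ddps_aux_tendsto_zero
    {n p : ℕ} (hn : 1 ≤ n) (hp : 1 ≤ p)
    (f : Fin n → EuclideanSpace ℝ (Fin p) → ℝ)
    (hconv : ∀ i, ConvexOn ℝ Set.univ (f i))
    (B : ℝ) (hB : 0 < B)
    (hsubB : ∀ (i : Fin n) (u s : EuclideanSpace ℝ (Fin p)),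
      (∀ v, f i u + ⟪s, v - u⟫ ≤ f i v) → ‖s‖ ≤ B)
    (X : Set (EuclideanSpace ℝ (Fin p)))
    (hXne : X.Nonempty) (hXcl : IsClosed X) (hXcv : Convex ℝ X)
    (hX0 : (0 : EuclideanSpace ℝ (Fin p)) ∈ X)
    (P : EuclideanSpace ℝ (Fin p) → EuclideanSpace ℝ (Fin p))
    (hPmem : ∀ v, P v ∈ X)
    (hPproj : ∀ v w, w ∈ X → ‖P v - v‖ ≤ ‖w - v‖)
    (A Bh : Matrix (Fin n) (Fin n) ℝ)
    (hAnn : ∀ i j, 0 ≤ A i j) (hArow : ∀ i, ∑ j, A i j = 1)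
    (hBnn : ∀ i j, 0 ≤ Bh i j) (hBcol : ∀ j, ∑ i, Bh i j = 1)
    (ε : ℝ) (hε : 0 < ε)
    (α : ℕ → ℝ) (hαnn : ∀ k, 0 ≤ α k) (hαdec : ∀ k, α (k + 1) ≤ α k)
    (x y d : ℕ → Fin n → EuclideanSpace ℝ (Fin p))
    (hx0 : ∀ i, x 0 i = 0) (hy0 : ∀ i, y 0 i = 0)
    (hd : ∀ k i v, f i (x k i) + ⟪d k i, v - x k i⟫ ≤ f i v)
    (hxupd : ∀ k i, x (k + 1) i = P (∑ j, A i j • x k j + ε • y k i - α k • d k i))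
    (hyupd : ∀ k i, y (k + 1) i =
      x k i - ∑ j, A i j • x k j + (∑ j, Bh i j • y k j) - ε • y k i)
    (gv : ℕ → Fin n → EuclideanSpace ℝ (Fin p))
    (hgv : ∀ k i, gv k i = x (k + 1) i - ∑ j, A i j • x k j - ε • y k i)
    (g : ℕ → ℝ) (hg : ∀ k, g k = ∑ i, ‖gv k i‖)
    (zbar : ℕ → EuclideanSpace ℝ (Fin p))
    (hzbar : ∀ k, zbar k = (n : ℝ)⁻¹ • (∑ i, x k i + ∑ i, y k i))
    (Γ γ : ℝ) (hΓ : 0 < Γ) (hγ0 : 0 < γ) (hγ1 : γ < 1)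
    (hM : ∀ (k : ℕ) (i : Fin n ⊕ Fin n),
      ∑ j, |((Matrix.fromBlocks A (ε • (1 : Matrix (Fin n) (Fin n) ℝ))
          ((1 : Matrix (Fin n) (Fin n) ℝ) - A) (Bh - ε • (1 : Matrix (Fin n) (Fin n) ℝ))) ^ k
        - Matrix.fromBlocks (Matrix.of fun _ _ => (n : ℝ)⁻¹)
            (Matrix.of fun _ _ => (n : ℝ)⁻¹) 0 0 :
          Matrix (Fin n ⊕ Fin n) (Fin n ⊕ Fin n) ℝ) i j| ≤ Γ * γ ^ k)
    (hεsmall : ε < (1 - γ) / (2 * n * Γ * γ))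
    (hα2 : Summable fun k => (α k) ^ 2)
    :
    ∀ i : Fin n, Tendsto (fun k => ‖y k i‖) atTop (nhds 0) := by
  classical
  have hnpos : (0:ℝ) < n := by exact_mod_cast Nat.lt_of_lt_of_le Nat.zero_lt_one hn
  -- subgradient bound
  have hdB : ∀ k i, ‖d k i‖ ≤ B := fun k i => hsubB i (x k i) (d k i) (hd k i)
  -- iterates stay in X
  have hxX : ∀ k i, x k i ∈ X := by
    intro k
    induction k with
    | zero => intro i; rw [hx0]; exact hX0
    | succ k ih => intro i; rw [hxupd]; exact hPmem _
  have hwX : ∀ k i, (∑ j, A i j • x k j) ∈ X := fun k i =>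
    hXcv.sum_mem (fun j _ => hAnn i j) (hArow i) (fun j _ => hxX k j)
  -- pointwise bound on gv
  have hgvb : ∀ k i, ‖gv k i‖ ≤ 2 * B * α k + ε * ‖y k i‖ := by
    intro k i
    set w := ∑ j, A i j • x k j with hw
    set v := w + ε • y k i - α k • d k i with hv
    have h1 : gv k i = (P v - v) - α k • d k i := by
      rw [hgv, hxupd, ← hw, ← hv, hv]
      abel
    have h2 : ‖P v - v‖ ≤ ‖w - v‖ := hPproj v w (hwX k i)
    have h3 : w - v = α k • d k i - ε • y k i := by rw [hv]; abel
    have h4 : ‖w - v‖ ≤ α k * ‖d k i‖ + ε * ‖y k i‖ := by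
      rw [h3]
      calc ‖α k • d k i - ε • y k i‖ ≤ ‖α k • d k i‖ + ‖ε • y k i‖ := norm_sub_le _ _
        _ = α k * ‖d k i‖ + ε * ‖y k i‖ := by
          rw [norm_smul, norm_smul, Real.norm_eq_abs, Real.norm_eq_abs,
            abs_of_nonneg (hαnn k), abs_of_nonneg hε.le]
    have h5 : ‖α k • d k i‖ ≤ α k * B := by
      rw [norm_smul, Real.norm_eq_abs, abs_of_nonneg (hαnn k)]
      exact mul_le_mul_of_nonneg_left (hdB k i) (hαnn k)
    have h6 : α k * ‖d k i‖ ≤ α k * B := mul_le_mul_of_nonneg_left (hdB k i) (hαnn k)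
    calc ‖gv k i‖ ≤ ‖P v - v‖ + ‖α k • d k i‖ := by rw [h1]; exact norm_sub_le _ _
      _ ≤ (α k * ‖d k i‖ + ε * ‖y k i‖) + α k * B := by linarith
      _ ≤ 2 * B * α k + ε * ‖y k i‖ := by linarith
  -- stacked system
  set M : Matrix (Fin n ⊕ Fin n) (Fin n ⊕ Fin n) ℝ :=
    Matrix.fromBlocks A (ε • (1 : Matrix (Fin n) (Fin n) ℝ))
      ((1 : Matrix (Fin n) (Fin n) ℝ) - A) (Bh - ε • (1 : Matrix (Fin n) (Fin n) ℝ)) with hMdef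
  set L : Matrix (Fin n ⊕ Fin n) (Fin n ⊕ Fin n) ℝ :=
    Matrix.fromBlocks (Matrix.of fun _ _ => (n : ℝ)⁻¹) (Matrix.of fun _ _ => (n : ℝ)⁻¹) 0 0
    with hLdef
  set V : ℕ → (Fin n ⊕ Fin n) → EuclideanSpace ℝ (Fin p) :=
    fun k => Sum.elim (x k) (y k) with hVdef
  set G : ℕ → (Fin n ⊕ Fin n) → EuclideanSpace ℝ (Fin p) :=
    fun k => Sum.elim (gv k) (fun _ => 0) with hGdef
  have hV0 : ∀ j, V 0 j = 0 := by
    intro j; cases j with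
    | inl i => simp [hVdef, hx0]
    | inr i => simp [hVdef, hy0]
  have hstep : ∀ k j, V (k + 1) j = (∑ j', M j j' • V k j') + G k j := by
    intro k j
    rw [Fintype.sum_sum_type]
    cases j with
    | inl i =>
      simp only [hVdef, hGdef, Sum.elim_inl, Sum.elim_inr, hMdef,
        Matrix.fromBlocks_apply₁₁, Matrix.fromBlocks_apply₁₂]
      have h2 : ∑ j, (ε • (1 : Matrix (Fin n) (Fin n) ℝ)) i j • y k j = ε • y k i := by
        simp [Matrix.smul_apply, Matrix.one_apply, ite_smul, Finset.sum_ite_eq, smul_smul]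
      rw [h2, hgv k i]
      abel
    | inr i =>
      simp only [hVdef, hGdef, Sum.elim_inl, Sum.elim_inr, hMdef,
        Matrix.fromBlocks_apply₂₁, Matrix.fromBlocks_apply₂₂]
      have h1 : ∑ j, ((1 : Matrix (Fin n) (Fin n) ℝ) - A) i j • x k j
          = x k i - ∑ j, A i j • x k j := by
        simp [Matrix.sub_apply, Matrix.one_apply, sub_smul, ite_smul, Finset.sum_sub_distrib,
          Finset.sum_ite_eq]
      have h2 : ∑ j, (Bh - ε • (1 : Matrix (Fin n) (Fin n) ℝ)) i j • y k j
          = (∑ j, Bh i j • y k j) - ε • y k i := by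
        simp [Matrix.sub_apply, Matrix.smul_apply, Matrix.one_apply, sub_smul, ite_smul,
          Finset.sum_sub_distrib, Finset.sum_ite_eq, smul_smul]
      rw [h1, h2, hyupd k i]
      abel
  have hVform := ddps_unroll M V G hV0 hstep
  -- entry bound on bottom rows of M ^ m
  have hMentry : ∀ (m : ℕ) (i : Fin n) (j : Fin n ⊕ Fin n),
      |(M ^ m) (Sum.inr i) j| ≤ Γ * γ ^ m := by
    intro m i j
    have h := hM m (Sum.inr i)
    have hL : ∀ j', L (Sum.inr i) j' = 0 := by
      intro j'; cases j' <;> simp [hLdef]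
    calc |(M ^ m) (Sum.inr i) j| = |(M ^ m - L) (Sum.inr i) j| := by
          rw [Matrix.sub_apply, hL j, sub_zero]
      _ ≤ ∑ j', |(M ^ m - L) (Sum.inr i) j'| :=
          Finset.single_le_sum (f := fun j' => |(M ^ m - L) (Sum.inr i) j'|)
            (fun _ _ => abs_nonneg _) (Finset.mem_univ j)
      _ ≤ Γ * γ ^ m := h
  -- nonnegativity of g
  have hgnn : ∀ k, 0 ≤ g k := by
    intro k; rw [hg]; exact Finset.sum_nonneg fun _ _ => norm_nonneg _
  -- sum of norms of G
  have hGsum : ∀ s, ∑ j', ‖G s j'‖ = g s := by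
    intro s
    rw [Fintype.sum_sum_type, hg]
    simp [hGdef]
  -- discounted sum
  set h : ℕ → ℝ := fun k => ∑ s ∈ Finset.range k, γ ^ (k - 1 - s) * g s with hhdef
  have hhnn : ∀ k, 0 ≤ h k := by
    intro k
    exact Finset.sum_nonneg fun s _ => mul_nonneg (pow_nonneg hγ0.le _) (hgnn s)
  have hhrec : ∀ k, h (k + 1) = γ * h k + g k := by
    intro k
    simp only [hhdef]
    rw [Finset.sum_range_succ, Finset.mul_sum]
    congr 1
    · refine Finset.sum_congr rfl fun s hs => ?_
      have hks : k + 1 - 1 - s = (k - 1 - s) + 1 := by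
        have := Finset.mem_range.mp hs; omega
      rw [hks, pow_succ']
      ring
    · simp
  -- bound on y in terms of h
  have hyb : ∀ k i, ‖y (k + 1) i‖ ≤ Γ * γ * h k := by
    intro k i
    have hform := hVform (k + 1) (Sum.inr i)
    have hy_eq : y (k + 1) i = V (k + 1) (Sum.inr i) := by simp [hVdef]
    rw [Finset.sum_range_succ] at hform
    have hlast : ∑ j', ((M ^ (k + 1 - 1 - k)) (Sum.inr i) j') • G k j' = 0 := by
      have : k + 1 - 1 - k = 0 := by omega
      rw [this, pow_zero]
      rw [Fintype.sum_sum_type]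
      simp [hGdef, Matrix.one_apply, Sum.elim_inl, Sum.elim_inr]
    rw [hlast, add_zero] at hform
    rw [hy_eq, hform]
    calc ‖∑ s ∈ Finset.range k, ∑ j', ((M ^ (k + 1 - 1 - s)) (Sum.inr i) j') • G s j'‖
        ≤ ∑ s ∈ Finset.range k, ‖∑ j', ((M ^ (k + 1 - 1 - s)) (Sum.inr i) j') • G s j'‖ :=
          norm_sum_le _ _
      _ ≤ ∑ s ∈ Finset.range k, ∑ j', ‖((M ^ (k + 1 - 1 - s)) (Sum.inr i) j') • G s j'‖ :=
          Finset.sum_le_sum fun s _ => norm_sum_le _ _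
      _ ≤ ∑ s ∈ Finset.range k, ∑ j', (Γ * γ ^ (k + 1 - 1 - s)) * ‖G s j'‖ := by
          refine Finset.sum_le_sum fun s _ => Finset.sum_le_sum fun j' _ => ?_
          rw [norm_smul, Real.norm_eq_abs]
          exact mul_le_mul_of_nonneg_right (hMentry _ i j') (norm_nonneg _)
      _ = ∑ s ∈ Finset.range k, (Γ * γ ^ (k + 1 - 1 - s)) * g s := by
          refine Finset.sum_congr rfl fun s _ => ?_
          rw [← Finset.mul_sum, hGsum]
      _ = Γ * γ * h k := by
          simp only [hhdef]
          rw [Finset.mul_sum]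
          refine Finset.sum_congr rfl fun s hs => ?_
          have hks : k + 1 - 1 - s = (k - 1 - s) + 1 := by
            have := Finset.mem_range.mp hs; omega
          rw [hks, pow_succ']
          ring
  -- bound on g
  have hgB : ∀ k, g k ≤ 2 * n * B * α k + ε * ∑ i, ‖y k i‖ := by
    intro k
    rw [hg]
    calc ∑ i, ‖gv k i‖ ≤ ∑ i : Fin n, (2 * B * α k + ε * ‖y k i‖) :=
          Finset.sum_le_sum fun i _ => hgvb k i
      _ = 2 * n * B * α k + ε * ∑ i, ‖y k i‖ := by
          rw [Finset.sum_add_distrib, Finset.sum_const, ← Finset.mul_sum,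
            Finset.card_univ, Fintype.card_fin, nsmul_eq_mul]
          ring
  have hgb2 : ∀ k, g (k + 1) ≤ 2 * n * B * α (k + 1) + ε * n * Γ * γ * h k := by
    intro k
    have h1 := hgB (k + 1)
    have h2 : ∑ i, ‖y (k + 1) i‖ ≤ n * (Γ * γ * h k) := by
      calc ∑ i, ‖y (k + 1) i‖ ≤ ∑ _i : Fin n, (Γ * γ * h k) :=
            Finset.sum_le_sum fun i _ => hyb k i
        _ = n * (Γ * γ * h k) := by
            rw [Finset.sum_const, Finset.card_univ, Fintype.card_fin, nsmul_eq_mul]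
    calc g (k + 1) ≤ 2 * n * B * α (k + 1) + ε * ∑ i, ‖y (k + 1) i‖ := h1
      _ ≤ 2 * n * B * α (k + 1) + ε * (n * (Γ * γ * h k)) := by
          have := mul_le_mul_of_nonneg_left h2 hε.le
          linarith
      _ = 2 * n * B * α (k + 1) + ε * n * Γ * γ * h k := by ring
  -- the two-step recursion for h
  set β : ℝ := ε * n * Γ * γ with hβdef
  have hβpos : 0 < β := by positivity
  have hβsmall : β < (1 - γ) / 2 := by
    have hden : 0 < 2 * n * Γ * γ := by positivity
    have := (lt_div_iff₀ hden).mp hεsmall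
    rw [hβdef]
    linarith
  have hγ1' : 0 < 1 - γ := by linarith
  have hhrec2 : ∀ k, h (k + 2) ≤ γ * h (k + 1) + β * h k + 2 * n * B * α (k + 1) := by
    intro k
    have h1 := hhrec (k + 1)
    have h2 := hgb2 k
    rw [h1]
    linarith
  -- combined sequence
  set c : ℝ := 2 / (1 - γ) with hcdef
  have hcpos : 0 < c := by positivity
  set ρ : ℝ := max ((1 + γ) / 2) (2 * β / (1 - γ)) with hρdef
  have hρ0 : 0 ≤ ρ := le_trans (by linarith : (0:ℝ) ≤ (1 + γ) / 2) (le_max_left _ _)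
  have hρ1 : ρ < 1 := by
    apply max_lt
    · linarith
    · rw [div_lt_one hγ1']
      linarith
  have hc1 : 1 + c * γ ≤ ρ * c := by
    have h1 : (1 + γ) / 2 ≤ ρ := le_max_left _ _
    have : (1 + γ) / 2 * c ≤ ρ * c := mul_le_mul_of_nonneg_right h1 hcpos.le
    have hceq : (1 + γ) / 2 * c = 1 + c * γ := by
      rw [hcdef]; field_simp; ring
    linarith
  have hc2 : c * β ≤ ρ := by
    have h1 : 2 * β / (1 - γ) ≤ ρ := le_max_right _ _
    have : c * β = 2 * β / (1 - γ) := by rw [hcdef]; ring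
    linarith
  set u : ℕ → ℝ := fun k => h k + c * h (k + 1) with hudef
  set a : ℕ → ℝ := fun k => c * (2 * n * B * α k) with hadef
  have hunn : ∀ k, 0 ≤ u k := fun k =>
    add_nonneg (hhnn k) (mul_nonneg hcpos.le (hhnn (k + 1)))
  have hann : ∀ k, 0 ≤ a k := fun k =>
    mul_nonneg hcpos.le (mul_nonneg (by positivity) (hαnn k))
  have hαanti : ∀ m k, m ≤ k → α k ≤ α m := by
    intro m k hmk
    induction k, hmk using Nat.le_induction with
    | base => exact le_rfl
    | succ k hk ih => exact le_trans (hαdec k) ih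
  have hadec : ∀ m k, m ≤ k → a k ≤ a m := by
    intro m k hmk
    simp only [hadef]
    exact mul_le_mul_of_nonneg_left
      (mul_le_mul_of_nonneg_left (hαanti m k hmk) (by positivity)) hcpos.le
  have hα0 : Tendsto α atTop (nhds 0) := by
    have h2 := hα2.tendsto_atTop_zero
    have h3 : Tendsto (fun k => Real.sqrt ((α k) ^ 2)) atTop (nhds (Real.sqrt 0)) :=
      (Real.continuous_sqrt.tendsto 0).comp h2
    rw [Real.sqrt_zero] at h3
    have h4 : (fun k => Real.sqrt ((α k) ^ 2)) = α := by
      funext k; rw [Real.sqrt_sq (hαnn k)]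
    rwa [h4] at h3
  have ha0 : Tendsto a atTop (nhds 0) := by
    have := hα0.const_mul (c * (2 * n * B))
    simp only [mul_zero] at this
    have heq : a = fun k => c * (2 * n * B) * α k := by
      funext k; simp only [hadef]; ring
    rwa [heq]
  have hurec : ∀ k, u (k + 1) ≤ ρ * u k + a k := by
    intro k
    have h1 := hhrec2 k
    have h2 : a (k + 1) ≤ a k := hadec k (k + 1) (Nat.le_succ k)
    have h3 : c * h (k + 2) ≤ c * (γ * h (k + 1) + β * h k + 2 * n * B * α (k + 1)) :=
      mul_le_mul_of_nonneg_left h1 hcpos.le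
    have h4 : (1 + c * γ) * h (k + 1) ≤ ρ * c * h (k + 1) :=
      mul_le_mul_of_nonneg_right hc1 (hhnn (k + 1))
    have h5 : c * β * h k ≤ ρ * h k := mul_le_mul_of_nonneg_right hc2 (hhnn k)
    have h6 : c * (2 * n * B * α (k + 1)) = a (k + 1) := by simp only [hadef]
    calc u (k + 1) = h (k + 1) + c * h (k + 2) := rfl
      _ ≤ h (k + 1) + c * (γ * h (k + 1) + β * h k + 2 * n * B * α (k + 1)) := by linarith
      _ = (1 + c * γ) * h (k + 1) + c * β * h k + c * (2 * n * B * α (k + 1)) := by ring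
      _ ≤ ρ * c * h (k + 1) + ρ * h k + a (k + 1) := by rw [h6] at *; linarith
      _ ≤ ρ * (h k + c * h (k + 1)) + a k := by linarith
      _ = ρ * u k + a k := rfl
  have hu0 : Tendsto u atTop (nhds 0) :=
    ddps_rec_tendsto_zero ρ hρ0 hρ1 u a hunn hann hadec ha0 hurec
  have hh0 : Tendsto h atTop (nhds 0) := by
    apply squeeze_zero hhnn (fun k => ?_) hu0
    have : 0 ≤ c * h (k + 1) := mul_nonneg hcpos.le (hhnn (k + 1))
    simp only [hudef]
    linarith
  intro i
  rw [← tendsto_add_atTop_iff_nat 1]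
  apply squeeze_zero (fun k => norm_nonneg _) (fun k => hyb k i)
  have := hh0.const_mul (Γ * γ)
  simpa using this
end

section
/- Suppose in addition that ε < (1−γ)/(2nΓγ). Then there exists a constant E > 0 such that for every agent i ∈ {1,…,n} and every K ≥ 0, Σ_{k=0}^K α_k ‖x_i^k − z̄^k‖ ≤ E Σ_{k=0}^K α_k². -/
open Finset Filter
open scoped RealInnerProductSpace

set_option maxHeartbeats 1600000 in
theorem ddps_weighted_consensus_sum
    {n p : ℕ} (hn : 1 ≤ n) (hp : 1 ≤ p)
    (f : Fin n → EuclideanSpace ℝ (Fin p) → ℝ)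
    (hconv : ∀ i, ConvexOn ℝ Set.univ (f i))
    (B : ℝ) (hB : 0 < B)
    (hsubB : ∀ (i : Fin n) (u s : EuclideanSpace ℝ (Fin p)),
      (∀ v, f i u + ⟪s, v - u⟫ ≤ f i v) → ‖s‖ ≤ B)
    (X : Set (EuclideanSpace ℝ (Fin p)))
    (hXne : X.Nonempty) (hXcl : IsClosed X) (hXcv : Convex ℝ X)
    (hX0 : (0 : EuclideanSpace ℝ (Fin p)) ∈ X)
    (P : EuclideanSpace ℝ (Fin p) → EuclideanSpace ℝ (Fin p))
    (hPmem : ∀ v, P v ∈ X)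
    (hPproj : ∀ v w, w ∈ X → ‖P v - v‖ ≤ ‖w - v‖)
    (A Bh : Matrix (Fin n) (Fin n) ℝ)
    (hAnn : ∀ i j, 0 ≤ A i j) (hArow : ∀ i, ∑ j, A i j = 1)
    (hBnn : ∀ i j, 0 ≤ Bh i j) (hBcol : ∀ j, ∑ i, Bh i j = 1)
    (ε : ℝ) (hε : 0 < ε)
    (α : ℕ → ℝ) (hαnn : ∀ k, 0 ≤ α k) (hαdec : ∀ k, α (k + 1) ≤ α k)
    (x y d : ℕ → Fin n → EuclideanSpace ℝ (Fin p))
    (hx0 : ∀ i, x 0 i = 0) (hy0 : ∀ i, y 0 i = 0)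
    (hd : ∀ k i v, f i (x k i) + ⟪d k i, v - x k i⟫ ≤ f i v)
    (hxupd : ∀ k i, x (k + 1) i = P (∑ j, A i j • x k j + ε • y k i - α k • d k i))
    (hyupd : ∀ k i, y (k + 1) i =
      x k i - ∑ j, A i j • x k j + (∑ j, Bh i j • y k j) - ε • y k i)
    (gv : ℕ → Fin n → EuclideanSpace ℝ (Fin p))
    (hgv : ∀ k i, gv k i = x (k + 1) i - ∑ j, A i j • x k j - ε • y k i)
    (g : ℕ → ℝ) (hg : ∀ k, g k = ∑ i, ‖gv k i‖)
    (zbar : ℕ → EuclideanSpace ℝ (Fin p))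
    (hzbar : ∀ k, zbar k = (n : ℝ)⁻¹ • (∑ i, x k i + ∑ i, y k i))
    (Γ γ : ℝ) (hΓ : 0 < Γ) (hγ0 : 0 < γ) (hγ1 : γ < 1)
    (hM : ∀ (k : ℕ) (i : Fin n ⊕ Fin n),
      ∑ j, |((Matrix.fromBlocks A (ε • (1 : Matrix (Fin n) (Fin n) ℝ))
          ((1 : Matrix (Fin n) (Fin n) ℝ) - A) (Bh - ε • (1 : Matrix (Fin n) (Fin n) ℝ))) ^ k
        - Matrix.fromBlocks (Matrix.of fun _ _ => (n : ℝ)⁻¹)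
            (Matrix.of fun _ _ => (n : ℝ)⁻¹) 0 0 :
          Matrix (Fin n ⊕ Fin n) (Fin n ⊕ Fin n) ℝ) i j| ≤ Γ * γ ^ k)
    (hεsmall : ε < (1 - γ) / (2 * n * Γ * γ))
    :
    ∃ E > 0, ∀ (i : Fin n) (K : ℕ),
      ∑ k ∈ Finset.range (K + 1), α k * ‖x k i - zbar k‖ ≤
        E * ∑ k ∈ Finset.range (K + 1), (α k) ^ 2 := by
  classical
  have hn0 : (0:ℝ) < n := by exact_mod_cast hn
  set M : Matrix (Fin n ⊕ Fin n) (Fin n ⊕ Fin n) ℝ :=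
    Matrix.fromBlocks A (ε • 1) (1 - A) (Bh - ε • 1) with hMdef
  set J : Matrix (Fin n ⊕ Fin n) (Fin n ⊕ Fin n) ℝ :=
    Matrix.fromBlocks (Matrix.of fun _ _ => (n : ℝ)⁻¹) (Matrix.of fun _ _ => (n : ℝ)⁻¹) 0 0
    with hJdef
  -- entrywise bound from hM
  have hentry : ∀ (s : ℕ) (q : Fin n ⊕ Fin n) (j : Fin n),
      |(M ^ s - J) q (Sum.inl j)| ≤ Γ * γ ^ s := by
    intro s q j
    exact le_trans (Finset.single_le_sum (f := fun j' => |(M ^ s - J) q j'|)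
      (fun j' _ => abs_nonneg _) (Finset.mem_univ (Sum.inl j))) (hM s q)
  -- subgradient norm bound
  have hdB : ∀ k i, ‖d k i‖ ≤ B := fun k i => hsubB i (x k i) (d k i) (hd k i)
  -- iterates stay in X
  have hxX : ∀ k i, x k i ∈ X := by
    intro k i
    cases k with
    | zero => rw [hx0]; exact hX0
    | succ k => rw [hxupd]; exact hPmem _
  -- projection residual bound
  have hgvbd : ∀ k i, ‖gv k i‖ ≤ ε * ‖y k i‖ + 2 * B * α k := by
    intro k i
    have hw : (∑ j, A i j • x k j) ∈ X :=
      hXcv.sum_mem (fun j _ => hAnn i j) (hArow i) (fun j _ => hxX k j)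
    have h1 : gv k i = (P (∑ j, A i j • x k j + ε • y k i - α k • d k i)
        - (∑ j, A i j • x k j + ε • y k i - α k • d k i)) - α k • d k i := by
      rw [hgv, hxupd]; abel
    have h2 := hPproj (∑ j, A i j • x k j + ε • y k i - α k • d k i)
      (∑ j, A i j • x k j) hw
    have h3 : (∑ j, A i j • x k j) - (∑ j, A i j • x k j + ε • y k i - α k • d k i)
        = α k • d k i - ε • y k i := by abel
    rw [h3] at h2
    have h4 : ‖α k • d k i - ε • y k i‖ ≤ α k * B + ε * ‖y k i‖ := by
      refine le_trans (norm_sub_le _ _) ?_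
      rw [norm_smul, norm_smul, Real.norm_eq_abs, Real.norm_eq_abs,
        abs_of_nonneg (hαnn k), abs_of_nonneg hε.le]
      have := mul_le_mul_of_nonneg_left (hdB k i) (hαnn k)
      linarith
    have h5 : ‖α k • d k i‖ ≤ α k * B := by
      rw [norm_smul, Real.norm_eq_abs, abs_of_nonneg (hαnn k)]
      exact mul_le_mul_of_nonneg_left (hdB k i) (hαnn k)
    rw [h1]
    refine le_trans (norm_sub_le _ _) ?_
    linarith [le_trans h2 h4]
  -- stacked sequence
  set Z : ℕ → (Fin n ⊕ Fin n) → EuclideanSpace ℝ (Fin p) :=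
    fun k => Sum.elim (x k) (y k) with hZdef
  have hZstep : ∀ k q, Z (k+1) q = (∑ r, M q r • Z k r) + Sum.elim (gv k) (fun _ => 0) q := by
    intro k q
    cases q with
    | inl i =>
      have hsum1 : ∑ j, M (Sum.inl i) (Sum.inl j) • Z k (Sum.inl j) = ∑ j, A i j • x k j := by
        refine Finset.sum_congr rfl fun j _ => ?_
        simp [hMdef, hZdef]
      have hsum2 : ∑ j, M (Sum.inl i) (Sum.inr j) • Z k (Sum.inr j) = ε • y k i := by
        simp [hMdef, hZdef, Matrix.smul_apply, Matrix.one_apply, mul_ite, mul_one,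
          mul_zero, ite_smul, zero_smul, Finset.sum_ite_eq]
      have hsum : ∑ r, M (Sum.inl i) r • Z k r = (∑ j, A i j • x k j) + ε • y k i := by
        rw [Fintype.sum_sum_type, hsum1, hsum2]
      simp only [hZdef, Sum.elim_inl]
      rw [hsum, hgv k i]
      abel
    | inr i =>
      have hsum1 : ∑ j, M (Sum.inr i) (Sum.inl j) • Z k (Sum.inl j)
          = x k i - ∑ j, A i j • x k j := by
        have h1 : ∀ j, M (Sum.inr i) (Sum.inl j) • Z k (Sum.inl j)
            = (if i = j then (1:ℝ) else 0) • x k j - A i j • x k j := by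
          intro j
          simp [hMdef, hZdef, Matrix.sub_apply, Matrix.one_apply, sub_smul]
        rw [Finset.sum_congr rfl fun j _ => h1 j, Finset.sum_sub_distrib]
        simp [ite_smul, zero_smul, Finset.sum_ite_eq]
      have hsum2 : ∑ j, M (Sum.inr i) (Sum.inr j) • Z k (Sum.inr j)
          = (∑ j, Bh i j • y k j) - ε • y k i := by
        have h1 : ∀ j, M (Sum.inr i) (Sum.inr j) • Z k (Sum.inr j)
            = Bh i j • y k j - (if i = j then ε else 0) • y k j := by
          intro j
          simp [hMdef, hZdef, Matrix.sub_apply, Matrix.smul_apply, Matrix.one_apply,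
            mul_ite, mul_one, mul_zero, sub_smul]
        rw [Finset.sum_congr rfl fun j _ => h1 j, Finset.sum_sub_distrib]
        simp [ite_smul, zero_smul, Finset.sum_ite_eq]
      have hsum : ∑ r, M (Sum.inr i) r • Z k r =
          (x k i - ∑ j, A i j • x k j) + ((∑ j, Bh i j • y k j) - ε • y k i) := by
        rw [Fintype.sum_sum_type, hsum1, hsum2]
      simp only [hZdef, Sum.elim_inr]
      rw [hsum, hyupd k i]
      abel
  have hclosed : ∀ k q, Z k q =
      ∑ s ∈ range k, ∑ j, ((M ^ s) q (Sum.inl j)) • gv (k - 1 - s) j := by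
    intro k
    induction k with
    | zero => intro q; cases q <;> simp [hZdef, hx0, hy0]
    | succ k ih =>
      intro q
      have hR : ∑ s ∈ range (k+1), ∑ j, ((M ^ s) q (Sum.inl j)) • gv (k + 1 - 1 - s) j
          = ∑ s ∈ range (k+1), ∑ j, ((M ^ s) q (Sum.inl j)) • gv (k - s) j := by
        refine Finset.sum_congr rfl fun s _ => ?_
        have : k + 1 - 1 - s = k - s := by omega
        rw [this]
      rw [hZstep k q, hR,
        Finset.sum_range_succ' (fun s => ∑ j, ((M ^ s) q (Sum.inl j)) • gv (k - s) j) k]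
      have h0 : ∑ j, ((M ^ 0) q (Sum.inl j)) • gv (k - 0) j
          = Sum.elim (gv k) (fun _ => 0) q := by
        cases q with
        | inl i => simp [Matrix.one_apply, ite_smul, zero_smul, Finset.sum_ite_eq]
        | inr i => simp [Matrix.one_apply]
      rw [h0]
      congr 1
      have hMul : ∀ (s : ℕ) (j : Fin n),
          (M ^ (s+1)) q (Sum.inl j) = ∑ r, M q r * (M ^ s) r (Sum.inl j) := by
        intro s j
        rw [pow_succ', Matrix.mul_apply]
      calc ∑ r, M q r • Z k r
          = ∑ r, M q r • ∑ s ∈ range k, ∑ j, ((M ^ s) r (Sum.inl j)) • gv (k - 1 - s) j := by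
            refine Finset.sum_congr rfl fun r _ => ?_
            rw [ih r]
        _ = ∑ r, ∑ s ∈ range k, ∑ j,
              (M q r * (M ^ s) r (Sum.inl j)) • gv (k - 1 - s) j := by
            refine Finset.sum_congr rfl fun r _ => ?_
            rw [Finset.smul_sum]
            refine Finset.sum_congr rfl fun s _ => ?_
            rw [Finset.smul_sum]
            exact Finset.sum_congr rfl fun j _ => smul_smul _ _ _
        _ = ∑ s ∈ range k, ∑ r, ∑ j,
              (M q r * (M ^ s) r (Sum.inl j)) • gv (k - 1 - s) j := Finset.sum_comm
        _ = ∑ s ∈ range k, ∑ j, ∑ r,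
              (M q r * (M ^ s) r (Sum.inl j)) • gv (k - 1 - s) j :=
            Finset.sum_congr rfl fun s _ => Finset.sum_comm
        _ = ∑ s ∈ range k, ∑ j, ((M ^ (s+1)) q (Sum.inl j)) • gv (k - 1 - s) j := by
            refine Finset.sum_congr rfl fun s _ => Finset.sum_congr rfl fun j _ => ?_
            rw [hMul, Finset.sum_smul]
        _ = ∑ s ∈ range k, ∑ j, ((M ^ (s+1)) q (Sum.inl j)) • gv (k - (s+1)) j := by
            refine Finset.sum_congr rfl fun s _ => Finset.sum_congr rfl fun j _ => ?_
            have : k - 1 - s = k - (s+1) := by omega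
            rw [this]
  -- column sums of M
  have hcolM : ∀ r, ∑ q, M q r = 1 := by
    intro r
    cases r with
    | inl j =>
      rw [Fintype.sum_sum_type]
      have h1 : ∑ i, M (Sum.inl i) (Sum.inl j) = ∑ i, A i j :=
        Finset.sum_congr rfl fun i _ => by simp [hMdef]
      have h2 : ∑ i, M (Sum.inr i) (Sum.inl j) = 1 - ∑ i, A i j := by
        have h3 : ∀ i, M (Sum.inr i) (Sum.inl j) = (if i = j then (1:ℝ) else 0) - A i j := by
          intro i
          simp [hMdef, Matrix.sub_apply, Matrix.one_apply]
        rw [Finset.sum_congr rfl fun i _ => h3 i, Finset.sum_sub_distrib]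
        simp
      rw [h1, h2]; ring
    | inr j =>
      rw [Fintype.sum_sum_type]
      have h1 : ∑ i, M (Sum.inl i) (Sum.inr j) = ε := by
        have h3 : ∀ i, M (Sum.inl i) (Sum.inr j) = if i = j then ε else 0 := by
          intro i
          simp [hMdef, Matrix.smul_apply, Matrix.one_apply, mul_ite, mul_one, mul_zero]
        rw [Finset.sum_congr rfl fun i _ => h3 i]
        simp
      have h2 : ∑ i, M (Sum.inr i) (Sum.inr j) = (∑ i, Bh i j) - ε := by
        have h3 : ∀ i, M (Sum.inr i) (Sum.inr j) = Bh i j - (if i = j then ε else 0) := by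
          intro i
          simp [hMdef, Matrix.sub_apply, Matrix.smul_apply, Matrix.one_apply,
            mul_ite, mul_one, mul_zero]
        rw [Finset.sum_congr rfl fun i _ => h3 i, Finset.sum_sub_distrib]
        simp
      rw [h1, h2, hBcol]; ring
  have hcolpow : ∀ (s : ℕ) r, ∑ q, (M ^ s) q r = 1 := by
    intro s
    induction s with
    | zero => intro r; simp [Matrix.one_apply]
    | succ s ih =>
      intro r
      rw [pow_succ]
      have h1 : ∀ q, (M ^ s * M) q r = ∑ t, (M ^ s) q t * M t r :=
        fun q => Matrix.mul_apply
      rw [Finset.sum_congr rfl fun q _ => h1 q, Finset.sum_comm]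
      have h2 : ∀ t, ∑ q, (M ^ s) q t * M t r = M t r := by
        intro t
        rw [← Finset.sum_mul, ih t, one_mul]
      rw [Finset.sum_congr rfl fun t _ => h2 t]
      exact hcolM r
  -- zbar closed form
  have hzcl : ∀ k, zbar k = ∑ s ∈ range k, ∑ j, (n:ℝ)⁻¹ • gv (k - 1 - s) j := by
    intro k
    rw [hzbar]
    have h1 : ∑ i, x k i + ∑ i, y k i = ∑ q, Z k q := by
      rw [Fintype.sum_sum_type]
      simp [hZdef]
    rw [h1]
    have h2 : ∑ q, Z k q
        = ∑ s ∈ range k, ∑ j, (∑ q, (M ^ s) q (Sum.inl j)) • gv (k - 1 - s) j := by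
      calc ∑ q, Z k q
          = ∑ q, ∑ s ∈ range k, ∑ j, ((M ^ s) q (Sum.inl j)) • gv (k - 1 - s) j :=
            Finset.sum_congr rfl fun q _ => hclosed k q
        _ = ∑ s ∈ range k, ∑ q, ∑ j, ((M ^ s) q (Sum.inl j)) • gv (k - 1 - s) j :=
            Finset.sum_comm
        _ = ∑ s ∈ range k, ∑ j, ∑ q, ((M ^ s) q (Sum.inl j)) • gv (k - 1 - s) j :=
            Finset.sum_congr rfl fun s _ => Finset.sum_comm
        _ = ∑ s ∈ range k, ∑ j, (∑ q, (M ^ s) q (Sum.inl j)) • gv (k - 1 - s) j := by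
            refine Finset.sum_congr rfl fun s _ => Finset.sum_congr rfl fun j _ => ?_
            rw [Finset.sum_smul]
    rw [h2, Finset.smul_sum]
    refine Finset.sum_congr rfl fun s _ => ?_
    rw [Finset.smul_sum]
    refine Finset.sum_congr rfl fun j _ => ?_
    rw [hcolpow s (Sum.inl j), one_smul]
  -- deviation closed form
  have hdev_eq : ∀ k i, x k i - zbar k =
      ∑ s ∈ range k, ∑ j, ((M ^ s - J) (Sum.inl i) (Sum.inl j)) • gv (k - 1 - s) j := by
    intro k i
    have hx' : x k i
        = ∑ s ∈ range k, ∑ j, ((M ^ s) (Sum.inl i) (Sum.inl j)) • gv (k - 1 - s) j := by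
      have h := hclosed k (Sum.inl i)
      simpa [hZdef] using h
    rw [hx', hzcl k, ← Finset.sum_sub_distrib]
    refine Finset.sum_congr rfl fun s _ => ?_
    rw [← Finset.sum_sub_distrib]
    refine Finset.sum_congr rfl fun j _ => ?_
    have hJ : J (Sum.inl i) (Sum.inl j) = (n:ℝ)⁻¹ := by simp [hJdef]
    rw [Matrix.sub_apply, hJ, sub_smul]
  -- scalar sequences
  have hgnn : ∀ k, 0 ≤ g k := by
    intro k; rw [hg]; exact Finset.sum_nonneg fun _ _ => norm_nonneg _
  set Q : ℕ → ℝ := fun k => ∑ s ∈ range k, γ ^ s * g (k - 1 - s) with hQdef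
  have hQnn : ∀ k, 0 ≤ Q k := by
    intro k
    exact Finset.sum_nonneg fun s _ => mul_nonneg (pow_nonneg hγ0.le _) (hgnn _)
  have hQrec : ∀ k, Q (k+1) = γ * Q k + g k := by
    intro k
    have h1 : Q (k+1) = ∑ s ∈ range (k+1), γ ^ s * g (k - s) := by
      simp only [hQdef]
      refine Finset.sum_congr rfl fun s _ => ?_
      have : k + 1 - 1 - s = k - s := by omega
      rw [this]
    rw [h1, Finset.sum_range_succ' (fun s => γ ^ s * g (k - s)) k]
    simp only [pow_zero, one_mul, Nat.sub_zero]
    congr 1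
    simp only [hQdef]
    rw [Finset.mul_sum]
    refine Finset.sum_congr rfl fun s _ => ?_
    have : k - (s+1) = k - 1 - s := by omega
    rw [this, pow_succ']
    ring
  -- deviation norm bound
  have hdev : ∀ k i, ‖x k i - zbar k‖ ≤ Γ * Q k := by
    intro k i
    rw [hdev_eq k i]
    refine le_trans (norm_sum_le _ _) ?_
    have hbound : ∀ s ∈ range k,
        ‖∑ j, ((M ^ s - J) (Sum.inl i) (Sum.inl j)) • gv (k - 1 - s) j‖
        ≤ Γ * γ ^ s * g (k - 1 - s) := by
      intro s _
      refine le_trans (norm_sum_le _ _) ?_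
      calc ∑ j, ‖((M ^ s - J) (Sum.inl i) (Sum.inl j)) • gv (k - 1 - s) j‖
          ≤ ∑ j, Γ * γ ^ s * ‖gv (k - 1 - s) j‖ := by
            refine Finset.sum_le_sum fun j _ => ?_
            rw [norm_smul, Real.norm_eq_abs]
            exact mul_le_mul_of_nonneg_right (hentry s _ j) (norm_nonneg _)
        _ = Γ * γ ^ s * g (k - 1 - s) := by rw [hg, Finset.mul_sum]
    refine le_trans (Finset.sum_le_sum hbound) (le_of_eq ?_)
    simp only [hQdef]
    rw [Finset.mul_sum]
    refine Finset.sum_congr rfl fun s _ => ?_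
    ring
  -- y norm bound
  have hybd : ∀ k i, ‖y (k+1) i‖ ≤ Γ * (γ * Q k) := by
    intro k i
    have hy' : y (k+1) i
        = ∑ s ∈ range (k+1), ∑ j, ((M ^ s) (Sum.inr i) (Sum.inl j)) • gv (k - s) j := by
      have h := hclosed (k+1) (Sum.inr i)
      simp only [hZdef, Sum.elim_inr] at h
      rw [h]
      refine Finset.sum_congr rfl fun s _ => Finset.sum_congr rfl fun j _ => ?_
      have : k + 1 - 1 - s = k - s := by omega
      rw [this]
    rw [hy',
      Finset.sum_range_succ' (fun s => ∑ j, ((M ^ s) (Sum.inr i) (Sum.inl j)) • gv (k - s) j) k]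
    have h0 : ∑ j, ((M ^ 0) (Sum.inr i) (Sum.inl j)) • gv (k - 0) j = 0 := by
      simp [Matrix.one_apply]
    rw [h0, add_zero]
    refine le_trans (norm_sum_le _ _) ?_
    have hbound : ∀ s ∈ range k,
        ‖∑ j, ((M ^ (s+1)) (Sum.inr i) (Sum.inl j)) • gv (k - (s+1)) j‖
        ≤ Γ * γ ^ (s+1) * g (k - 1 - s) := by
      intro s _
      refine le_trans (norm_sum_le _ _) ?_
      calc ∑ j, ‖((M ^ (s+1)) (Sum.inr i) (Sum.inl j)) • gv (k - (s+1)) j‖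
          ≤ ∑ j, Γ * γ ^ (s+1) * ‖gv (k - (s+1)) j‖ := by
            refine Finset.sum_le_sum fun j _ => ?_
            rw [norm_smul, Real.norm_eq_abs]
            refine mul_le_mul_of_nonneg_right ?_ (norm_nonneg _)
            have hJ0 : J (Sum.inr i) (Sum.inl j) = 0 := by simp [hJdef]
            have h := hentry (s+1) (Sum.inr i) j
            rwa [Matrix.sub_apply, hJ0, sub_zero] at h
        _ = Γ * γ ^ (s+1) * g (k - 1 - s) := by
            rw [hg, Finset.mul_sum]
            have : k - (s+1) = k - 1 - s := by omega
            rw [this]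
    refine le_trans (Finset.sum_le_sum hbound) (le_of_eq ?_)
    simp only [hQdef]
    rw [Finset.mul_sum, Finset.mul_sum]
    refine Finset.sum_congr rfl fun s _ => ?_
    rw [pow_succ']
    ring
  -- g bounds
  have hGbd0 : g 0 ≤ 2 * n * B * α 0 := by
    rw [hg]
    calc ∑ i, ‖gv 0 i‖ ≤ ∑ _i : Fin n, 2 * B * α 0 := by
          refine Finset.sum_le_sum fun i _ => ?_
          have h := hgvbd 0 i
          rw [hy0 i] at h
          simpa using h
      _ = n * (2 * B * α 0) := by
          rw [Finset.sum_const, Finset.card_univ, Fintype.card_fin, nsmul_eq_mul]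
      _ = 2 * n * B * α 0 := by ring
  have hGbd : ∀ k, g (k+1) ≤ n * ε * Γ * γ * Q k + 2 * n * B * α (k+1) := by
    intro k
    rw [hg]
    calc ∑ i, ‖gv (k+1) i‖
        ≤ ∑ _i : Fin n, (ε * (Γ * (γ * Q k)) + 2 * B * α (k+1)) := by
          refine Finset.sum_le_sum fun i _ => ?_
          have h := hgvbd (k+1) i
          have h2 := mul_le_mul_of_nonneg_left (hybd k i) hε.le
          linarith
      _ = n * (ε * (Γ * (γ * Q k)) + 2 * B * α (k+1)) := by
          rw [Finset.sum_const, Finset.card_univ, Fintype.card_fin, nsmul_eq_mul]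
      _ = n * ε * Γ * γ * Q k + 2 * n * B * α (k+1) := by ring
  -- weighted auxiliary sequence
  set Qt : ℕ → ℝ := fun k => ∑ s ∈ range k, γ ^ s * (α (k - 1 - s) * g (k - 1 - s)) with hQtdef
  have hQtnn : ∀ k, 0 ≤ Qt k := by
    intro k
    exact Finset.sum_nonneg fun s _ =>
      mul_nonneg (pow_nonneg hγ0.le _) (mul_nonneg (hαnn _) (hgnn _))
  have hQtrec : ∀ k, Qt (k+1) = γ * Qt k + α k * g k := by
    intro k
    have h1 : Qt (k+1) = ∑ s ∈ range (k+1), γ ^ s * (α (k - s) * g (k - s)) := by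
      simp only [hQtdef]
      refine Finset.sum_congr rfl fun s _ => ?_
      have : k + 1 - 1 - s = k - s := by omega
      rw [this]
    rw [h1, Finset.sum_range_succ' (fun s => γ ^ s * (α (k - s) * g (k - s))) k]
    simp only [pow_zero, one_mul, Nat.sub_zero]
    congr 1
    simp only [hQtdef]
    rw [Finset.mul_sum]
    refine Finset.sum_congr rfl fun s _ => ?_
    have : k - (s+1) = k - 1 - s := by omega
    rw [this, pow_succ']
    ring
  have hαle : ∀ s k, s ≤ k → α k ≤ α s := by
    intro s k
    induction k with
    | zero => intro h; have : s = 0 := by omega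
              simp [this]
    | succ k ih =>
      intro h
      rcases Nat.lt_or_ge s (k+1) with h' | h'
      · exact le_trans (hαdec k) (ih (by omega))
      · have : s = k + 1 := by omega
        simp [this]
  have hC1 : ∀ k, α k * Q k ≤ Qt k := by
    intro k
    induction k with
    | zero => simp [hQdef, hQtdef]
    | succ k ih =>
      have h1 : α (k+1) * Q (k+1) = α (k+1) * (γ * Q k) + α (k+1) * g k := by
        rw [hQrec]; ring
      rw [h1, hQtrec]
      have h2 : α (k+1) * (γ * Q k) ≤ γ * (α k * Q k) := by
        have := mul_le_mul_of_nonneg_right (hαdec k) (mul_nonneg hγ0.le (hQnn k))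
        nlinarith [hQnn k, hγ0.le, hαdec k, hαnn (k+1)]
      have h3 : α (k+1) * g k ≤ α k * g k :=
        mul_le_mul_of_nonneg_right (hαdec k) (hgnn k)
      have h4 : γ * (α k * Q k) ≤ γ * Qt k := mul_le_mul_of_nonneg_left ih hγ0.le
      linarith
  -- final assembly
  set E := 4 * n * B * Γ / (1 - γ) with hEdef
  have hEpos : 0 < E := by
    apply div_pos
    · positivity
    · linarith
  refine ⟨E, hEpos, ?_⟩
  intro i K
  set W : ℝ := ∑ k ∈ range (K+1), α k * g k with hWdef
  set S : ℝ := ∑ k ∈ range (K+1), Qt k with hSdef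
  set T : ℝ := ∑ k ∈ range (K+1), (α k)^2 with hTdef
  have hSnn : 0 ≤ S := Finset.sum_nonneg fun k _ => hQtnn k
  have hTnn : 0 ≤ T := Finset.sum_nonneg fun k _ => sq_nonneg _
  have hWnn : 0 ≤ W := Finset.sum_nonneg fun k _ => mul_nonneg (hαnn k) (hgnn k)
  -- (b) (1-γ) S ≤ W
  have hb : (1 - γ) * S ≤ W := by
    have h1 : S ≤ ∑ k ∈ range (K+1), Qt (k+1) := by
      rw [hSdef, Finset.sum_range_succ' Qt K]
      have h0 : Qt 0 = 0 := by simp [hQtdef]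
      rw [h0, add_zero]
      exact Finset.sum_le_sum_of_subset_of_nonneg
        (Finset.range_subset_range.mpr (by omega)) (fun k _ _ => hQtnn _)
    have h2 : ∑ k ∈ range (K+1), Qt (k+1) = γ * S + W := by
      rw [hSdef, hWdef, Finset.mul_sum, ← Finset.sum_add_distrib]
      exact Finset.sum_congr rfl fun k _ => hQtrec k
    rw [h2] at h1
    linarith
  -- (c) W ≤ n ε Γ γ S + 2 n B T
  have hc : W ≤ n * ε * Γ * γ * S + 2 * n * B * T := by
    have h0 : α 0 * g 0 ≤ 2 * n * B * α 0 ^ 2 := by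
      have h := mul_le_mul_of_nonneg_left hGbd0 (hαnn 0)
      nlinarith [h]
    have h1 : ∀ k ∈ range K,
        α (k+1) * g (k+1) ≤ n * ε * Γ * γ * Qt k + 2 * n * B * (α (k+1))^2 := by
      intro k _
      have h2 : α (k+1) * g (k+1)
          ≤ α (k+1) * (n * ε * Γ * γ * Q k + 2 * n * B * α (k+1)) :=
        mul_le_mul_of_nonneg_left (hGbd k) (hαnn (k+1))
      have h4 : α (k+1) * Q k ≤ α k * Q k := mul_le_mul_of_nonneg_right (hαdec k) (hQnn k)
      have h6 : (0:ℝ) ≤ (n:ℝ) * ε * Γ * γ := by positivity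
      have h3 := mul_le_mul_of_nonneg_left (le_trans h4 (hC1 k)) h6
      nlinarith [h2, h3]
    have hsplit : W = (∑ k ∈ range K, α (k+1) * g (k+1)) + α 0 * g 0 := by
      rw [hWdef, Finset.sum_range_succ' (fun k => α k * g k) K]
    have hA' : ∑ k ∈ range K, (n * ε * Γ * γ * Qt k + 2 * n * B * (α (k+1))^2)
        = n * ε * Γ * γ * (∑ k ∈ range K, Qt k)
          + 2 * n * B * (∑ k ∈ range K, (α (k+1))^2) := by
      rw [Finset.sum_add_distrib, Finset.mul_sum, Finset.mul_sum]
    have hQsub : ∑ k ∈ range K, Qt k ≤ S := by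
      rw [hSdef]
      exact Finset.sum_le_sum_of_subset_of_nonneg
        (Finset.range_subset_range.mpr (by omega)) (fun k _ _ => hQtnn _)
    have hTsplit : T = (∑ k ∈ range K, (α (k+1))^2) + α 0 ^ 2 := by
      rw [hTdef, Finset.sum_range_succ' (fun k => α k ^ 2) K]
    have h6 : (0:ℝ) ≤ (n:ℝ) * ε * Γ * γ := by positivity
    have h7 := mul_le_mul_of_nonneg_left hQsub h6
    have h8 := Finset.sum_le_sum h1
    rw [hA'] at h8
    have hT2 : 2*(n:ℝ)*B*T = 2*n*B*(∑ k ∈ range K, (α (k+1))^2) + 2*n*B*α 0^2 := by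
      rw [hTsplit]; ring
    linarith [h8, h7, h0, hsplit.le, hT2.ge]
  -- (d) smallness
  have hd' : 2 * (n * ε * Γ * γ) < 1 - γ := by
    have h2 : 0 < 2 * (n:ℝ) * Γ * γ := by positivity
    have h3 := (lt_div_iff₀ h2).mp hεsmall
    linarith [h3]
  -- (a) LHS ≤ Γ * S
  have ha : ∑ k ∈ range (K+1), α k * ‖x k i - zbar k‖ ≤ Γ * S := by
    have h1 : ∀ k ∈ range (K+1), α k * ‖x k i - zbar k‖ ≤ Γ * Qt k := by
      intro k _
      have h2 := mul_le_mul_of_nonneg_left (hdev k i) (hαnn k)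
      have h3 := mul_le_mul_of_nonneg_left (hC1 k) hΓ.le
      nlinarith [h2, h3]
    refine le_trans (Finset.sum_le_sum h1) (le_of_eq ?_)
    rw [hSdef, Finset.mul_sum]
  -- combine
  have hS : (1 - γ) * S ≤ n * ε * Γ * γ * S + 2 * n * B * T := le_trans hb hc
  have h1γ : (0:ℝ) < 1 - γ := by linarith
  have hu : 2 * (n * ε * Γ * γ * S) ≤ (1 - γ) * S := by
    linarith [mul_le_mul_of_nonneg_right hd'.le hSnn]
  have h7 : (1 - γ) * S ≤ 4 * n * B * T := by linarith [hS]
  have h8 : Γ * ((1 - γ) * S) ≤ Γ * (4 * n * B * T) := mul_le_mul_of_nonneg_left h7 hΓ.le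
  have h9 : (∑ k ∈ range (K+1), α k * ‖x k i - zbar k‖) * (1 - γ) ≤ Γ * S * (1 - γ) :=
    mul_le_mul_of_nonneg_right ha h1γ.le
  rw [hEdef, div_mul_eq_mul_div, le_div_iff₀ h1γ]
  linarith [h8, h9]
end
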